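/- arXiv:2204.01445 — 8 statements merged into one kernel-verified Lean document; each statement's English description precedes it below -/
import Mathlib

section
/- Shifted composition is associative on G^1, i.e., (f • g) • h = f • (g • h) for all f, g, h ∈ G^1, and the constant series 1 is a two-sided unit: 1 • g = g = g • 1. -/
/-- Words over the alphabet of positive integers. -/
abbrev Word : Type := List ℕ+

variable {A : Type*}

/-- The constant series `1`: coefficient `1` on the empty word, `0` elsewhere. -/
def one [CommRing A] : Word → A := fun w => if w = [] then 1 else 0

/-- Cauchy product of noncommutative series:
`(f·g)(w) = Σ f(u) g(v)` over all factorizations `w = u ++ v`. -/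
def cauchy [CommRing A] (f g : Word → A) : Word → A := fun w =>
  ∑ k ∈ Finset.range (w.length + 1), f (w.take k) * g (w.drop k)

/-- The subword of `w` consisting of the letters at positions in `S` (in increasing order). -/
def subword (w : Word) (S : Finset ℕ) : Word :=
  ((w.zipIdx.map Prod.swap).filter (fun p => decide (p.1 ∈ S))).map Prod.snd

/-- The (possibly empty) factor of `w` occupying the positions strictly between `s` and the
next element of `S` after `s` (or the end of the word if there is no such element). -/
def gapAfter (w : Word) (S : Finset ℕ) (s : ℕ) : Word :=
  ((w.zipIdx.map Prod.swap).filter (fun p => decide (s < p.1 ∧ ∀ j ∈ S, j ≤ s ∨ p.1 < j))).map Prod.snd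

/-- Shifted substitution `f(xg(x))`: its constant coefficient is `f(∅)`, and its coefficient
on a nonempty word `w = a_1⋯a_n` is the sum, over subsets `S = {s_1<⋯<s_k}` of the positions
of `w` containing the first position, of `f(a_{s_1}⋯a_{s_k})·g(w_{(s_1,s_2)})⋯g(w_{(s_k,n+1)})`,
where `w_{(s_j,s_{j+1})}` is the factor of `w` strictly between positions `s_j` and `s_{j+1}`. -/
def subst [CommRing A] (f g : Word → A) : Word → A := fun w =>
  if w = [] then f []
  else ∑ S ∈ (Finset.range w.length).powerset.filter (fun S => 0 ∈ S),
    f (subword w S) * ∏ s ∈ S, g (gapAfter w S s)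

/-- Shifted composition `f • g := g · f(xg(x))`. -/
def bullet [CommRing A] (f g : Word → A) : Word → A := cauchy g (subst f g)

section aux

def Fo (P : ℕ → Prop) [DecidablePred P] (i : ℕ) (w : Word) : Word :=
  (((w.zipIdx i).map Prod.swap).filter (fun p => decide (P p.1))).map Prod.snd

variable {P Q : ℕ → Prop} [DecidablePred P] [DecidablePred Q]

lemma Fo_nil {i : ℕ} : Fo P i [] = [] := rfl

lemma Fo_cons {i : ℕ} {a : ℕ+} {t : Word} :
    Fo P i (a :: t) = (if P i then [a] else []) ++ Fo P (i+1) t := by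
  simp only [Fo, List.zipIdx_cons, List.map_cons, Prod.swap_prod_mk, List.filter_cons]
  split
  · simp_all
  · simp_all

lemma Fo_append {i : ℕ} {u v : Word} :
    Fo P i (u ++ v) = Fo P i u ++ Fo P (i + u.length) v := by
  simp [Fo, List.zipIdx_append, List.filter_append]

lemma Fo_congr {i : ℕ} {w : Word} (h : ∀ j, i ≤ j → j < i + w.length → (P j ↔ Q j)) :
    Fo P i w = Fo Q i w := by
  unfold Fo
  congr 1
  refine List.filter_congr ?_
  rintro ⟨j, c⟩ hm
  have hm' : (c, j) ∈ w.zipIdx i := by simpa using hm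
  obtain ⟨h1, h2, -⟩ := List.mem_zipIdx hm'
  exact decide_eq_decide.mpr (h j h1 h2)

lemma Fo_false {i : ℕ} {w : Word} (h : ∀ j, i ≤ j → j < i + w.length → ¬ P j) :
    Fo P i w = [] := by
  unfold Fo
  rw [List.filter_eq_nil_iff.mpr, List.map_nil]
  rintro ⟨j, c⟩ hm
  have hm' : (c, j) ∈ w.zipIdx i := by simpa using hm
  obtain ⟨h1, h2, -⟩ := List.mem_zipIdx hm'
  simpa using h j h1 h2

lemma Fo_true {i : ℕ} {w : Word} (h : ∀ j, i ≤ j → j < i + w.length → P j) :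
    Fo P i w = w := by
  unfold Fo
  rw [List.filter_eq_self.mpr, List.map_map,
    show Prod.snd ∘ Prod.swap = (Prod.fst : ℕ+ × ℕ → ℕ+) from rfl, List.zipIdx_map_fst]
  rintro ⟨j, c⟩ hm
  have hm' : (c, j) ∈ w.zipIdx i := by simpa using hm
  obtain ⟨h1, h2, -⟩ := List.mem_zipIdx hm'
  simpa using h j h1 h2

lemma Fo_add {c : ℕ} {w : Word} : ∀ {i : ℕ}, Fo P (i + c) w = Fo (fun j => P (j + c)) i w := by
  induction w with
  | nil => intro i; rfl
  | cons a t ih =>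
    intro i
    rw [Fo_cons, Fo_cons, show i + c + 1 = (i+1) + c from by ring, ih]

lemma subword_eq (w : Word) (S : Finset ℕ) : subword w S = Fo (· ∈ S) 0 w := rfl

lemma gapAfter_eq (w : Word) (S : Finset ℕ) (s : ℕ) :
    gapAfter w S s = Fo (fun i => s < i ∧ ∀ j ∈ S, j ≤ s ∨ i < j) 0 w := rfl


section facts
variable {a : ℕ+} {t : Word} {k : ℕ} {T : Finset ℕ}

lemma mem_SkT {x : ℕ} : x ∈ insert 0 (T.image (· + (k+1))) ↔ x = 0 ∨ ∃ j ∈ T, j + (k+1) = x := by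
  simp [Finset.mem_insert]

lemma subword_zero : subword (a :: t) {0} = [a] := by
  rw [subword_eq, Fo_cons, Fo_false (by intro j hj _; simp; omega)]
  simp

lemma gapAfter_zero : gapAfter (a :: t) {0} 0 = t := by
  rw [gapAfter_eq, Fo_cons, if_neg (by simp),
    Fo_true (by intro j hj _; exact ⟨by omega, by simp⟩)]
  simp

lemma subword_fact (hk : k ≤ t.length) :
    subword (a :: t) (insert 0 (T.image (· + (k+1)))) = a :: subword (t.drop k) T := by
  rw [subword_eq, Fo_cons, if_pos (Finset.mem_insert_self 0 _)]
  conv_lhs => rw [← List.take_append_drop k t, Fo_append]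
  rw [Fo_false (P := (· ∈ insert 0 (T.image (· + (k+1)))))
    (by
      intro j hj hj2
      simp only [List.length_take] at hj2
      simp only [mem_SkT]
      push_neg
      exact ⟨by omega, fun x hx => by omega⟩)]
  rw [List.length_take, min_eq_left hk,
    show 1 + k = 0 + (k+1) by ring, Fo_add, subword_eq]
  simp only [List.nil_append, List.singleton_append]
  congr 1
  refine Fo_congr fun j _ _ => ?_
  simp only [mem_SkT]
  constructor
  · rintro (h | ⟨x, hx, he⟩)
    · omega
    · have : x = j := by omega
      subst this; exact hx
  · intro h; exact Or.inr ⟨j, h, rfl⟩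

lemma gapAfter_fact0 (hk : k ≤ t.length) (h0 : 0 ∈ T) :
    gapAfter (a :: t) (insert 0 (T.image (· + (k+1)))) 0 = t.take k := by
  rw [gapAfter_eq, Fo_cons, if_neg (by simp)]
  conv_lhs => rw [← List.take_append_drop k t, Fo_append]
  rw [Fo_true (by
      intro j hj hj2
      simp only [List.length_take] at hj2
      refine ⟨by omega, fun x hx => ?_⟩
      simp only [mem_SkT] at hx
      rcases hx with h | ⟨y, hy, he⟩ <;> omega)]
  rw [Fo_false (by
      intro j hj hj2 hP
      simp only [List.length_take] at hj
      have hmem : k + 1 ∈ insert 0 (T.image (· + (k+1))) := mem_SkT.mpr (Or.inr ⟨0, h0, by ring⟩)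
      rcases hP.2 (k+1) hmem with h | h <;> omega)]
  simp

lemma gapAfter_fact (hk : k ≤ t.length) {j : ℕ} :
    gapAfter (a :: t) (insert 0 (T.image (· + (k+1)))) (j + (k+1)) =
      gapAfter (t.drop k) T j := by
  rw [gapAfter_eq, Fo_cons, if_neg (by simp)]
  conv_lhs => rw [← List.take_append_drop k t, Fo_append]
  rw [Fo_false (by
      intro i hi hi2 hP
      simp only [List.length_take] at hi2
      omega)]
  rw [List.length_take, min_eq_left hk,
    show 1 + k = 0 + (k+1) by ring, Fo_add, gapAfter_eq]
  simp only [List.nil_append]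
  refine Fo_congr fun i _ _ => ?_
  constructor
  · rintro ⟨h1, h2⟩
    refine ⟨by omega, fun x hx => ?_⟩
    rcases h2 (x + (k+1)) (mem_SkT.mpr (Or.inr ⟨x, hx, rfl⟩)) with h | h
    · exact Or.inl (by omega)
    · exact Or.inr (by omega)
  · rintro ⟨h1, h2⟩
    refine ⟨by omega, fun x hx => ?_⟩
    rcases mem_SkT.mp hx with h | ⟨y, hy, he⟩
    · omega
    · rcases h2 y hy with h | h
      · omega
      · omega

end facts
section algebra
variable [CommRing A]

lemma subst_nil (f g : Word → A) : subst f g [] = f [] := by simp [subst]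

lemma subst_ne_nil (f g : Word → A) {w : Word} (h : w ≠ []) :
    subst f g w = ∑ S ∈ (Finset.range w.length).powerset.filter (fun S => 0 ∈ S),
      f (subword w S) * ∏ s ∈ S, g (gapAfter w S s) := by
  simp [subst, h]

noncomputable def mOf (S : Finset ℕ) : ℕ := sInf {m | m + 1 ∈ S}

lemma subst_cons (f g : Word → A) (a : ℕ+) (t : Word) :
    subst f g (a :: t) = cauchy g (subst (fun u => f (a :: u)) g) t := by
  rw [subst_ne_nil _ _ (by simp)]
  show _ = ∑ k ∈ Finset.range (t.length + 1), g (t.take k) * subst (fun u => f (a :: u)) g (t.drop k)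
  rw [Finset.sum_range_succ, List.take_length, List.drop_length, subst_nil]
  have hmain : ∀ k ∈ Finset.range t.length,
      g (t.take k) * subst (fun u => f (a :: u)) g (t.drop k)
      = ∑ T ∈ (Finset.range (t.length - k)).powerset.filter (fun T => 0 ∈ T),
          g (t.take k) * (f (a :: subword (t.drop k) T) * ∏ j ∈ T, g (gapAfter (t.drop k) T j)) := by
    intro k hk
    rw [Finset.mem_range] at hk
    rw [subst_ne_nil _ _ (by rw [Ne, List.drop_eq_nil_iff]; omega), List.length_drop,
      Finset.mul_sum]
  rw [Finset.sum_congr rfl hmain, Finset.sum_sigma']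
  have h0mem : ({0} : Finset ℕ) ∈
      (Finset.range ((a :: t).length)).powerset.filter (fun S => 0 ∈ S) := by
    simp
  rw [← Finset.add_sum_erase _ _ h0mem, subword_zero, Finset.prod_singleton, gapAfter_zero]
  have hbij :
      (∑ p ∈ (Finset.range t.length).sigma
          (fun k => (Finset.range (t.length - k)).powerset.filter (fun T => 0 ∈ T)),
        g (t.take p.1) * (f (a :: subword (t.drop p.1) p.2) *
          ∏ j ∈ p.2, g (gapAfter (t.drop p.1) p.2 j)))
      = ∑ S ∈ ((Finset.range ((a :: t).length)).powerset.filter (fun S => 0 ∈ S)).erase {0},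
          f (subword (a :: t) S) * ∏ s ∈ S, g (gapAfter (a :: t) S s) := by
    refine Finset.sum_nbij'
      (fun p => insert 0 (p.2.image (· + (p.1 + 1))))
      (fun S => ⟨mOf S, (S.erase 0).image (· - (mOf S + 1))⟩)
      ?_ ?_ ?_ ?_ ?_
    · -- forward membership
      rintro ⟨k, T⟩ hp
      simp only [Finset.mem_sigma, Finset.mem_range, Finset.mem_filter,
        Finset.mem_powerset] at hp
      obtain ⟨hk, hT, h0T⟩ := hp
      simp only [Finset.mem_erase, Finset.mem_filter, Finset.mem_powerset]
      refine ⟨?_, ?_, Finset.mem_insert_self 0 _⟩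
      · intro hcontra
        have : k + 1 ∈ ({0} : Finset ℕ) := by
          rw [← hcontra]; exact mem_SkT.mpr (Or.inr ⟨0, h0T, by ring⟩)
        simp at this
      · intro x hx
        rcases mem_SkT.mp hx with h | ⟨y, hy, he⟩
        · simp [h]
        · have := Finset.mem_range.mp (hT hy)
          simp only [List.length_cons, Finset.mem_range]
          omega
    · -- backward membership
      intro S hS
      simp only [Finset.mem_erase, Finset.mem_filter, Finset.mem_powerset,
        List.length_cons] at hS
      obtain ⟨hne, hsub, h0S⟩ := hS
      have hex : {m | m + 1 ∈ S}.Nonempty := by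
        have : ∃ s ∈ S, s ≠ 0 := by
          by_contra hcon
          push_neg at hcon
          apply hne
          ext x
          simp only [Finset.mem_singleton]
          constructor
          · intro hx; exact hcon x hx
          · intro hx; subst hx; exact h0S
        obtain ⟨s, hs, hs0⟩ := this
        refine ⟨s - 1, ?_⟩
        simp only [Set.mem_setOf_eq]
        have hs' : s - 1 + 1 = s := by omega
        rw [hs']; exact hs
      have hm1 : mOf S + 1 ∈ S := Nat.sInf_mem hex
      have hmin : ∀ x ∈ S, x ≠ 0 → mOf S + 1 ≤ x := by
        intro x hx hx0
        have hmem : x - 1 ∈ {m | m + 1 ∈ S} := by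
          simp only [Set.mem_setOf_eq]
          have hx' : x - 1 + 1 = x := by omega
          rw [hx']; exact hx
        have h2 := Nat.sInf_le hmem
        have h3 : mOf S = sInf {m | m + 1 ∈ S} := rfl
        omega
      simp only [Finset.mem_sigma, Finset.mem_range, Finset.mem_filter, Finset.mem_powerset]
      have hmlt : mOf S + 1 < t.length + 1 := Finset.mem_range.mp (hsub hm1)
      refine ⟨by omega, ?_, ?_⟩
      · intro x hx
        simp only [Finset.mem_image, Finset.mem_erase] at hx
        obtain ⟨y, ⟨hy0, hyS⟩, he⟩ := hx
        have hy := Finset.mem_range.mp (hsub hyS)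
        have := hmin y hyS hy0
        simp only [Finset.mem_range]
        omega
      · simp only [Finset.mem_image]
        exact ⟨mOf S + 1, Finset.mem_erase.mpr ⟨by omega, hm1⟩, by omega⟩
    · -- left inverse
      rintro ⟨k, T⟩ hp
      simp only [Finset.mem_sigma, Finset.mem_range, Finset.mem_filter,
        Finset.mem_powerset] at hp
      obtain ⟨hk, hT, h0T⟩ := hp
      have hnot : (0 : ℕ) ∉ T.image (· + (k + 1)) := by
        simp only [Finset.mem_image]; rintro ⟨y, -, he⟩; omega
      have hm : mOf (insert 0 (T.image (· + (k + 1)))) = k := by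
        unfold mOf
        apply le_antisymm
        · exact Nat.sInf_le (mem_SkT.mpr (Or.inr ⟨0, h0T, by ring⟩))
        · refine le_csInf ⟨k, mem_SkT.mpr (Or.inr ⟨0, h0T, by ring⟩)⟩ ?_
          intro b hb
          rcases mem_SkT.mp hb with h | ⟨y, hy, he⟩ <;> omega
      have herase : (insert 0 (T.image (· + (k + 1)))).erase 0 = T.image (· + (k + 1)) :=
        Finset.erase_insert hnot
      have himg : ((insert 0 (T.image (· + (k + 1)))).erase 0).image (· - (k + 1)) = T := by
        rw [herase, Finset.image_image]
        have : Finset.image ((· - (k + 1)) ∘ (· + (k + 1))) T = Finset.image id T := by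
          refine Finset.image_congr ?_
          intro x _
          simp
        rw [this, Finset.image_id]
      refine Sigma.ext hm (heq_of_eq ?_)
      dsimp only
      rw [hm]; exact himg
    · -- right inverse
      intro S hS
      simp only [Finset.mem_erase, Finset.mem_filter, Finset.mem_powerset,
        List.length_cons] at hS
      obtain ⟨hne, hsub, h0S⟩ := hS
      have hex : {m | m + 1 ∈ S}.Nonempty := by
        have : ∃ s ∈ S, s ≠ 0 := by
          by_contra hcon
          push_neg at hcon
          apply hne
          ext x
          simp only [Finset.mem_singleton]
          exact ⟨fun hx => hcon x hx, fun hx => by subst hx; exact h0S⟩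
        obtain ⟨s, hs, hs0⟩ := this
        refine ⟨s - 1, ?_⟩
        simp only [Set.mem_setOf_eq]
        have hs' : s - 1 + 1 = s := by omega
        rw [hs']; exact hs
      have hm1 : mOf S + 1 ∈ S := Nat.sInf_mem hex
      have hmin : ∀ x ∈ S, x ≠ 0 → mOf S + 1 ≤ x := by
        intro x hx hx0
        have hmem : x - 1 ∈ {m | m + 1 ∈ S} := by
          simp only [Set.mem_setOf_eq]
          have hx' : x - 1 + 1 = x := by omega
          rw [hx']; exact hx
        have h2 := Nat.sInf_le hmem
        have h3 : mOf S = sInf {m | m + 1 ∈ S} := rfl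
        omega
      ext x
      rw [mem_SkT]
      simp only [Finset.mem_image, Finset.mem_erase]
      constructor
      · rintro (h | ⟨y, ⟨z, ⟨hz0, hzS⟩, hzy⟩, he⟩)
        · subst h; exact h0S
        · have := hmin z hzS hz0
          have : z - (mOf S + 1) + (mOf S + 1) = z := by omega
          rw [← hzy] at he
          rw [this] at he
          subst he; exact hzS
      · intro hx
        by_cases hx0 : x = 0
        · exact Or.inl hx0
        · refine Or.inr ⟨x - (mOf S + 1), ⟨x, ⟨hx0, hx⟩, rfl⟩, ?_⟩
          have := hmin x hx hx0
          omega
    · -- term equality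
      rintro ⟨k, T⟩ hp
      simp only [Finset.mem_sigma, Finset.mem_range, Finset.mem_filter,
        Finset.mem_powerset] at hp
      obtain ⟨hk, hT, h0T⟩ := hp
      dsimp only
      have hkle : k ≤ t.length := le_of_lt hk
      have hnot : (0 : ℕ) ∉ T.image (· + (k + 1)) := by
        simp only [Finset.mem_image]; rintro ⟨y, -, he⟩; omega
      rw [subword_fact hkle]
      rw [Finset.prod_insert hnot, gapAfter_fact0 hkle h0T,
        Finset.prod_image (by intro x _ y _ h; change x + (k + 1) = y + (k + 1) at h; omega)]
      have hprod : ∀ x ∈ T,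
          g (gapAfter (a :: t) (insert 0 (T.image (· + (k + 1)))) (x + (k + 1)))
          = g (gapAfter (t.drop k) T x) := by
        intro x hx
        rw [gapAfter_fact hkle]
      rw [Finset.prod_congr rfl hprod]
      ring
  rw [← hbij]
  ring
end algebra

section algebra2
variable [CommRing A]

lemma cauchy_nil (f g : Word → A) : cauchy f g [] = f [] * g [] := by simp [cauchy]

lemma cauchy_cons (f g : Word → A) (a : ℕ+) (t : Word) :
    cauchy f g (a :: t) = f [] * g (a :: t) + cauchy (fun u => f (a :: u)) g t := by
  show (∑ k ∈ Finset.range (t.length + 1 + 1), f ((a::t).take k) * g ((a::t).drop k)) = _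
  rw [Finset.sum_range_succ']
  simp only [List.take_succ_cons, List.drop_succ_cons, List.take_zero, List.drop_zero]
  rw [add_comm]
  rfl

lemma cauchy_one_right (f : Word → A) : cauchy f one = f := by
  funext w
  show (∑ k ∈ Finset.range (w.length + 1), f (w.take k) * one (w.drop k)) = f w
  rw [Finset.sum_eq_single w.length]
  · simp [one, List.take_length, List.drop_length]
  · intro k hk hne
    rw [Finset.mem_range] at hk
    have hd : ¬ (w.drop k = []) := by
      rw [List.drop_eq_nil_iff]
      omega
    simp [one, hd]
  · intro h
    exact absurd (Finset.self_mem_range_succ w.length) h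

lemma cauchy_one_left (f : Word → A) : cauchy one f = f := by
  funext w
  show (∑ k ∈ Finset.range (w.length + 1), one (w.take k) * f (w.drop k)) = f w
  rw [Finset.sum_eq_single 0]
  · simp [one]
  · intro k hk hne
    rw [Finset.mem_range] at hk
    have ht : ¬ (w.take k = []) := by
      rw [List.take_eq_nil_iff]
      push_neg
      constructor
      · exact hne
      · intro hw; subst hw; simp at hk; omega
    simp [one, ht]
  · intro h
    simp at h

lemma cauchy_add_left (f f' g : Word → A) (w : Word) :
    cauchy (fun u => f u + f' u) g w = cauchy f g w + cauchy f' g w := by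
  simp [cauchy, add_mul, Finset.sum_add_distrib]

lemma cauchy_smul_left (c : A) (f g : Word → A) (w : Word) :
    cauchy (fun u => c * f u) g w = c * cauchy f g w := by
  simp [cauchy, Finset.mul_sum, mul_assoc]

lemma cauchy_smul_right (c : A) (f g : Word → A) (w : Word) :
    cauchy f (fun u => c * g u) w = c * cauchy f g w := by
  simp only [cauchy, Finset.mul_sum]
  exact Finset.sum_congr rfl fun k _ => by ring

lemma cauchy_congr_right (f g g' : Word → A) (w : Word)
    (h : ∀ k, g (w.drop k) = g' (w.drop k)) :
    cauchy f g w = cauchy f g' w := by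
  exact Finset.sum_congr rfl fun k _ => by rw [h k]

lemma cauchy_assoc (g h : Word → A) :
    ∀ (w : Word) (f : Word → A), cauchy (cauchy f g) h w = cauchy f (cauchy g h) w := by
  intro w
  induction w with
  | nil => intro f; simp [cauchy_nil]; ring
  | cons a t ih =>
    intro f
    rw [cauchy_cons]
    have hla : (fun u => cauchy f g (a :: u)) =
        (fun u => f [] * g (a :: u) + cauchy (fun v => f (a :: v)) g u) := by
      funext u; rw [cauchy_cons]
    rw [hla, cauchy_add_left, cauchy_smul_left, ih, cauchy_nil, cauchy_cons,
      cauchy_cons]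
    ring

lemma subst_zero (g : Word → A) (w : Word) : subst (fun _ => (0:A)) g w = 0 := by
  unfold subst
  split
  · rfl
  · simp

lemma subst_add (f f' g : Word → A) (w : Word) :
    subst (fun u => f u + f' u) g w = subst f g w + subst f' g w := by
  unfold subst
  split
  · rfl
  · simp [add_mul, Finset.sum_add_distrib]

lemma subst_smul (c : A) (f g : Word → A) (w : Word) :
    subst (fun u => c * f u) g w = c * subst f g w := by
  unfold subst
  split
  · rfl
  · simp [Finset.mul_sum, mul_assoc]

lemma cauchy_zero_right (f : Word → A) (w : Word) : cauchy f (fun _ => (0:A)) w = 0 := by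
  simp [cauchy]

lemma subst_one_left (g : Word → A) : subst one g = one := by
  funext w
  cases w with
  | nil => simp [subst, one]
  | cons a t =>
    rw [subst_cons]
    have h1 : (fun u => one (a :: u)) = (fun _ : Word => (0:A)) := by
      funext u; simp [one]
    rw [h1]
    have h2 : ∀ k, subst (fun _ : Word => (0:A)) g (t.drop k) = (fun _ : Word => (0:A)) (t.drop k) := by
      intro k; rw [subst_zero]
    have h3 := cauchy_congr_right g (subst (fun _ : Word => (0:A)) g) (fun _ : Word => (0:A)) t h2
    rw [h3, cauchy_zero_right]
    simp [one]

lemma subst_one_right : ∀ (n : ℕ) (w : Word), w.length ≤ n → ∀ f : Word → A, subst f one w = f w := by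
  intro n
  induction n with
  | zero =>
    intro w hw f
    rw [List.length_eq_zero_iff.mp (Nat.le_zero.mp hw)]
    exact subst_nil f one
  | succ n ih =>
    intro w hw f
    cases w with
    | nil => exact subst_nil f one
    | cons a t =>
      rw [subst_cons]
      have := congrFun (cauchy_one_left (subst (fun u => f (a :: u)) one)) t
      rw [this]
      simp only [List.length_cons, Nat.add_le_add_iff_right] at hw
      exact ih t hw _

end algebra2

section main
variable [CommRing A]

lemma cauchy_add_right (f g g' : Word → A) (w : Word) :
    cauchy f (fun u => g u + g' u) w = cauchy f g w + cauchy f g' w := by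
  simp [cauchy, mul_add, Finset.sum_add_distrib]

lemma subst_cauchy (q h : Word → A) :
    ∀ (n : ℕ) (w : Word), w.length ≤ n → ∀ p : Word → A,
      subst (cauchy p q) h w = cauchy (subst p h) (subst q h) w := by
  intro n
  induction n with
  | zero =>
    intro w hw p
    rw [List.length_eq_zero_iff.mp (Nat.le_zero.mp hw)]
    rw [subst_nil, cauchy_nil, cauchy_nil, subst_nil, subst_nil]
  | succ n ih =>
    intro w hw p
    cases w with
    | nil => rw [subst_nil, cauchy_nil, cauchy_nil, subst_nil, subst_nil]
    | cons a t =>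
      simp only [List.length_cons, Nat.add_le_add_iff_right] at hw
      rw [subst_cons]
      have h1 : (fun u => cauchy p q (a :: u)) =
          (fun u => p [] * q (a :: u) + cauchy (fun v => p (a :: v)) q u) := by
        funext u; rw [cauchy_cons]
      rw [h1]
      have h2 : ∀ k, subst (fun u => p [] * q (a :: u) + cauchy (fun v => p (a :: v)) q u) h (t.drop k)
          = (fun v => p [] * subst (fun u => q (a :: u)) h v
              + cauchy (subst (fun u => p (a :: u)) h) (subst q h) v) (t.drop k) := by
        intro k
        rw [subst_add, subst_smul]
        have hlen : (t.drop k).length ≤ n := by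
          rw [List.length_drop]; omega
        rw [ih (t.drop k) hlen (fun v => p (a :: v))]
      have h2' := cauchy_congr_right h
        (subst (fun u => p [] * q (a :: u) + cauchy (fun v => p (a :: v)) q u) h)
        (fun v => p [] * subst (fun u => q (a :: u)) h v
          + cauchy (subst (fun u => p (a :: u)) h) (subst q h) v) t h2
      rw [h2', cauchy_add_right, cauchy_smul_right, ← cauchy_assoc]
      rw [cauchy_cons (subst p h) (subst q h) a t, subst_nil, subst_cons]
      try (have h3 : (fun u => subst p h (a :: u)) = cauchy h (subst (fun v => p (a :: v)) h) := by
            funext u; rw [subst_cons]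
           rw [h3])
      try ring

lemma subst_cauchy' (p q h : Word → A) :
    subst (cauchy p q) h = cauchy (subst p h) (subst q h) :=
  funext fun w => subst_cauchy q h w.length w le_rfl p

lemma subst_subst (g h : Word → A) :
    ∀ (n : ℕ) (w : Word), w.length ≤ n → ∀ f : Word → A,
      subst (subst f g) h w = subst f (bullet g h) w := by
  intro n
  induction n with
  | zero =>
    intro w hw f
    rw [List.length_eq_zero_iff.mp (Nat.le_zero.mp hw)]
    rw [subst_nil, subst_nil, subst_nil]
  | succ n ih =>
    intro w hw f
    cases w with
    | nil => rw [subst_nil, subst_nil, subst_nil]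
    | cons a t =>
      simp only [List.length_cons, Nat.add_le_add_iff_right] at hw
      rw [subst_cons]
      have h1 : (fun u => subst f g (a :: u)) =
          cauchy g (subst (fun v => f (a :: v)) g) := by
        funext u; rw [subst_cons]
      rw [h1]
      have h2 : ∀ k, subst (cauchy g (subst (fun v => f (a :: v)) g)) h (t.drop k)
          = cauchy (subst g h) (subst (fun v => f (a :: v)) (bullet g h)) (t.drop k) := by
        intro k
        rw [congrFun (subst_cauchy' g (subst (fun v => f (a :: v)) g) h) (t.drop k)]
        refine cauchy_congr_right _ _ _ _ fun j => ?_
        rw [List.drop_drop]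
        exact ih _ (by rw [List.length_drop]; omega) (fun v => f (a :: v))
      rw [cauchy_congr_right _ _ _ _ h2, ← cauchy_assoc]
      rw [subst_cons]
      rfl

lemma subst_subst' (f g h : Word → A) :
    subst (subst f g) h = subst f (bullet g h) :=
  funext fun w => subst_subst g h w.length w le_rfl f

lemma bullet_assoc (f g h : Word → A) :
    bullet (bullet f g) h = bullet f (bullet g h) := by
  show cauchy h (subst (cauchy g (subst f g)) h) = _
  rw [subst_cauchy', subst_subst']
  funext w
  rw [← cauchy_assoc]
  rfl

end main


end aux

/-- shifted composition is associative on `G^1`, and the constant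
series `1` is a two-sided unit for it. -/
theorem stmt1 [CommRing A] :
    (∀ f g h : Word → A, f [] = 1 → g [] = 1 → h [] = 1 →
      bullet (bullet f g) h = bullet f (bullet g h)) ∧
    (∀ g : Word → A, g [] = 1 → bullet one g = g ∧ bullet g one = g) := by
  constructor
  · intro f g h _ _ _
    exact bullet_assoc f g h
  · intro g _
    constructor
    · show cauchy g (subst one g) = g
      rw [subst_one_left, cauchy_one_right]
    · show cauchy one (subst g one) = g
      rw [cauchy_one_left]
      funext w
      exact subst_one_right w.length w le_rfl g
end

section
/- For all f, g ∈ G^1 and every nonempty word w = a_1⋯a_n, the coefficient of the shifted composition is given by (f • g)(w) = Σ_{S ⊆ {1,…,n}} f(w_S) ∏_{i=1}^{m(S)} g(w_{J_i^S}), where the sum runs over all subsets S (including S = ∅, with f(w_∅) := f(∅) = 1, and S = {1,…,n}, with empty product equal to 1). In other words, the map sending an A-valued character φ of the word Hopf algebra H (with deconcatenation-type coproduct Δ(a_1⋯a_n) = Σ_{S⊆[n]} w_S ⊗ w_{J_1^S}|⋯|w_{J_m^S}) to its generating series is a group isomorphism from the character group of H with convolution onto (G^1, •). -/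
variable {A : Type*}

/-- The (possibly empty) factor of `w` occupying the positions strictly before every
element of `S` (for `S = ∅` this is all of `w`). -/
def prefixGap (w : Word) (S : Finset ℕ) : Word :=
  ((w.zipIdx.map Prod.swap).filter (fun p => decide (∀ j ∈ S, p.1 < j))).map Prod.snd

lemma filter_enum_split (w : Word) (k : ℕ) (hk : k ≤ w.length) (P : ℕ × ℕ+ → Bool) :
    ((w.zipIdx.map Prod.swap).filter P).map Prod.snd =
      (((w.take k).zipIdx.map Prod.swap).filter P).map Prod.snd ++
      (((w.drop k).zipIdx.map Prod.swap).filter (fun p => P (p.1 + k, p.2))).map Prod.snd := by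
  conv_lhs => rw [← List.take_append_drop k w]
  rw [List.zipIdx_append, List.map_append, List.filter_append, List.map_append, List.length_take,
    min_eq_left hk, Nat.zero_add, List.zipIdx_eq_map_add (l := w.drop k) (i := k), List.map_map,
    List.filter_map, List.filter_map, List.map_map, List.map_map]
  congr 1
  simp [Function.comp_def, Nat.add_comm]
  rw [List.filter_map, List.map_map]
  rfl

lemma mem_take_enum_lt {w : Word} {k : ℕ} (hk : k ≤ w.length) {p : ℕ × ℕ+}
    (hp : p ∈ (w.take k).zipIdx.map Prod.swap) : p.1 < k := by
  obtain ⟨i, a⟩ := p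
  simp only [List.mem_map, Prod.exists, Prod.swap_prod_mk, Prod.mk.injEq] at hp
  obtain ⟨a', i', h, rfl, rfl⟩ := hp
  have := (List.mem_zipIdx' h).1
  simpa [List.length_take, min_eq_left hk] using this

lemma zipIdx_swap_snd (l : Word) : (l.zipIdx.map Prod.swap).map Prod.snd = l := by
  rw [List.map_map]
  exact List.zipIdx_map_fst 0 l

lemma prefixGap_image (w : Word) (k : ℕ) (hk : k ≤ w.length) (S' : Finset ℕ) (h0 : 0 ∈ S') :
    prefixGap w (S'.image (· + k)) = w.take k := by
  unfold prefixGap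
  rw [filter_enum_split w k hk, List.filter_eq_self.mpr ?h1, List.filter_eq_nil_iff.mpr ?h2,
    zipIdx_swap_snd, List.map_nil, List.append_nil]
  case h1 =>
    intro p hp
    have := mem_take_enum_lt hk hp
    simp only [decide_eq_true_eq, Finset.mem_image, forall_exists_index, and_imp]
    rintro j s' hs' rfl; omega
  case h2 =>
    intro p hp
    simp only [decide_eq_true_eq, not_forall]
    refine ⟨k, Finset.mem_image.mpr ⟨0, h0, by omega⟩, by omega⟩

lemma subword_image (w : Word) (k : ℕ) (hk : k ≤ w.length) (S' : Finset ℕ) :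
    subword w (S'.image (· + k)) = subword (w.drop k) S' := by
  unfold subword
  rw [filter_enum_split w k hk, List.filter_eq_nil_iff.mpr ?h1, List.map_nil, List.nil_append]
  case h1 =>
    intro p hp
    have := mem_take_enum_lt hk hp
    simp only [decide_eq_true_eq, Finset.mem_image, not_exists]
    rintro s' ⟨hs', h⟩; omega
  congr 1
  apply List.filter_congr
  intro p hp
  simp only [decide_eq_decide, Finset.mem_image]
  constructor
  · rintro ⟨s', hs', h⟩; have : s' = p.1 := by omega
    subst this; exact hs'
  · intro h; exact ⟨p.1, h, rfl⟩

lemma gapAfter_image (w : Word) (k : ℕ) (hk : k ≤ w.length) (S' : Finset ℕ) (s' : ℕ) :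
    gapAfter w (S'.image (· + k)) (s' + k) = gapAfter (w.drop k) S' s' := by
  unfold gapAfter
  rw [filter_enum_split w k hk, List.filter_eq_nil_iff.mpr ?h1, List.map_nil, List.nil_append]
  case h1 =>
    intro p hp
    have := mem_take_enum_lt hk hp
    simp only [decide_eq_true_eq, not_and]
    omega
  congr 1
  apply List.filter_congr
  intro p hp
  simp only [decide_eq_decide, Finset.mem_image]
  constructor
  · rintro ⟨h1, h2⟩
    refine ⟨by omega, fun j' hj' => ?_⟩
    have := h2 (j' + k) ⟨j', hj', rfl⟩; omega
  · rintro ⟨h1, h2⟩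
    refine ⟨by omega, ?_⟩
    rintro j ⟨j', hj', rfl⟩
    have := h2 j' hj'; omega

lemma subword_empty (w : Word) : subword w ∅ = [] := by
  unfold subword
  rw [List.filter_eq_nil_iff.mpr (by simp), List.map_nil]

lemma prefixGap_empty (w : Word) : prefixGap w ∅ = w := by
  unfold prefixGap
  rw [List.filter_eq_self.mpr (by simp), zipIdx_swap_snd]

/-- for `f, g ∈ G^1` and a nonempty word `w` of length `n`, the coefficient of
the shifted composition is `(f • g)(w) = Σ_{S ⊆ {0,…,n-1}} f(w_S) ∏ g(w_{J^S_i})`, the sum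
being over all subsets `S` and the product over the (maximal) intervals of the complement
of `S`: here the complement intervals are realized as the factor before the first element
of `S` together with the factor after each `s ∈ S`, the empty ones contributing the factor
`g(∅) = 1`.  (This expresses that the generating-series map is a group isomorphism from the
character group of the word Hopf algebra `H` with convolution onto `(G^1, •)`.) -/
theorem stmt4 [CommRing A] (f g : Word → A) (hf : f [] = 1) (hg : g [] = 1)
    (w : Word) (hw : w ≠ []) :
    bullet f g w =
      ∑ S ∈ (Finset.range w.length).powerset,
        f (subword w S) * (g (prefixGap w S) * ∏ s ∈ S, g (gapAfter w S s)) := by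
  unfold bullet cauchy
  rw [Finset.sum_range_succ, List.take_length, List.drop_length,
    show subst f g [] = 1 from by simp [subst, hf], mul_one]
  have hemp : (∅ : Finset ℕ) ∈ (Finset.range w.length).powerset := by simp
  rw [← Finset.add_sum_erase _ _ hemp, subword_empty, prefixGap_empty, hf, Finset.prod_empty,
    mul_one, one_mul, add_comm]
  congr 1
  have lhs_eq : ∀ k ∈ Finset.range w.length,
      g (w.take k) * subst f g (w.drop k) =
      ∑ S' ∈ ((Finset.range (w.length - k)).powerset.filter (fun S => 0 ∈ S)),
        g (w.take k) * (f (subword (w.drop k) S') * ∏ s ∈ S', g (gapAfter (w.drop k) S' s)) := by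
    intro k hk
    rw [Finset.mem_range] at hk
    have hne : w.drop k ≠ [] := by
      intro h
      have : (w.drop k).length = w.length - k := List.length_drop
      rw [h] at this
      simp at this; omega
    rw [subst]
    simp only [if_neg hne, List.length_drop, Finset.mul_sum]
  rw [Finset.sum_congr rfl lhs_eq, Finset.sum_sigma']
  refine Finset.sum_bij (fun p _ => p.2.image (· + p.1)) ?_ ?_ ?_ ?_
  · rintro ⟨k, S'⟩ hp
    rw [Finset.mem_sigma, Finset.mem_range, Finset.mem_filter, Finset.mem_powerset] at hp
    obtain ⟨hk, hS', h0⟩ := hp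
    dsimp only at hk hS' h0 ⊢
    rw [Finset.mem_erase, Finset.mem_powerset]
    constructor
    · intro h
      have : k ∈ S'.image (· + k) := Finset.mem_image.mpr ⟨0, h0, by omega⟩
      rw [h] at this; simp at this
    · intro j hj
      obtain ⟨s', hs', rfl⟩ := Finset.mem_image.mp hj
      have := Finset.mem_range.mp (hS' hs')
      exact Finset.mem_range.mpr (by omega)
  · rintro ⟨k₁, S₁⟩ hp₁ ⟨k₂, S₂⟩ hp₂ heq
    rw [Finset.mem_sigma, Finset.mem_range, Finset.mem_filter, Finset.mem_powerset] at hp₁ hp₂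
    obtain ⟨hk₁, hS₁, h01⟩ := hp₁
    obtain ⟨hk₂, hS₂, h02⟩ := hp₂
    simp only at heq
    have hkk : k₁ = k₂ := by
      have h1 : k₁ ∈ S₂.image (· + k₂) := by
        rw [← heq]; exact Finset.mem_image.mpr ⟨0, h01, by omega⟩
      have h2 : k₂ ∈ S₁.image (· + k₁) := by
        rw [heq]; exact Finset.mem_image.mpr ⟨0, h02, by omega⟩
      obtain ⟨s₁, _, hs₁⟩ := Finset.mem_image.mp h1
      obtain ⟨s₂, _, hs₂⟩ := Finset.mem_image.mp h2
      omega
    subst hkk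
    have : S₁ = S₂ := by
      apply Finset.image_injective (add_left_injective k₁) heq
    subst this; rfl
  · intro S hS
    rw [Finset.mem_erase, Finset.mem_powerset] at hS
    obtain ⟨hne, hsub⟩ := hS
    have hSne : S.Nonempty := Finset.nonempty_iff_ne_empty.mpr hne
    set k := S.min' hSne with hkdef
    have hkS : k ∈ S := S.min'_mem hSne
    have hkmin : ∀ s ∈ S, k ≤ s := fun s hs => S.min'_le s hs
    have hkn : k < w.length := Finset.mem_range.mp (hsub hkS)
    refine ⟨⟨k, S.image (· - k)⟩, ?_, ?_⟩
    · rw [Finset.mem_sigma, Finset.mem_range, Finset.mem_filter, Finset.mem_powerset]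
      dsimp only
      refine ⟨hkn, ?_, Finset.mem_image.mpr ⟨k, hkS, by omega⟩⟩
      intro j hj
      obtain ⟨s, hs, rfl⟩ := Finset.mem_image.mp hj
      have h1 := hkmin s hs
      have h2 := Finset.mem_range.mp (hsub hs)
      exact Finset.mem_range.mpr (by omega)
    · simp only
      ext j
      simp only [Finset.mem_image]
      constructor
      · rintro ⟨j', ⟨s, hs, rfl⟩, rfl⟩
        have := hkmin s hs
        rwa [Nat.sub_add_cancel this]
      · intro hj
        exact ⟨j - k, ⟨j, hj, rfl⟩, Nat.sub_add_cancel (hkmin j hj)⟩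
  · rintro ⟨k, S'⟩ hp
    rw [Finset.mem_sigma, Finset.mem_range, Finset.mem_filter, Finset.mem_powerset] at hp
    obtain ⟨hk, hS', h0⟩ := hp
    dsimp only at hk hS' h0
    have hkle : k ≤ w.length := le_of_lt hk
    simp only
    rw [subword_image w k hkle, prefixGap_image w k hkle S' h0]
    rw [Finset.prod_image (fun a _ b _ h => by omega)]
    have : ∀ s' ∈ S', g (gapAfter w (S'.image (· + k)) (s' + k)) = g (gapAfter (w.drop k) S' s') :=
      fun s' _ => by rw [gapAfter_image w k hkle]
    rw [Finset.prod_congr rfl this]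
    ring
end

section
/- The product ◁ on G^0 satisfies the right pre-Lie identity: for all f, g, h ∈ G^0, (f ◁ g) ◁ h − f ◁ (g ◁ h) = (f ◁ h) ◁ g − f ◁ (h ◁ g). Consequently G^0 equipped with the bracket [f,g] := f ◁ g − g ◁ f is a Lie algebra. -/
variable {A : Type*}

/-- The insertion (pre-Lie) product on series with zero constant coefficient:
`(f ◁ g)(w) = Σ f(u ++ v) g(q)` over all factorizations `w = u ++ q ++ v` of `w` into
three consecutive (possibly empty) factors. -/
def tri [CommRing A] (f g : Word → A) : Word → A := fun w =>
  ∑ i ∈ Finset.range (w.length + 1), ∑ j ∈ Finset.Icc i w.length,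
    f (w.take i ++ w.drop j) * g ((w.drop i).take (j - i))

/-- The associated bracket `[f,g] := f ◁ g − g ◁ f`. -/
def bracket [CommRing A] (f g : Word → A) : Word → A := tri f g - tri g f

/-- slice of w from a (incl) to b (excl) -/
def sl (w : Word) (a b : ℕ) : Word := (w.drop a).take (b - a)
/-- w with slice [a,b) removed -/
def rm (w : Word) (a b : ℕ) : Word := w.take a ++ w.drop b

lemma length_rm {w : Word} {a b : ℕ} (h1 : a ≤ b) (h2 : b ≤ w.length) :
    (rm w a b).length = a + w.length - b := by
  simp [rm]; omega

lemma sl_len {w : Word} {a b : ℕ} (h1 : a ≤ b) (h2 : b ≤ w.length) :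
    (sl w a b).length = b - a := by
  simp [sl]; omega

-- Region 1 lemmas: u = rm w k l, indices i ≤ j ≤ k ≤ l ≤ n
lemma take_rm {w : Word} {i k l : ℕ} (h1 : i ≤ k) (h2 : k ≤ w.length) :
    (rm w k l).take i = w.take i := by
  simp only [rm, List.take_append, List.take_take, List.length_take]
  have e1 : i ⊓ k = i := by omega
  have e2 : i - k ⊓ w.length = 0 := by omega
  rw [e1, e2, List.take_zero, List.append_nil]

lemma drop_rm {w : Word} {j k l : ℕ} (h1 : j ≤ k) (h2 : k ≤ w.length) :
    (rm w k l).drop j = sl w j k ++ w.drop l := by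
  simp only [rm, sl, List.drop_append, List.drop_take, List.length_take]
  have e : k ⊓ w.length = k := by omega
  rw [e]
  have e2 : j - k = 0 := by omega
  rw [e2, List.drop_zero]

lemma slice_rm {w : Word} {i j k l : ℕ} (h1 : i ≤ j) (h2 : j ≤ k) (h3 : k ≤ w.length) :
    ((rm w k l).drop i).take (j - i) = sl w i j := by
  rw [drop_rm (le_trans h1 h2) h3]
  rw [List.take_append, sl_len (le_trans h1 h2) h3]
  have : j - i - (k - i) = 0 := by omega
  rw [this, List.take_zero, List.append_nil, sl, sl, List.take_take]
  congr 1; omega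

-- Region 3: u = rm w p q, indices a,b ≥ p
lemma take_rm_right {w : Word} {p q a : ℕ} (h1 : p ≤ a) (h2 : p ≤ q) (h3 : q ≤ w.length) :
    (rm w p q).take a = w.take p ++ sl w q (q + a - p) := by
  simp only [rm, sl, List.take_append, List.take_take, List.length_take]
  have e1 : a ⊓ p = p := by omega
  have e2 : a - p ⊓ w.length = a - p := by omega
  have e3 : q + a - p - q = a - p := by omega
  rw [e1, e2, e3]

lemma drop_rm_right {w : Word} {p q b : ℕ} (h1 : p ≤ b) (h2 : p ≤ q) (h3 : q ≤ w.length) :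
    (rm w p q).drop b = w.drop (q + b - p) := by
  simp only [rm, List.drop_append, List.length_take, List.drop_drop]
  have e1 : (w.take p).length ≤ b := by simp [List.length_take]; omega
  rw [List.drop_eq_nil_of_le e1, List.nil_append]
  congr 1
  omega

lemma slice_rm_right {w : Word} {p q a b : ℕ} (h1 : p ≤ a) (h2 : a ≤ b) (h3 : p ≤ q)
    (h4 : q ≤ w.length) :
    ((rm w p q).drop a).take (b - a) = sl w (q + a - p) (q + b - p) := by
  rw [drop_rm_right h1 h3 h4, sl]
  congr 1
  omega

-- Region 2: a ≤ p ≤ b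
lemma slice_rm_mid {w : Word} {p q a b : ℕ} (h1 : a ≤ p) (h2 : p ≤ b) (h3 : p ≤ q)
    (h4 : q ≤ w.length) :
    ((rm w p q).drop a).take (b - a) = sl w a p ++ sl w q (q + b - p) := by
  rw [drop_rm h1 (le_trans h3 h4), List.take_append,
    sl_len h1 (le_trans h3 h4), List.take_of_length_le (by rw [sl_len h1 (le_trans h3 h4)]; omega)]
  congr 1
  rw [sl]
  congr 1
  omega

-- inner word v = sl w p q
lemma sl_self (w : Word) (a : ℕ) : sl w a a = [] := by simp [sl]

lemma take_sl {w : Word} {p q a : ℕ} (ha : a ≤ q - p) :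
    (sl w p q).take a = sl w p (p + a) := by
  simp only [sl, List.take_take]
  have e1 : a ⊓ (q - p) = a := by omega
  have e2 : p + a - p = a := by omega
  rw [e1, e2]

lemma drop_sl {w : Word} (p q b : ℕ) : (sl w p q).drop b = sl w (p + b) q := by
  simp only [sl, List.drop_take, List.drop_drop]
  congr 1
  omega

lemma slice_sl {w : Word} {p q a b : ℕ} (hab : a ≤ b) (hb : b ≤ q - p) :
    ((sl w p q).drop a).take (b - a) = sl w (p + a) (p + b) := by
  rw [drop_sl, sl, sl, List.take_take]
  congr 1
  omega

open Finset


def P2 (n : ℕ) : Finset (ℕ × ℕ) := (range (n+1) ×ˢ range (n+1)).filter fun x => x.1 ≤ x.2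

lemma mem_P2 {n : ℕ} {x : ℕ × ℕ} : x ∈ P2 n ↔ x.1 ≤ x.2 ∧ x.2 ≤ n := by
  simp [P2, Nat.lt_succ_iff]; omega

lemma tri_eq [CommRing A] (f g : Word → A) (w : Word) :
    tri f g w = ∑ x ∈ P2 w.length, f (rm w x.1 x.2) * g (sl w x.1 x.2) := by
  simp only [tri]
  rw [P2, Finset.sum_filter, Finset.sum_product]
  refine Finset.sum_congr rfl fun i hi => ?_
  have e : Finset.Icc i w.length = (range (w.length+1)).filter (fun j => i ≤ j) := by
    ext j; simp [Nat.lt_succ_iff]; omega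
  rw [e, Finset.sum_filter]
  rfl

def bx (n : ℕ) : Finset ((ℕ×ℕ)×(ℕ×ℕ)) :=
  (range (n+1) ×ˢ range (n+1)) ×ˢ (range (n+1) ×ˢ range (n+1))

lemma mem_bx {n : ℕ} {z : (ℕ×ℕ)×(ℕ×ℕ)} :
    z ∈ bx n ↔ z.1.1 ≤ n ∧ z.1.2 ≤ n ∧ z.2.1 ≤ n ∧ z.2.2 ≤ n := by
  simp [bx, Nat.lt_succ_iff]; tauto


lemma expand2 [CommRing A] {n : ℕ} (m : ℕ × ℕ → ℕ) (hm : ∀ x : ℕ × ℕ, x.1 ≤ x.2 → x.2 ≤ n → m x ≤ n)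
    (T : (ℕ×ℕ) → (ℕ×ℕ) → A) :
    ∑ x ∈ P2 n, ∑ y ∈ P2 (m x), T x y
      = ∑ z ∈ (bx n).filter (fun z => z.1.1 ≤ z.1.2 ∧ z.2.1 ≤ z.2.2 ∧ z.2.2 ≤ m z.1),
          T z.1 z.2 := by
  rw [Finset.sum_filter, bx, Finset.sum_product]
  rw [P2, Finset.sum_filter]
  refine Finset.sum_congr rfl fun x hx => ?_
  have hx2 : x.2 ≤ n := by
    simp only [Finset.mem_product, Finset.mem_range, Nat.lt_succ_iff] at hx
    exact hx.2
  by_cases hpq : x.1 ≤ x.2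
  · rw [if_pos hpq]
    have e : P2 (m x) = (range (n+1) ×ˢ range (n+1)).filter
        (fun y => y.1 ≤ y.2 ∧ y.2 ≤ m x) := by
      have := hm x hpq hx2
      ext y; simp [P2, Nat.lt_succ_iff]; omega
    rw [e, Finset.sum_filter]
    refine Finset.sum_congr rfl fun y _ => ?_
    simp [hpq]
  · rw [if_neg hpq]
    symm
    refine Finset.sum_eq_zero fun y _ => ?_
    rw [if_neg]
    tauto

lemma T1_eq [CommRing A] (f g h : Word → A) (w : Word) :
    tri (tri f g) h w =
      ∑ z ∈ (bx w.length).filter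
          (fun z => z.1.1 ≤ z.1.2 ∧ z.2.1 ≤ z.2.2 ∧ z.2.2 ≤ z.1.1 + w.length - z.1.2),
        f (rm (rm w z.1.1 z.1.2) z.2.1 z.2.2) * g (sl (rm w z.1.1 z.1.2) z.2.1 z.2.2)
          * h (sl w z.1.1 z.1.2) := by
  rw [tri_eq (tri f g) h w]
  have step : ∀ x ∈ P2 w.length, (tri f g) (rm w x.1 x.2) * h (sl w x.1 x.2)
      = ∑ y ∈ P2 (x.1 + w.length - x.2),
          f (rm (rm w x.1 x.2) y.1 y.2) * g (sl (rm w x.1 x.2) y.1 y.2) * h (sl w x.1 x.2) := by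
    intro x hx
    obtain ⟨h1, h2⟩ := mem_P2.mp hx
    rw [tri_eq f g (rm w x.1 x.2), length_rm h1 h2, Finset.sum_mul]
  have e0 : (∑ x ∈ P2 w.length, (tri f g) (rm w x.1 x.2) * h (sl w x.1 x.2))
      = ∑ x ∈ P2 w.length, ∑ y ∈ P2 (x.1 + w.length - x.2),
          f (rm (rm w x.1 x.2) y.1 y.2) * g (sl (rm w x.1 x.2) y.1 y.2) * h (sl w x.1 x.2) :=
    Finset.sum_congr rfl step
  rw [e0]
  exact expand2 (fun x => x.1 + w.length - x.2) (fun x h1 h2 => by omega) _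

lemma T2_eq [CommRing A] (f g h : Word → A) (w : Word) :
    tri f (tri g h) w =
      ∑ z ∈ (bx w.length).filter
          (fun z => z.1.1 ≤ z.1.2 ∧ z.2.1 ≤ z.2.2 ∧ z.2.2 ≤ z.1.2 - z.1.1),
        f (rm w z.1.1 z.1.2) * (g (rm (sl w z.1.1 z.1.2) z.2.1 z.2.2)
          * h (sl (sl w z.1.1 z.1.2) z.2.1 z.2.2)) := by
  rw [tri_eq f (tri g h) w]
  have step : ∀ x ∈ P2 w.length, f (rm w x.1 x.2) * (tri g h) (sl w x.1 x.2)
      = ∑ y ∈ P2 (x.2 - x.1),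
          f (rm w x.1 x.2) * (g (rm (sl w x.1 x.2) y.1 y.2) * h (sl (sl w x.1 x.2) y.1 y.2)) := by
    intro x hx
    obtain ⟨h1, h2⟩ := mem_P2.mp hx
    rw [tri_eq g h (sl w x.1 x.2), sl_len h1 h2, Finset.mul_sum]
  have e0 : (∑ x ∈ P2 w.length, f (rm w x.1 x.2) * (tri g h) (sl w x.1 x.2))
      = ∑ x ∈ P2 w.length, ∑ y ∈ P2 (x.2 - x.1),
          f (rm w x.1 x.2) * (g (rm (sl w x.1 x.2) y.1 y.2) * h (sl (sl w x.1 x.2) y.1 y.2)) :=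
    Finset.sum_congr rfl step
  rw [e0]
  exact expand2 (fun x => x.2 - x.1) (fun x h1 h2 => by omega) _

lemma rm_apply (w : Word) (a b : ℕ) : rm w a b = w.take a ++ w.drop b := rfl

lemma bijA1 [CommRing A] (f g h : Word → A) (w : Word) :
    ∑ z ∈ (bx w.length).filter (fun z =>
        (z.1.1 ≤ z.1.2 ∧ z.2.1 ≤ z.2.2 ∧ z.2.2 ≤ z.1.1 + w.length - z.1.2) ∧ z.2.2 ≤ z.1.1),
      f (rm (rm w z.1.1 z.1.2) z.2.1 z.2.2) * g (sl (rm w z.1.1 z.1.2) z.2.1 z.2.2)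
        * h (sl w z.1.1 z.1.2)
    = ∑ z ∈ (bx w.length).filter (fun z => z.1.1 ≤ z.1.2 ∧ z.1.2 ≤ z.2.1 ∧ z.2.1 ≤ z.2.2),
        f (w.take z.1.1 ++ sl w z.1.2 z.2.1 ++ w.drop z.2.2) * (g (sl w z.1.1 z.1.2)
          * h (sl w z.2.1 z.2.2)) := by
  refine Finset.sum_nbij' (fun z => (z.2, z.1)) (fun z => (z.2, z.1)) ?_ ?_ ?_ ?_ ?_
  · intro z hz
    simp only [Finset.mem_filter, mem_bx] at hz ⊢
    omega
  · intro z hz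
    simp only [Finset.mem_filter, mem_bx] at hz ⊢
    omega
  · intro z _; rfl
  · intro z _; rfl
  · intro z hz
    simp only [Finset.mem_filter, mem_bx] at hz
    obtain ⟨⟨hp, hq, ha, hb⟩, ⟨hpq, hab, hbm⟩, hbp⟩ := hz
    rw [rm_apply (rm w z.1.1 z.1.2), take_rm (le_trans hab hbp) (le_trans hpq hq),
      drop_rm hbp (le_trans hpq hq), ← List.append_assoc,
      show sl (rm w z.1.1 z.1.2) z.2.1 z.2.2
          = ((rm w z.1.1 z.1.2).drop z.2.1).take (z.2.2 - z.2.1) from rfl,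
      slice_rm hab hbp (le_trans hpq hq)]
    ring

lemma bijA2 [CommRing A] (f g h : Word → A) (w : Word) :
    ∑ z ∈ (bx w.length).filter (fun z =>
        ((z.1.1 ≤ z.1.2 ∧ z.2.1 ≤ z.2.2 ∧ z.2.2 ≤ z.1.1 + w.length - z.1.2) ∧
          ¬ z.2.2 ≤ z.1.1) ∧ z.2.1 ≤ z.1.1),
      f (rm (rm w z.1.1 z.1.2) z.2.1 z.2.2) * g (sl (rm w z.1.1 z.1.2) z.2.1 z.2.2)
        * h (sl w z.1.1 z.1.2)
    = ∑ z ∈ (bx w.length).filter (fun z => z.1.1 ≤ z.1.2 ∧ z.1.2 ≤ z.2.1 ∧ z.2.1 < z.2.2),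
        f (rm w z.1.1 z.2.2) * (g (sl w z.1.1 z.1.2 ++ sl w z.2.1 z.2.2)
          * h (sl w z.1.2 z.2.1)) := by
  refine Finset.sum_nbij' (fun z => ((z.2.1, z.1.1), (z.1.2, z.1.2 + z.2.2 - z.1.1)))
    (fun y => ((y.1.2, y.2.1), (y.1.1, y.1.2 + y.2.2 - y.2.1))) ?_ ?_ ?_ ?_ ?_
  · intro z hz
    simp only [Finset.mem_filter, mem_bx] at hz ⊢
    omega
  · intro y hy
    simp only [Finset.mem_filter, mem_bx] at hy ⊢
    omega
  · intro z hz
    simp only [Finset.mem_filter, mem_bx] at hz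
    simp only [Prod.ext_iff, true_and, and_true]
    omega
  · intro y hy
    simp only [Finset.mem_filter, mem_bx] at hy
    simp only [Prod.ext_iff, true_and, and_true]
    omega
  · intro z hz
    simp only [Finset.mem_filter, mem_bx] at hz
    obtain ⟨⟨hp, hq, ha, hb⟩, ⟨⟨hpq, hab, hbm⟩, hbp⟩, hap⟩ := hz
    rw [rm_apply (rm w z.1.1 z.1.2), take_rm hap (le_trans hpq hq),
      drop_rm_right (by omega) hpq hq, ← rm_apply,
      show sl (rm w z.1.1 z.1.2) z.2.1 z.2.2
          = ((rm w z.1.1 z.1.2).drop z.2.1).take (z.2.2 - z.2.1) from rfl,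
      slice_rm_mid hap (by omega) hpq hq]
    ring

lemma bijA3 [CommRing A] (f g h : Word → A) (w : Word) :
    ∑ z ∈ (bx w.length).filter (fun z =>
        ((z.1.1 ≤ z.1.2 ∧ z.2.1 ≤ z.2.2 ∧ z.2.2 ≤ z.1.1 + w.length - z.1.2) ∧
          ¬ z.2.2 ≤ z.1.1) ∧ ¬ z.2.1 ≤ z.1.1),
      f (rm (rm w z.1.1 z.1.2) z.2.1 z.2.2) * g (sl (rm w z.1.1 z.1.2) z.2.1 z.2.2)
        * h (sl w z.1.1 z.1.2)
    = ∑ z ∈ (bx w.length).filter (fun z => z.1.1 ≤ z.1.2 ∧ z.1.2 < z.2.1 ∧ z.2.1 ≤ z.2.2),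
        f (w.take z.1.1 ++ sl w z.1.2 z.2.1 ++ w.drop z.2.2) * (h (sl w z.1.1 z.1.2)
          * g (sl w z.2.1 z.2.2)) := by
  refine Finset.sum_nbij'
    (fun z => ((z.1.1, z.1.2), (z.1.2 + z.2.1 - z.1.1, z.1.2 + z.2.2 - z.1.1)))
    (fun y => ((y.1.1, y.1.2), (y.2.1 - y.1.2 + y.1.1, y.2.2 - y.1.2 + y.1.1))) ?_ ?_ ?_ ?_ ?_
  · intro z hz
    simp only [Finset.mem_filter, mem_bx] at hz ⊢
    omega
  · intro y hy
    simp only [Finset.mem_filter, mem_bx] at hy ⊢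
    omega
  · intro z hz
    simp only [Finset.mem_filter, mem_bx] at hz
    simp only [Prod.ext_iff, true_and, and_true]
    omega
  · intro y hy
    simp only [Finset.mem_filter, mem_bx] at hy
    simp only [Prod.ext_iff, true_and, and_true]
    omega
  · intro z hz
    simp only [Finset.mem_filter, mem_bx] at hz
    obtain ⟨⟨hp, hq, ha, hb⟩, ⟨⟨hpq, hab, hbm⟩, hbp⟩, hap⟩ := hz
    rw [rm_apply (rm w z.1.1 z.1.2), take_rm_right (by omega) hpq hq,
      drop_rm_right (by omega) hpq hq,
      show sl (rm w z.1.1 z.1.2) z.2.1 z.2.2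
          = ((rm w z.1.1 z.1.2).drop z.2.1).take (z.2.2 - z.2.1) from rfl,
      slice_rm_right (by omega) hab hpq hq]
    ring

lemma bijT2 [CommRing A] (f g h : Word → A) (w : Word) :
    ∑ z ∈ (bx w.length).filter
        (fun z => z.1.1 ≤ z.1.2 ∧ z.2.1 ≤ z.2.2 ∧ z.2.2 ≤ z.1.2 - z.1.1),
      f (rm w z.1.1 z.1.2) * (g (rm (sl w z.1.1 z.1.2) z.2.1 z.2.2)
        * h (sl (sl w z.1.1 z.1.2) z.2.1 z.2.2))
    = ∑ z ∈ (bx w.length).filter (fun z => z.1.1 ≤ z.1.2 ∧ z.1.2 ≤ z.2.1 ∧ z.2.1 ≤ z.2.2),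
        f (rm w z.1.1 z.2.2) * (g (sl w z.1.1 z.1.2 ++ sl w z.2.1 z.2.2)
          * h (sl w z.1.2 z.2.1)) := by
  refine Finset.sum_nbij'
    (fun z => ((z.1.1, z.1.1 + z.2.1), (z.1.1 + z.2.2, z.1.2)))
    (fun y => ((y.1.1, y.2.2), (y.1.2 - y.1.1, y.2.1 - y.1.1))) ?_ ?_ ?_ ?_ ?_
  · intro z hz
    simp only [Finset.mem_filter, mem_bx] at hz ⊢
    omega
  · intro y hy
    simp only [Finset.mem_filter, mem_bx] at hy ⊢
    omega
  · intro z hz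
    simp only [Finset.mem_filter, mem_bx] at hz
    simp only [Prod.ext_iff, true_and, and_true]
    omega
  · intro y hy
    simp only [Finset.mem_filter, mem_bx] at hy
    simp only [Prod.ext_iff, true_and, and_true]
    omega
  · intro z hz
    simp only [Finset.mem_filter, mem_bx] at hz
    obtain ⟨⟨hp, hq, ha, hb⟩, hpq, hab, hbm⟩ := hz
    rw [rm_apply (sl w z.1.1 z.1.2), take_sl (by omega), drop_sl,
      show sl (sl w z.1.1 z.1.2) z.2.1 z.2.2
          = ((sl w z.1.1 z.1.2).drop z.2.1).take (z.2.2 - z.2.1) from rfl,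
      slice_sl hab hbm]

lemma bijNdia [CommRing A] (f g h : Word → A) (w : Word) :
    ∑ z ∈ (bx w.length).filter (fun z =>
        (z.1.1 ≤ z.1.2 ∧ z.1.2 ≤ z.2.1 ∧ z.2.1 ≤ z.2.2) ∧ ¬ z.2.1 < z.2.2),
      f (rm w z.1.1 z.2.2) * (g (sl w z.1.1 z.1.2 ++ sl w z.2.1 z.2.2)
        * h (sl w z.1.2 z.2.1))
    = ∑ z ∈ (bx w.length).filter (fun z => z.1.1 ≤ z.1.2 ∧ z.1.2 = z.2.1 ∧ z.2.1 ≤ z.2.2),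
        f (w.take z.1.1 ++ sl w z.1.2 z.2.1 ++ w.drop z.2.2) * (g (sl w z.1.1 z.1.2)
          * h (sl w z.2.1 z.2.2)) := by
  refine Finset.sum_nbij' (fun z => ((z.1.1, z.1.2), (z.1.2, z.2.2)))
    (fun y => ((y.1.1, y.1.2), (y.2.2, y.2.2))) ?_ ?_ ?_ ?_ ?_
  · intro z hz
    simp only [Finset.mem_filter, mem_bx, true_and, and_true] at hz ⊢
    omega
  · intro y hy
    simp only [Finset.mem_filter, mem_bx, true_and, and_true] at hy ⊢
    omega
  · intro z hz
    simp only [Finset.mem_filter, mem_bx] at hz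
    simp only [Prod.ext_iff, true_and, and_true]
    omega
  · intro y hy
    simp only [Finset.mem_filter, mem_bx] at hy
    simp only [Prod.ext_iff, true_and, and_true]
    omega
  · intro z hz
    simp only [Finset.mem_filter, mem_bx] at hz
    have hlj : z.2.1 = z.2.2 := by omega
    rw [hlj]
    simp only [sl_self, rm_apply, List.append_nil]

lemma key [CommRing A] (f g h : Word → A) (w : Word) :
    tri (tri f g) h w - tri f (tri g h) w
      = ∑ z ∈ (bx w.length).filter (fun z => z.1.1 ≤ z.1.2 ∧ z.1.2 < z.2.1 ∧ z.2.1 ≤ z.2.2),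
          f (w.take z.1.1 ++ sl w z.1.2 z.2.1 ++ w.drop z.2.2) *
            (g (sl w z.1.1 z.1.2) * h (sl w z.2.1 z.2.2)
              + h (sl w z.1.1 z.1.2) * g (sl w z.2.1 z.2.2)) := by
  have e1 : ((bx w.length).filter
        (fun z => z.1.1 ≤ z.1.2 ∧ z.2.1 ≤ z.2.2 ∧ z.2.2 ≤ z.1.1 + w.length - z.1.2)).filter
        (fun z => z.2.2 ≤ z.1.1)
      = (bx w.length).filter (fun z =>
          (z.1.1 ≤ z.1.2 ∧ z.2.1 ≤ z.2.2 ∧ z.2.2 ≤ z.1.1 + w.length - z.1.2)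
            ∧ z.2.2 ≤ z.1.1) := by
    ext z; simp only [Finset.mem_filter, mem_bx]; tauto
  have e2 : (((bx w.length).filter
        (fun z => z.1.1 ≤ z.1.2 ∧ z.2.1 ≤ z.2.2 ∧ z.2.2 ≤ z.1.1 + w.length - z.1.2)).filter
        (fun z => ¬ z.2.2 ≤ z.1.1)).filter (fun z => z.2.1 ≤ z.1.1)
      = (bx w.length).filter (fun z =>
          ((z.1.1 ≤ z.1.2 ∧ z.2.1 ≤ z.2.2 ∧ z.2.2 ≤ z.1.1 + w.length - z.1.2)
            ∧ ¬ z.2.2 ≤ z.1.1) ∧ z.2.1 ≤ z.1.1) := by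
    ext z; simp only [Finset.mem_filter, mem_bx]; tauto
  have e3 : (((bx w.length).filter
        (fun z => z.1.1 ≤ z.1.2 ∧ z.2.1 ≤ z.2.2 ∧ z.2.2 ≤ z.1.1 + w.length - z.1.2)).filter
        (fun z => ¬ z.2.2 ≤ z.1.1)).filter (fun z => ¬ z.2.1 ≤ z.1.1)
      = (bx w.length).filter (fun z =>
          ((z.1.1 ≤ z.1.2 ∧ z.2.1 ≤ z.2.2 ∧ z.2.2 ≤ z.1.1 + w.length - z.1.2)
            ∧ ¬ z.2.2 ≤ z.1.1) ∧ ¬ z.2.1 ≤ z.1.1) := by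
    ext z; simp only [Finset.mem_filter, mem_bx]; tauto
  have eN1 : ((bx w.length).filter
        (fun z => z.1.1 ≤ z.1.2 ∧ z.1.2 ≤ z.2.1 ∧ z.2.1 ≤ z.2.2)).filter
        (fun z => z.2.1 < z.2.2)
      = (bx w.length).filter (fun z => z.1.1 ≤ z.1.2 ∧ z.1.2 ≤ z.2.1 ∧ z.2.1 < z.2.2) := by
    ext z; simp only [Finset.mem_filter, mem_bx]; omega
  have eN2 : ((bx w.length).filter
        (fun z => z.1.1 ≤ z.1.2 ∧ z.1.2 ≤ z.2.1 ∧ z.2.1 ≤ z.2.2)).filter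
        (fun z => ¬ z.2.1 < z.2.2)
      = (bx w.length).filter (fun z =>
          (z.1.1 ≤ z.1.2 ∧ z.1.2 ≤ z.2.1 ∧ z.2.1 ≤ z.2.2) ∧ ¬ z.2.1 < z.2.2) := by
    ext z; simp only [Finset.mem_filter, mem_bx]; tauto
  have eS1 : ((bx w.length).filter
        (fun z => z.1.1 ≤ z.1.2 ∧ z.1.2 ≤ z.2.1 ∧ z.2.1 ≤ z.2.2)).filter
        (fun z => z.1.2 < z.2.1)
      = (bx w.length).filter (fun z => z.1.1 ≤ z.1.2 ∧ z.1.2 < z.2.1 ∧ z.2.1 ≤ z.2.2) := by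
    ext z; simp only [Finset.mem_filter, mem_bx]; omega
  have eS2 : ((bx w.length).filter
        (fun z => z.1.1 ≤ z.1.2 ∧ z.1.2 ≤ z.2.1 ∧ z.2.1 ≤ z.2.2)).filter
        (fun z => ¬ z.1.2 < z.2.1)
      = (bx w.length).filter (fun z => z.1.1 ≤ z.1.2 ∧ z.1.2 = z.2.1 ∧ z.2.1 ≤ z.2.2) := by
    ext z; simp only [Finset.mem_filter, mem_bx]; omega
  rw [T1_eq, T2_eq, bijT2]
  rw [← Finset.sum_filter_add_sum_filter_not ((bx w.length).filter
      (fun z => z.1.1 ≤ z.1.2 ∧ z.2.1 ≤ z.2.2 ∧ z.2.2 ≤ z.1.1 + w.length - z.1.2))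
      (fun z => z.2.2 ≤ z.1.1)]
  rw [← Finset.sum_filter_add_sum_filter_not (((bx w.length).filter
      (fun z => z.1.1 ≤ z.1.2 ∧ z.2.1 ≤ z.2.2 ∧ z.2.2 ≤ z.1.1 + w.length - z.1.2)).filter
      (fun z => ¬ z.2.2 ≤ z.1.1)) (fun z => z.2.1 ≤ z.1.1)]
  rw [e1, e2, e3, bijA1 f g h w, bijA2 f g h w, bijA3 f g h w]
  rw [← Finset.sum_filter_add_sum_filter_not ((bx w.length).filter
      (fun z => z.1.1 ≤ z.1.2 ∧ z.1.2 ≤ z.2.1 ∧ z.2.1 ≤ z.2.2))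
      (fun z => z.2.1 < z.2.2) (fun z =>
        f (rm w z.1.1 z.2.2) * (g (sl w z.1.1 z.1.2 ++ sl w z.2.1 z.2.2)
          * h (sl w z.1.2 z.2.1)))]
  rw [eN1, eN2, bijNdia f g h w]
  rw [← Finset.sum_filter_add_sum_filter_not ((bx w.length).filter
      (fun z => z.1.1 ≤ z.1.2 ∧ z.1.2 ≤ z.2.1 ∧ z.2.1 ≤ z.2.2))
      (fun z => z.1.2 < z.2.1) (fun z =>
        f (w.take z.1.1 ++ sl w z.1.2 z.2.1 ++ w.drop z.2.2) * (g (sl w z.1.1 z.1.2)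
          * h (sl w z.2.1 z.2.2)))]
  rw [eS1, eS2]
  have eRHS : ∑ z ∈ (bx w.length).filter
        (fun z => z.1.1 ≤ z.1.2 ∧ z.1.2 < z.2.1 ∧ z.2.1 ≤ z.2.2),
      f (w.take z.1.1 ++ sl w z.1.2 z.2.1 ++ w.drop z.2.2) *
        (g (sl w z.1.1 z.1.2) * h (sl w z.2.1 z.2.2)
          + h (sl w z.1.1 z.1.2) * g (sl w z.2.1 z.2.2))
      = (∑ z ∈ (bx w.length).filter
            (fun z => z.1.1 ≤ z.1.2 ∧ z.1.2 < z.2.1 ∧ z.2.1 ≤ z.2.2),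
          f (w.take z.1.1 ++ sl w z.1.2 z.2.1 ++ w.drop z.2.2) * (g (sl w z.1.1 z.1.2)
            * h (sl w z.2.1 z.2.2)))
        + ∑ z ∈ (bx w.length).filter
            (fun z => z.1.1 ≤ z.1.2 ∧ z.1.2 < z.2.1 ∧ z.2.1 ≤ z.2.2),
          f (w.take z.1.1 ++ sl w z.1.2 z.2.1 ++ w.drop z.2.2) * (h (sl w z.1.1 z.1.2)
            * g (sl w z.2.1 z.2.2)) := by
    rw [← Finset.sum_add_distrib]
    exact Finset.sum_congr rfl fun z _ => by ring
  rw [eRHS]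
  ring

lemma preLie [CommRing A] (f g h : Word → A) :
    tri (tri f g) h - tri f (tri g h) = tri (tri f h) g - tri f (tri h g) := by
  funext w
  simp only [Pi.sub_apply]
  rw [key f g h w, key f h g w]
  exact Finset.sum_congr rfl fun z _ => by ring

lemma tri_sub_left [CommRing A] (a b c : Word → A) :
    tri (a - b) c = tri a c - tri b c := by
  funext w
  simp only [tri, Pi.sub_apply, sub_mul, Finset.sum_sub_distrib]

lemma tri_sub_right [CommRing A] (a b c : Word → A) :
    tri a (b - c) = tri a b - tri a c := by
  funext w
  simp only [tri, Pi.sub_apply, mul_sub, Finset.sum_sub_distrib]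

/-- `◁` satisfies the right pre-Lie identity on `G^0` (series with zero
constant coefficient), and consequently the bracket `[f,g] = f ◁ g − g ◁ f` satisfies the
Jacobi identity, so `G^0` is a Lie algebra. -/
theorem stmt5 [CommRing A] (f g h : Word → A)
    (hf : f [] = 0) (hg : g [] = 0) (hh : h [] = 0) :
    (tri (tri f g) h - tri f (tri g h) = tri (tri f h) g - tri f (tri h g)) ∧
    (bracket (bracket f g) h + bracket (bracket g h) f + bracket (bracket h f) g = 0) := by
  refine ⟨preLie f g h, ?_⟩
  have p1 := preLie f g h
  have p2 := preLie g h f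
  have p3 := preLie h f g
  simp only [bracket, tri_sub_left, tri_sub_right]
  linear_combination p1 + p2 + p3
end

section
/- In the free A-module on nonempty words, with ◁ the bilinear extension of the insertion product, the commutator of two basis words is given by internal insertions only: for u = a_1⋯a_n and v = b_1⋯b_m, u ◁ v − v ◁ u = Σ_{k=1}^{n−1} a_1⋯a_k b_1⋯b_m a_{k+1}⋯a_n − Σ_{l=1}^{m−1} b_1⋯b_l a_1⋯a_n b_{l+1}⋯b_m (the boundary insertions at the two ends cancel). -/
variable {A : Type*}

lemma range_eq_insert (n : ℕ) (hn : 1 ≤ n) :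
    Finset.range (n + 1) = insert 0 (insert n (Finset.Ioo 0 n)) := by
  ext x
  simp only [Finset.mem_range, Finset.mem_insert, Finset.mem_Ioo]
  omega

lemma sum_split {M : Type*} [AddCommMonoid M] (n : ℕ) (hn : 1 ≤ n) (f : ℕ → M) :
    ∑ k ∈ Finset.range (n + 1), f k = f 0 + f n + ∑ k ∈ Finset.Ioo 0 n, f k := by
  rw [range_eq_insert n hn, Finset.sum_insert, Finset.sum_insert] <;> simp [add_assoc]
  omega

/-- in the free `A`-module on (nonempty) words, with `◁` the bilinear extension
of the insertion product `u ◁ v = Σ_{k=0}^{n} u₁⋯u_k v u_{k+1}⋯u_n`, the commutator of two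
nonempty basis words `u` and `v` is given by the internal insertions only:
`u ◁ v − v ◁ u = Σ_{k=1}^{n−1} u₁⋯u_k v u_{k+1}⋯u_n − Σ_{l=1}^{m−1} v₁⋯v_l u v_{l+1}⋯v_m`
(the boundary insertions at the two ends cancel). -/
theorem stmt7 [CommRing A] (u v : Word) (hu : u ≠ []) (hv : v ≠ []) :
    (∑ k ∈ Finset.range (u.length + 1),
        Finsupp.single (u.take k ++ v ++ u.drop k) (1 : A))
      - (∑ l ∈ Finset.range (v.length + 1),
          Finsupp.single (v.take l ++ u ++ v.drop l) (1 : A))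
    = (∑ k ∈ Finset.Ioo 0 u.length,
        Finsupp.single (u.take k ++ v ++ u.drop k) (1 : A))
      - (∑ l ∈ Finset.Ioo 0 v.length,
          Finsupp.single (v.take l ++ u ++ v.drop l) (1 : A)) := by
  have hu1 : 1 ≤ u.length := List.length_pos_iff.mpr hu
  have hv1 : 1 ≤ v.length := List.length_pos_iff.mpr hv
  rw [sum_split u.length hu1, sum_split v.length hv1]
  simp only [List.take_zero, List.drop_zero, List.take_length, List.drop_length,
    List.nil_append, List.append_nil]
  abel
end

section
/- For every series f with f(∅) = 0 and every g ∈ G^1, the Cauchy product of (g − 1) with the shifted substitution f(xg(x)) has coefficients given, on every nonempty word w = a_1⋯a_n, by ((g − 1)·f(xg(x)))(w) = Σ f(w_S) ∏_{i=1}^{m(S)} g(w_{J_i^S}), where the sum runs over all nonempty subsets S ⊆ {1,…,n} with 1 ∉ S. (This is the generating-series form of the right half-shuffle product φ ≻ γ of a linear form with a character.) -/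
variable {A : Type*}

-- auxiliary

def pick (w : Word) (q : ℕ → Bool) : Word :=
  ((w.zipIdx.map Prod.swap).filter (fun p => q p.1)).map Prod.snd

lemma subword_eq_pick (w : Word) (S : Finset ℕ) :
    subword w S = pick w (fun i => decide (i ∈ S)) := rfl
lemma gapAfter_eq_pick (w : Word) (S : Finset ℕ) (s : ℕ) :
    gapAfter w S s = pick w (fun i => decide (s < i ∧ ∀ j ∈ S, j ≤ s ∨ i < j)) := rfl
lemma prefixGap_eq_pick (w : Word) (S : Finset ℕ) :
    prefixGap w S = pick w (fun i => decide (∀ j ∈ S, i < j)) := rfl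

lemma enumFrom_add {α : Type*} (d : List α) (n k : ℕ) :
    (d.zipIdx (n + k)).map Prod.swap = ((d.zipIdx n).map Prod.swap).map (fun p => (p.1 + k, p.2)) := by
  induction d generalizing n with
  | nil => simp
  | cons a d ih =>
      simp only [List.zipIdx_cons, List.map_cons]
      refine congrArg (List.cons _) ?_
      rw [show n + k + 1 = (n + 1) + k by omega, ih]

lemma pick_append (t d : Word) (q : ℕ → Bool) :
    pick (t ++ d) q = pick t q ++ pick d (fun i => q (i + t.length)) := by
  unfold pick
  rw [List.zipIdx_append, List.map_append, List.filter_append, List.map_append, Nat.zero_add]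
  congr 1
  have h : (d.zipIdx t.length).map Prod.swap = (d.zipIdx.map Prod.swap).map (fun p => (p.1 + t.length, p.2)) := by
    have := enumFrom_add d 0 t.length
    simpa using this
  rw [h, List.filter_map, List.map_map]
  rfl

lemma mem_enum_fst_lt {p : ℕ × ℕ+} {w : Word} (hp : p ∈ w.zipIdx.map Prod.swap) : p.1 < w.length := by
  obtain ⟨i, x⟩ := p
  rw [List.mem_map] at hp
  obtain ⟨⟨a, j⟩, hm, he⟩ := hp
  simp only [Prod.swap_prod_mk, Prod.mk.injEq] at he
  obtain ⟨rfl, rfl⟩ := he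
  exact (List.mem_zipIdx' hm).1

lemma pick_congr {w : Word} {q q' : ℕ → Bool} (h : ∀ i < w.length, q i = q' i) :
    pick w q = pick w q' := by
  unfold pick
  congr 1
  exact List.filter_congr fun p hp => h p.1 (mem_enum_fst_lt hp)

lemma pick_of_all {w : Word} {q : ℕ → Bool} (h : ∀ i < w.length, q i = true) :
    pick w q = w := by
  rw [pick_congr (q' := fun _ => true) h]
  unfold pick
  rw [List.filter_true, List.map_map]
  exact List.zipIdx_map_fst 0 w

lemma pick_of_none {w : Word} {q : ℕ → Bool} (h : ∀ i < w.length, q i = false) :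
    pick w q = [] := by
  rw [pick_congr (q' := fun _ => false) h]
  unfold pick
  rw [List.filter_false, List.map_nil]

lemma subword_shift (w : Word) (k : ℕ) (hk : k ≤ w.length) (S : Finset ℕ) :
    subword w (S.image (fun s => s + k)) = subword (w.drop k) S := by
  have hrw : subword w (S.image (fun s => s + k))
      = subword (w.take k ++ w.drop k) (S.image (fun s => s + k)) := by
    rw [List.take_append_drop]
  rw [hrw, subword_eq_pick, subword_eq_pick, pick_append]
  have hlen : (w.take k).length = k := by simp [List.length_take, Nat.min_eq_left hk]
  rw [pick_of_none (w := w.take k) (q := fun i => decide (i ∈ S.image (fun s => s + k)))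
    (by intro i hi; rw [hlen] at hi; simp only [decide_eq_false_iff_not, Finset.mem_image]
        rintro ⟨x, _, rfl⟩; omega)]
  rw [List.nil_append, hlen]
  apply pick_congr
  intro i _
  simp only [decide_eq_decide, Finset.mem_image]
  constructor
  · rintro ⟨x, hx, hxe⟩; have : x = i := by omega
    subst this; exact hx
  · intro hi; exact ⟨i, hi, rfl⟩

lemma gapAfter_shift (w : Word) (k : ℕ) (hk : k ≤ w.length) (S : Finset ℕ) (s : ℕ) :
    gapAfter w (S.image (fun s => s + k)) (s + k) = gapAfter (w.drop k) S s := by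
  have hrw : gapAfter w (S.image (fun s => s + k)) (s + k)
      = gapAfter (w.take k ++ w.drop k) (S.image (fun s => s + k)) (s + k) := by
    rw [List.take_append_drop]
  rw [hrw, gapAfter_eq_pick, gapAfter_eq_pick, pick_append]
  have hlen : (w.take k).length = k := by simp [List.length_take, Nat.min_eq_left hk]
  rw [pick_of_none (w := w.take k)
    (by intro i hi; rw [hlen] at hi; simp only [decide_eq_false_iff_not, not_and]
        intro h; omega)]
  rw [List.nil_append, hlen]
  apply pick_congr
  intro i _
  simp only [decide_eq_decide, Finset.mem_image]
  constructor
  · rintro ⟨h1, h2⟩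
    refine ⟨by omega, fun j hj => ?_⟩
    have := h2 (j + k) ⟨j, hj, rfl⟩
    omega
  · rintro ⟨h1, h2⟩
    refine ⟨by omega, ?_⟩
    rintro j ⟨x, hx, rfl⟩
    have := h2 x hx
    omega

lemma prefixGap_shift (w : Word) (k : ℕ) (hk : k ≤ w.length) (S : Finset ℕ) (h0 : 0 ∈ S) :
    prefixGap w (S.image (fun s => s + k)) = w.take k := by
  have hrw : prefixGap w (S.image (fun s => s + k))
      = prefixGap (w.take k ++ w.drop k) (S.image (fun s => s + k)) := by
    rw [List.take_append_drop]
  rw [hrw, prefixGap_eq_pick, pick_append]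
  have hlen : (w.take k).length = k := by simp [List.length_take, Nat.min_eq_left hk]
  rw [pick_of_all (w := w.take k)
    (by intro i hi; rw [hlen] at hi; simp only [decide_eq_true_eq, Finset.mem_image]
        rintro j ⟨x, hx, rfl⟩; omega)]
  rw [hlen]
  rw [pick_of_none
    (by intro i _
        apply decide_eq_false
        intro h
        have hkT : k ∈ S.image (fun s => s + k) := Finset.mem_image.mpr ⟨0, h0, by omega⟩
        have := h k hkT
        omega)]
  rw [List.append_nil]


/-- for `f` with `f(∅) = 0` and `g ∈ G^1`, the Cauchy product of `g − 1` with
the shifted substitution `f(xg(x))` has, on every nonempty word `w` of length `n`,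
coefficient `Σ f(w_S) ∏ g(w_{J^S_i})`, summed over the nonempty subsets `S ⊆ {0,…,n-1}` not
containing the first position; the product is over the (maximal) intervals of the complement
of `S`, realized as the factor before the first element of `S` together with the factor
after each `s ∈ S`, the empty ones contributing `g(∅) = 1`.  (This is the generating-series
form of the right half-shuffle product `φ ≻ γ` of a linear form with a character.) -/
theorem stmt8 [CommRing A] (f g : Word → A) (hf : f [] = 0) (hg : g [] = 1)
    (w : Word) (hw : w ≠ []) :
    cauchy (fun u => g u - one u) (subst f g) w =
      ∑ S ∈ (Finset.range w.length).powerset.filter (fun S => S.Nonempty ∧ 0 ∉ S),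
        f (subword w S) * (g (prefixGap w S) * ∏ s ∈ S, g (gapAfter w S s)) := by
  classical
  have hn0 : 0 < w.length := List.length_pos_iff.mpr hw
  set n := w.length with hn
  show (∑ k ∈ Finset.range (n + 1), (g (w.take k) - one (w.take k)) * subst f g (w.drop k)) = _
  have hsub : Finset.Ico 1 n ⊆ Finset.range (n + 1) := by
    intro k hk
    simp only [Finset.mem_Ico] at hk
    simp only [Finset.mem_range]
    omega
  have hzero : ∀ k ∈ Finset.range (n + 1), k ∉ Finset.Ico 1 n →
      (g (w.take k) - one (w.take k)) * subst f g (w.drop k) = 0 := by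
    intro k hk hk'
    simp only [Finset.mem_range] at hk
    simp only [Finset.mem_Ico, not_and, not_lt] at hk'
    rcases Nat.eq_zero_or_pos k with h0 | h0
    · subst h0
      simp [one, hg]
    · have hkn : n ≤ k := hk' h0
      have hd : w.drop k = [] := List.drop_eq_nil_of_le (by omega)
      rw [hd]
      simp [subst, hf]
  rw [← Finset.sum_subset hsub hzero]
  have step2 : ∀ k ∈ Finset.Ico 1 n,
      (g (w.take k) - one (w.take k)) * subst f g (w.drop k)
      = ∑ S' ∈ (Finset.range (n - k)).powerset.filter (fun S => 0 ∈ S),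
          g (w.take k) * (f (subword (w.drop k) S') * ∏ s ∈ S', g (gapAfter (w.drop k) S' s)) := by
    intro k hk
    simp only [Finset.mem_Ico] at hk
    have ht : w.take k ≠ [] := by
      intro h
      rcases List.take_eq_nil_iff.mp h with h' | h'
      · omega
      · exact hw h' 
    have hone : one (w.take k) = (0 : A) := by simp [one, ht]
    have hd : w.drop k ≠ [] := by
      have : (w.drop k).length = n - k := by simp [hn]
      intro h
      rw [h] at this
      simp at this
      omega
    rw [hone, sub_zero]
    have hsubst : subst f g (w.drop k)
        = ∑ S' ∈ (Finset.range (n - k)).powerset.filter (fun S => 0 ∈ S),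
            f (subword (w.drop k) S') * ∏ s ∈ S', g (gapAfter (w.drop k) S' s) := by
      simp only [subst, if_neg hd, List.length_drop, hn]
    rw [hsubst, Finset.mul_sum]
  rw [Finset.sum_congr rfl step2, Finset.sum_sigma']
  refine Finset.sum_nbij' (fun p => p.2.image (fun s => s + p.1))
    (fun S => ⟨sInf (S : Set ℕ), S.image (fun x => x - sInf (S : Set ℕ))⟩)
    ?_ ?_ ?_ ?_ ?_
  · rintro ⟨k, S'⟩ hp
    simp only [Finset.mem_sigma, Finset.mem_Ico, Finset.mem_filter, Finset.mem_powerset] at hp ⊢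
    obtain ⟨⟨hk1, hk2⟩, hS'r, h0S'⟩ := hp
    refine ⟨?_, ⟨k, Finset.mem_image.mpr ⟨0, h0S', by omega⟩⟩, ?_⟩
    · intro x hx
      simp only [Finset.mem_image] at hx
      obtain ⟨y, hy, rfl⟩ := hx
      have := Finset.mem_range.mp (hS'r hy)
      simp only [Finset.mem_range]
      omega
    · intro hmem
      simp only [Finset.mem_image] at hmem
      obtain ⟨y, hy, hye⟩ := hmem
      omega
  · rintro S hS
    simp only [Finset.mem_filter, Finset.mem_powerset] at hS
    obtain ⟨hSr, hne, h0S⟩ := hS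
    have hne' : (S : Set ℕ).Nonempty := by exact_mod_cast hne
    have hm : sInf (S : Set ℕ) ∈ S := Nat.sInf_mem hne'
    have hle : ∀ x ∈ S, sInf (S : Set ℕ) ≤ x := fun x hx => Nat.sInf_le hx
    have hmn : sInf (S : Set ℕ) < n := Finset.mem_range.mp (hSr hm)
    simp only [Finset.mem_sigma, Finset.mem_Ico, Finset.mem_filter, Finset.mem_powerset]
    refine ⟨⟨?_, hmn⟩, ?_, Finset.mem_image.mpr ⟨sInf (S : Set ℕ), hm, by omega⟩⟩
    · have : sInf (S : Set ℕ) ≠ 0 := fun h => h0S (h ▸ hm)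
      omega
    · intro x hx
      simp only [Finset.mem_image] at hx
      obtain ⟨y, hy, rfl⟩ := hx
      have h1 := hle y hy
      have h2 := Finset.mem_range.mp (hSr hy)
      simp only [Finset.mem_range]
      omega
  · rintro ⟨k, S'⟩ hp
    simp only [Finset.mem_sigma, Finset.mem_Ico, Finset.mem_filter, Finset.mem_powerset] at hp
    obtain ⟨⟨hk1, hk2⟩, hS'r, h0S'⟩ := hp
    have hinf : sInf ((S'.image (fun s => s + k) : Finset ℕ) : Set ℕ) = k := by
      have hkmem : k ∈ S'.image (fun s => s + k) := Finset.mem_image.mpr ⟨0, h0S', by omega⟩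
      have h1 : sInf ((S'.image (fun s => s + k) : Finset ℕ) : Set ℕ) ≤ k := Nat.sInf_le hkmem
      have h2 : sInf ((S'.image (fun s => s + k) : Finset ℕ) : Set ℕ)
          ∈ S'.image (fun s => s + k) := Nat.sInf_mem ⟨k, hkmem⟩
      simp only [Finset.mem_image] at h2
      obtain ⟨y, _, hy⟩ := h2
      omega
    have himg : ((S'.image (fun s => s + k)).image (fun x => x - k)) = S' := by
      rw [Finset.image_image]
      refine Eq.trans (Finset.image_congr ?_) Finset.image_id
      intro x _
      simp
    dsimp only
    rw [hinf, himg]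
  · rintro S hS
    simp only [Finset.mem_filter, Finset.mem_powerset] at hS
    obtain ⟨hSr, hne, h0S⟩ := hS
    have hne' : (S : Set ℕ).Nonempty := by exact_mod_cast hne
    have hle : ∀ x ∈ S, sInf (S : Set ℕ) ≤ x := fun x hx => Nat.sInf_le hx
    dsimp only
    rw [Finset.image_image]
    refine Eq.trans (Finset.image_congr ?_) Finset.image_id
    intro x hx
    have := hle x hx
    simp only [Function.comp, id_eq]
    omega
  · rintro ⟨k, S'⟩ hp
    simp only [Finset.mem_sigma, Finset.mem_Ico, Finset.mem_filter, Finset.mem_powerset] at hp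
    obtain ⟨⟨hk1, hk2⟩, hS'r, h0S'⟩ := hp
    have hkle : k ≤ w.length := by omega
    have hprod : (∏ s ∈ S'.image (fun s => s + k), g (gapAfter w (S'.image (fun s => s + k)) s))
        = ∏ s ∈ S', g (gapAfter (w.drop k) S' s) := by
      rw [Finset.prod_image (by intro a _ b _ h; simp only at h; omega)]
      exact Finset.prod_congr rfl fun s _ => by rw [gapAfter_shift w k hkle S' s]
    rw [subword_shift w k hkle S', prefixGap_shift w k hkle S' h0S', hprod]
    ring
end

section
/- Functional free moment–cumulant relation: for every m ∈ G^1 there exists a unique κ ∈ G^0 such that m = 1 + κ(x m(x)), where κ(x m(x)) denotes the shifted substitution of m into κ. (The series κ is the multivariate generating series of free cumulants associated to the moment series m.) -/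
variable {A : Type*}

lemma subword_full (w : Word) : subword w (Finset.range w.length) = w := by
  unfold subword
  rw [List.filter_eq_self.mpr, List.map_map]
  · exact List.zipIdx_map_fst 0 w
  intro p hp
  have : w[p.1]? = some p.2 := by
    obtain ⟨a, ha, rfl⟩ := List.mem_map.mp hp
    exact List.mem_zipIdx_iff_getElem?.mp ha
  have := (List.getElem?_eq_some_iff.mp this).1
  simpa using this

lemma gap_full (w : Word) (s : ℕ) : gapAfter w (Finset.range w.length) s = [] := by
  unfold gapAfter
  rw [List.filter_eq_nil_iff.mpr]
  · rfl
  · intro p hp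
    have : w[p.1]? = some p.2 := by
      obtain ⟨a, ha, rfl⟩ := List.mem_map.mp hp
      exact List.mem_zipIdx_iff_getElem?.mp ha
    have h1 := (List.getElem?_eq_some_iff.mp this).1
    simp only [decide_eq_true_eq, not_and]
    intro hs hall
    rcases hall p.1 (Finset.mem_range.mpr h1) with h | h
    · omega
    · omega

lemma subword_length_lt (w : Word) (S : Finset ℕ) (h1 : S ⊆ Finset.range w.length)
    (h2 : S ≠ Finset.range w.length) : (subword w S).length < w.length := by
  obtain ⟨i, hi, hiS⟩ : ∃ i ∈ Finset.range w.length, i ∉ S := by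
    by_contra h
    push_neg at h
    exact h2 (Finset.Subset.antisymm h1 h)
  have hi' := Finset.mem_range.mp hi
  have hmem : (i, w[i]) ∈ w.zipIdx.map Prod.swap :=
    List.mem_map.mpr ⟨(w[i], i), List.mem_zipIdx_iff_getElem?.mpr (by simp [hi']), rfl⟩
  unfold subword
  rw [List.length_map]
  have hle := List.length_filter_le (fun p => decide (p.1 ∈ S)) (w.zipIdx.map Prod.swap)
  have hne : ((w.zipIdx.map Prod.swap).filter (fun p => decide (p.1 ∈ S))).length ≠
      (w.zipIdx.map Prod.swap).length := by
    intro h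
    have := List.length_filter_eq_length_iff.mp h _ hmem
    simp at this
    exact hiS this
  have := lt_of_le_of_ne hle hne
  simpa using this

lemma subst_eq [CommRing A] (f m : Word → A) (hm : m [] = 1) (w : Word) (hw : w ≠ []) :
    subst f m w = f w + ∑ S ∈ ((Finset.range w.length).powerset.filter
        (fun S => 0 ∈ S)).erase (Finset.range w.length),
      f (subword w S) * ∏ s ∈ S, m (gapAfter w S s) := by
  unfold subst
  rw [if_neg hw]
  have hfull : Finset.range w.length ∈ (Finset.range w.length).powerset.filter
      (fun S => 0 ∈ S) := by
    simp [Finset.mem_filter, Finset.mem_powerset]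
    exact List.length_pos_iff.mpr hw
  rw [← Finset.add_sum_erase _ _ hfull]
  congr 1
  rw [subword_full]
  have : ∀ s ∈ Finset.range w.length, m (gapAfter w (Finset.range w.length) s) = 1 := by
    intro s _
    rw [gap_full, hm]
  rw [Finset.prod_congr rfl this]
  simp

def kappa [CommRing A] (m : Word → A) (w : Word) : A :=
  if h : w = [] then 0 else
    m w - one w - ∑ S ∈ (((Finset.range w.length).powerset.filter
        (fun S => 0 ∈ S)).erase (Finset.range w.length)).attach,
      kappa m (subword w S.1) * ∏ s ∈ S.1, m (gapAfter w S.1 s)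
termination_by w.length
decreasing_by
  have hS := S.2
  rw [Finset.mem_erase, Finset.mem_filter, Finset.mem_powerset] at hS
  exact subword_length_lt w S.1 hS.2.1 hS.1

lemma kappa_nil [CommRing A] (m : Word → A) : kappa m [] = 0 := by
  rw [kappa]
  simp

lemma kappa_spec [CommRing A] (m : Word → A) (w : Word) (hw : w ≠ []) :
    kappa m w = m w - one w - ∑ S ∈ ((Finset.range w.length).powerset.filter
        (fun S => 0 ∈ S)).erase (Finset.range w.length),
      kappa m (subword w S) * ∏ s ∈ S, m (gapAfter w S s) := by
  rw [kappa]
  rw [dif_neg hw,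
    Finset.sum_attach _ (fun S => kappa m (subword w S) * ∏ s ∈ S, m (gapAfter w S s))]

/-- functional free moment–cumulant relation.  For every `m ∈ G^1` there is a
unique `κ ∈ G^0` with `m = 1 + κ(x m(x))`; `κ` is the generating series of free cumulants. -/
theorem stmt11 [Field A] [CharZero A] (m : Word → A) (hm : m [] = 1) :
    ∃! κ : Word → A, κ [] = 0 ∧ ∀ w, m w = one w + subst κ m w := by
  refine ⟨kappa m, ⟨kappa_nil m, ?_⟩, ?_⟩
  · intro w
    by_cases hw : w = []
    · subst hw
      simp [one, subst, kappa_nil, hm]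
    · rw [subst_eq _ _ hm w hw, kappa_spec m w hw]
      ring
  · rintro κ ⟨hκ0, hκ⟩
    funext w
    have key : ∀ n, ∀ w : Word, w.length ≤ n → κ w = kappa m w := by
      intro n
      induction n with
      | zero =>
        intro w hwn
        have : w = [] := List.length_eq_zero_iff.mp (Nat.le_zero.mp hwn)
        rw [this, hκ0, kappa_nil]
      | succ n ih =>
        intro w hwn
        by_cases hw : w = []
        · rw [hw, hκ0, kappa_nil]
        · have h1 := hκ w
          rw [subst_eq _ _ hm w hw] at h1
          have hsum : ∑ S ∈ ((Finset.range w.length).powerset.filter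
              (fun S => 0 ∈ S)).erase (Finset.range w.length),
              κ (subword w S) * ∏ s ∈ S, m (gapAfter w S s)
            = ∑ S ∈ ((Finset.range w.length).powerset.filter
              (fun S => 0 ∈ S)).erase (Finset.range w.length),
              kappa m (subword w S) * ∏ s ∈ S, m (gapAfter w S s) := by
            refine Finset.sum_congr rfl fun S hS => ?_
            rw [Finset.mem_erase, Finset.mem_filter, Finset.mem_powerset] at hS
            have := subword_length_lt w S hS.2.1 hS.1
            rw [ih (subword w S) (by omega)]
          rw [kappa_spec m w hw, ← hsum]
          linear_combination -h1
    exact key w.length w le_rfl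
end

section
/- Free moment–cumulant relations via non-crossing partitions: let m ∈ G^1 and let κ ∈ G^0 be the unique series with m = 1 + κ(x m(x)). Then for every nonempty word w = a_1⋯a_n, m(w) = Σ_{π ∈ NC(n)} ∏_{B ∈ π} κ(w_B), where the sum is over all non-crossing partitions π of {1,…,n} and w_B denotes the subword of w consisting of the letters at the positions of the block B taken in increasing order. -/
variable {A : Type*}

/-- `P` is a partition of `{0, …, n-1}`: its blocks are nonempty subsets of `{0,…,n-1}`,
pairwise disjoint, and covering `{0,…,n-1}`. -/
def IsPartitionOf (n : ℕ) (P : Finset (Finset ℕ)) : Prop :=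
  (∀ B ∈ P, B.Nonempty ∧ B ⊆ Finset.range n) ∧
  (∀ B₁ ∈ P, ∀ B₂ ∈ P, B₁ ≠ B₂ → Disjoint B₁ B₂) ∧
  (∀ i ∈ Finset.range n, ∃ B ∈ P, i ∈ B)

/-- `P` is non-crossing: there are no `p < q < r < s` with `p, r` in one block and
`q, s` in a different block. -/
def IsNonCrossing (P : Finset (Finset ℕ)) : Prop :=
  ∀ B₁ ∈ P, ∀ B₂ ∈ P, B₁ ≠ B₂ →
    ∀ p ∈ B₁, ∀ q ∈ B₂, ∀ r ∈ B₁, ∀ s ∈ B₂, ¬(p < q ∧ q < r ∧ r < s)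

open scoped Classical in
/-- The (finite) set of non-crossing partitions of `{0, …, n-1}`. -/
noncomputable def NC (n : ℕ) : Finset (Finset (Finset ℕ)) :=
  ((Finset.range n).powerset.powerset).filter fun P => IsPartitionOf n P ∧ IsNonCrossing P

set_option linter.unusedSectionVars false
set_option linter.unusedVariables false

/-- Select the letters at positions where `q` holds. -/
def sieve (q : ℕ → Bool) : Word → Word
  | [] => []
  | x :: w => (if q 0 then [x] else []) ++ sieve (fun i => q (i+1)) w

lemma sieve_enumFrom (q : ℕ → Bool) : ∀ (w : Word) (k : ℕ),
    (((w.zipIdx k).map Prod.swap).filter (fun p => q p.1)).map Prod.snd = sieve (fun i => q (i + k)) w := by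
  intro w
  induction w with
  | nil => intro k; rfl
  | cons x w ih =>
    intro k
    rw [List.zipIdx_cons, List.map_cons, List.filter_cons, sieve]
    dsimp only [Prod.swap]
    have h1 : (fun i => q (i + 1 + k)) = (fun i => q (i + (k+1))) := by
      funext i; ring_nf
    by_cases h : q k
    · simp only [h, Nat.zero_add, if_pos, List.map_cons]
      rw [ih (k+1), h1]
      simp [h]
    · simp only [Nat.zero_add, h, if_neg, Bool.false_eq_true, not_false_iff]
      rw [ih (k+1), h1]
      simp [h]

lemma sieve_enum (q : ℕ → Bool) (w : Word) :
    ((w.zipIdx.map Prod.swap).filter (fun p => q p.1)).map Prod.snd = sieve q w := by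
  have := sieve_enumFrom q w 0
  simpa using this

lemma sieve_congr {q q' : ℕ → Bool} : ∀ {w : Word}, (∀ i < w.length, q i = q' i) →
    sieve q w = sieve q' w := by
  intro w
  induction w generalizing q q' with
  | nil => intro _; rfl
  | cons x w ih =>
    intro h
    rw [sieve, sieve, h 0 (by simp), ih fun i hi => h (i+1) (by simpa using hi)]

lemma sieve_false {q : ℕ → Bool} : ∀ {w : Word}, (∀ i < w.length, q i = false) →
    sieve q w = [] := by
  intro w
  induction w generalizing q with
  | nil => intro _; rfl
  | cons x w ih =>
    intro h
    rw [sieve, h 0 (by simp), ih fun i hi => h (i+1) (by simpa using hi)]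
    simp

lemma sieve_interval : ∀ (w : Word) (a b : ℕ),
    sieve (fun i => decide (a ≤ i ∧ i < b)) w = (w.drop a).take (b - a) := by
  intro w
  induction w with
  | nil => intro a b; simp [sieve]
  | cons x w ih =>
    intro a b
    rw [sieve]
    match a with
    | 0 =>
      have h1 : (fun i => decide (0 ≤ i + 1 ∧ i + 1 < b)) = (fun i => decide (0 ≤ i ∧ i < b - 1)) := by
        funext i; simp only [decide_eq_decide]; omega
      rw [h1, ih 0 (b-1)]
      match b with
      | 0 => simp
      | b + 1 => simp
    | a + 1 =>
      have h1 : (fun i => decide (a + 1 ≤ i + 1 ∧ i + 1 < b)) = (fun i => decide (a ≤ i ∧ i < b - 1)) := by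
        funext i; simp only [decide_eq_decide]; omega
      rw [h1, ih a (b-1)]
      rw [if_neg (by simp)]
      simp only [List.nil_append, List.drop_succ_cons]
      congr 1
      omega

lemma sieve_drop (q : ℕ → Bool) : ∀ (w : Word) (a : ℕ),
    sieve q (w.drop a) = sieve (fun i => decide (a ≤ i) && q (i - a)) w := by
  intro w
  induction w with
  | nil => intro a; simp [sieve]
  | cons x w ih =>
    intro a
    match a with
    | 0 =>
      rw [List.drop_zero]
      exact sieve_congr (by intro i _; simp)
    | a + 1 =>
      rw [List.drop_succ_cons, ih a, sieve]
      rw [if_neg (by simp)]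
      simp only [List.nil_append]
      apply sieve_congr
      intro i _
      congr 1
      · simp [decide_eq_decide]
      · congr 1; omega

lemma sieve_take (q : ℕ → Bool) : ∀ (w : Word) (t : ℕ),
    sieve q (w.take t) = sieve (fun i => q i && decide (i < t)) w := by
  intro w
  induction w generalizing q with
  | nil => intro t; simp [sieve]
  | cons x w ih =>
    intro t
    match t with
    | 0 =>
      rw [List.take_zero]
      exact (sieve_false (by intro i _; simp)).symm
    | t + 1 =>
      rw [List.take_succ_cons, sieve, sieve, ih]
      congr 1
      · simp
      · apply sieve_congr; intro i _; simp

/-! ### Auxiliary: subword and gapAfter via sieve -/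

lemma subword_eq_sieve (w : Word) (S : Finset ℕ) :
    subword w S = sieve (fun i => decide (i ∈ S)) w :=
  sieve_enum (fun i => decide (i ∈ S)) w

lemma gapAfter_eq_sieve (w : Word) (S : Finset ℕ) (s : ℕ) :
    gapAfter w S s = sieve (fun i => decide (s < i ∧ ∀ j ∈ S, j ≤ s ∨ i < j)) w :=
  sieve_enum (fun i => decide (s < i ∧ ∀ j ∈ S, j ≤ s ∨ i < j)) w

/-- The next element of `S` after `s`, or `n` if there is none. -/
def nxt (n : ℕ) (S : Finset ℕ) (s : ℕ) : ℕ :=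
  (insert n (S.filter (fun j => s < j))).min' (Finset.insert_nonempty _ _)

lemma nxt_le_n (n : ℕ) (S : Finset ℕ) (s : ℕ) : nxt n S s ≤ n :=
  Finset.min'_le _ n (Finset.mem_insert_self _ _)

lemma lt_nxt {n s : ℕ} (S : Finset ℕ) (h : s < n) : s < nxt n S s := by
  rw [nxt, Finset.lt_min'_iff]
  intro y hy
  rcases Finset.mem_insert.1 hy with rfl | hy
  · exact h
  · exact (Finset.mem_filter.1 hy).2

lemma nxt_le {n s j : ℕ} {S : Finset ℕ} (hj : j ∈ S) (h : s < j) : nxt n S s ≤ j :=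
  Finset.min'_le _ j (Finset.mem_insert_of_mem (Finset.mem_filter.2 ⟨hj, h⟩))

lemma nxt_mem {n s : ℕ} {S : Finset ℕ} (h : nxt n S s ≠ n) : nxt n S s ∈ S := by
  have := Finset.min'_mem (insert n (S.filter (fun j => s < j))) (Finset.insert_nonempty _ _)
  rcases Finset.mem_insert.1 this with h' | h'
  · exact absurd h' h
  · exact (Finset.mem_filter.1 h').1

lemma gap_pred_iff {n i : ℕ} (S : Finset ℕ) (s : ℕ) (hi : i < n) :
    (s < i ∧ ∀ j ∈ S, j ≤ s ∨ i < j) ↔ (s + 1 ≤ i ∧ i < nxt n S s) := by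
  constructor
  · rintro ⟨h1, h2⟩
    refine ⟨h1, ?_⟩
    rw [nxt, Finset.lt_min'_iff]
    intro y hy
    rcases Finset.mem_insert.1 hy with rfl | hy
    · exact hi
    · obtain ⟨hyS, hys⟩ := Finset.mem_filter.1 hy
      rcases h2 y hyS with h | h
      · omega
      · exact h
  · rintro ⟨h1, h2⟩
    refine ⟨h1, fun j hj => ?_⟩
    by_cases hjs : j ≤ s
    · exact Or.inl hjs
    · exact Or.inr (lt_of_lt_of_le h2 (nxt_le hj (by omega)))

lemma gapAfter_eq_s14 (w : Word) (S : Finset ℕ) (s : ℕ) :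
    gapAfter w S s = (w.drop (s+1)).take (nxt w.length S s - (s+1)) := by
  rw [gapAfter_eq_sieve, ← sieve_interval]
  apply sieve_congr
  intro i hi
  rw [decide_eq_decide]
  exact gap_pred_iff S s hi

lemma gapAfter_length {w : Word} {s : ℕ} (S : Finset ℕ) (hs : s < w.length) :
    (gapAfter w S s).length = nxt w.length S s - (s+1) := by
  rw [gapAfter_eq_s14, List.length_take, List.length_drop]
  have := nxt_le_n w.length S s
  omega

lemma subword_take (u : Word) (L : ℕ) (B : Finset ℕ) (hB : ∀ b ∈ B, b < L) :
    subword (u.take L) B = subword u B := by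
  rw [subword_eq_sieve, subword_eq_sieve, sieve_take]
  apply sieve_congr
  intro i _
  by_cases h : i ∈ B
  · simp [h, hB i h]
  · simp [h]

lemma subword_drop (u : Word) (a : ℕ) (B : Finset ℕ) :
    subword (u.drop a) B = subword u (B.image (· + a)) := by
  rw [subword_eq_sieve, subword_eq_sieve, sieve_drop]
  apply sieve_congr
  intro i _
  have : (i ∈ B.image (· + a)) ↔ (a ≤ i ∧ i - a ∈ B) := by
    simp only [Finset.mem_image]
    constructor
    · rintro ⟨b, hb, rfl⟩; simpa using hb
    · rintro ⟨h1, h2⟩; exact ⟨i - a, h2, by omega⟩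
  rw [show decide (i ∈ B.image (· + a)) = decide (a ≤ i ∧ i - a ∈ B) by
    rw [decide_eq_decide]; exact this]
  exact (Bool.decide_and _ _).symm

lemma subword_gapAfter {w : Word} {S : Finset ℕ} {s : ℕ} (hs : s < w.length)
    (B : Finset ℕ) (hB : ∀ b ∈ B, b < (gapAfter w S s).length) :
    subword (gapAfter w S s) B = subword w (B.image (· + (s+1))) := by
  have hlen := gapAfter_length S hs
  rw [gapAfter_eq_s14, subword_take, subword_drop]
  intro b hb
  have := hB b hb
  rw [hlen] at this
  exact this

/-! ### NC basics -/

lemma mem_NC {n : ℕ} {P : Finset (Finset ℕ)} :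
    P ∈ NC n ↔ IsPartitionOf n P ∧ IsNonCrossing P := by
  classical
  rw [NC, Finset.mem_filter, Finset.mem_powerset]
  constructor
  · rintro ⟨-, h⟩; exact h
  · intro h
    refine ⟨?_, h⟩
    intro B hB
    rw [Finset.mem_powerset]
    exact (h.1.1 B hB).2

lemma NC_zero : NC 0 = {∅} := by
  ext P
  rw [mem_NC, Finset.mem_singleton]
  constructor
  · rintro ⟨⟨h1, -, -⟩, -⟩
    by_contra hne
    obtain ⟨B, hB⟩ := Finset.nonempty_iff_ne_empty.2 hne
    obtain ⟨⟨b, hb⟩, hsub⟩ := h1 B hB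
    simpa using hsub hb
  · rintro rfl
    refine ⟨⟨?_, ?_, ?_⟩, ?_⟩ <;> simp [IsNonCrossing]

/-! ### Gap intervals -/

def gapI (n : ℕ) (S : Finset ℕ) (s : ℕ) : Finset ℕ := Finset.Ico (s+1) (nxt n S s)

lemma not_mem_gapI_of_mem {n s j : ℕ} {S : Finset ℕ} (hj : j ∈ S) : j ∉ gapI n S s := by
  intro h
  rw [gapI, Finset.mem_Ico] at h
  have := nxt_le (n := n) hj (show s < j by omega)
  omega

lemma gapI_subset_range {n s : ℕ} (S : Finset ℕ) : gapI n S s ⊆ Finset.range n := by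
  intro i hi
  rw [gapI, Finset.mem_Ico] at hi
  rw [Finset.mem_range]
  exact lt_of_lt_of_le hi.2 (nxt_le_n n S s)

lemma gapI_disjoint_aux {n s s' : ℕ} {S : Finset ℕ} (hs' : s' ∈ S) (h : s < s') :
    Disjoint (gapI n S s) (gapI n S s') := by
  rw [Finset.disjoint_left]
  intro i hi hi'
  rw [gapI, Finset.mem_Ico] at hi hi'
  have := nxt_le (n := n) hs' h
  omega

lemma gapI_disjoint {n s s' : ℕ} {S : Finset ℕ} (hs : s ∈ S) (hs' : s' ∈ S) (h : s ≠ s') :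
    Disjoint (gapI n S s) (gapI n S s') := by
  rcases lt_or_gt_of_ne h with h' | h'
  · exact gapI_disjoint_aux hs' h'
  · exact (gapI_disjoint_aux hs h').symm

lemma mem_gapI_exists {n i : ℕ} {S : Finset ℕ} (h0 : 0 ∈ S) (hi : i < n) (hiS : i ∉ S) :
    ∃ s ∈ S, i ∈ gapI n S s := by
  classical
  have h0i : 0 < i := by
    rcases Nat.eq_zero_or_pos i with rfl | h
    · exact absurd h0 hiS
    · exact h
  have hT : (S.filter (fun j => j < i)).Nonempty := ⟨0, Finset.mem_filter.2 ⟨h0, h0i⟩⟩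
  obtain ⟨hsS, hsi⟩ := Finset.mem_filter.1 ((S.filter (fun j => j < i)).max'_mem hT)
  refine ⟨(S.filter (fun j => j < i)).max' hT, hsS, ?_⟩
  rw [gapI, Finset.mem_Ico]
  refine ⟨by omega, ?_⟩
  rw [nxt, Finset.lt_min'_iff]
  intro y hy
  rcases Finset.mem_insert.1 hy with rfl | hy
  · exact hi
  · obtain ⟨hyS, hys⟩ := Finset.mem_filter.1 hy
    by_contra hcon
    push_neg at hcon
    have hyi : y < i := by
      rcases lt_or_eq_of_le hcon with h | h
      · exact h
      · exact absurd (h ▸ hyS) hiS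
    have hle := Finset.le_max' (S.filter (fun j => j < i)) y (Finset.mem_filter.2 ⟨hyS, hyi⟩)
    omega

/-! ### Shifting blocks up and down -/

def up (s : ℕ) (B : Finset ℕ) : Finset ℕ := B.image (· + (s+1))

def down (s : ℕ) (B : Finset ℕ) : Finset ℕ := B.image (fun i => i - (s+1))

lemma mem_up {s i : ℕ} {B : Finset ℕ} : i ∈ up s B ↔ s + 1 ≤ i ∧ i - (s+1) ∈ B := by
  rw [up, Finset.mem_image]
  constructor
  · rintro ⟨b, hb, rfl⟩; simpa using hb
  · rintro ⟨h1, h2⟩; exact ⟨i - (s+1), h2, by omega⟩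

lemma mem_down {s m i : ℕ} {B : Finset ℕ} (hB : B ⊆ Finset.Ico (s+1) m) :
    i ∈ down s B ↔ i + (s+1) ∈ B := by
  rw [down, Finset.mem_image]
  constructor
  · rintro ⟨b, hb, rfl⟩
    have := Finset.mem_Ico.1 (hB hb)
    have : b - (s+1) + (s+1) = b := by omega
    rwa [this]
  · intro h; exact ⟨i + (s+1), h, by omega⟩

lemma up_inj (s : ℕ) : Function.Injective (up s) := by
  intro B B' h
  have : ∀ C C' : Finset ℕ, up s C = up s C' → C ⊆ C' := by
    intro C C' hCC i hi
    have : i + (s+1) ∈ up s C := mem_up.2 ⟨by omega, by simpa using hi⟩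
    rw [hCC] at this
    obtain ⟨h1, h2⟩ := mem_up.1 this
    simpa using h2
  exact subset_antisymm (this B B' h) (this B' B h.symm)

lemma down_up (s : ℕ) (B : Finset ℕ) : down s (up s B) = B := by
  rw [up, down, Finset.image_image]
  have : ((fun i => i - (s+1)) ∘ (· + (s+1))) = id := by funext i; simp
  rw [this, Finset.image_id]

lemma up_down {s m : ℕ} {B : Finset ℕ} (hB : B ⊆ Finset.Ico (s+1) m) :
    up s (down s B) = B := by
  ext i
  rw [mem_up]
  constructor
  · rintro ⟨h1, h2⟩
    rw [mem_down hB] at h2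
    have h3 : i - (s+1) + (s+1) = i := by omega
    rwa [h3] at h2
  · intro hi
    have h1 := (Finset.mem_Ico.1 (hB hi)).1
    refine ⟨h1, ?_⟩
    rw [mem_down hB]
    have h3 : i - (s+1) + (s+1) = i := by omega
    rwa [h3]

lemma up_subset_gapI {n s : ℕ} {S : Finset ℕ} {B : Finset ℕ}
    (hB : B ⊆ Finset.range (nxt n S s - (s+1))) : up s B ⊆ gapI n S s := by
  intro i hi
  obtain ⟨h1, h2⟩ := mem_up.1 hi
  have := Finset.mem_range.1 (hB h2)
  rw [gapI, Finset.mem_Ico]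
  omega

lemma down_subset_range {n s : ℕ} {S : Finset ℕ} {B : Finset ℕ} (hB : B ⊆ gapI n S s) :
    down s B ⊆ Finset.range (nxt n S s - (s+1)) := by
  intro i hi
  rw [mem_down hB] at hi
  have := Finset.mem_Ico.1 (hB hi)
  rw [Finset.mem_range]
  omega

lemma zero_not_mem_gapI {n s : ℕ} {S : Finset ℕ} : 0 ∉ gapI n S s := by
  rw [gapI, Finset.mem_Ico]; omega

/-! ### The block containing 0 -/

noncomputable def blk0 (P : Finset (Finset ℕ)) : Finset ℕ :=
  (P.filter fun B => 0 ∈ B).sup id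

lemma blk0_eq {n : ℕ} {P : Finset (Finset ℕ)} (hP : P ∈ NC n) {B : Finset ℕ}
    (hB : B ∈ P) (h0 : 0 ∈ B) : blk0 P = B := by
  classical
  obtain ⟨⟨-, hdisj, -⟩, -⟩ := mem_NC.1 hP
  have : P.filter (fun B => 0 ∈ B) = {B} := by
    ext C
    rw [Finset.mem_filter, Finset.mem_singleton]
    constructor
    · rintro ⟨hC, hC0⟩
      by_contra hne
      exact absurd (Finset.disjoint_left.1 (hdisj C hC B hB hne) hC0) (by simpa using h0)
    · rintro rfl; exact ⟨hB, h0⟩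
  rw [blk0, this, Finset.sup_singleton, id]

/-! ### The glueing map Phi -/

def Phi (S : Finset ℕ) (q : ∀ s ∈ S, Finset (Finset ℕ)) : Finset (Finset ℕ) :=
  insert S (S.attach.biUnion fun s => (q s.1 s.2).image (up s.1))

section PhiLemmas

variable {n : ℕ} {S : Finset ℕ} {q : ∀ s ∈ S, Finset (Finset ℕ)}

lemma mem_Phi {C : Finset ℕ} :
    C ∈ Phi S q ↔ C = S ∨ ∃ (s : ℕ) (hs : s ∈ S), ∃ B ∈ q s hs, C = up s B := by
  rw [Phi, Finset.mem_insert]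
  apply or_congr Iff.rfl
  rw [Finset.mem_biUnion]
  constructor
  · rintro ⟨⟨s, hs⟩, -, hC⟩
    obtain ⟨B, hB, rfl⟩ := Finset.mem_image.1 hC
    exact ⟨s, hs, B, hB, rfl⟩
  · rintro ⟨s, hs, B, hB, rfl⟩
    exact ⟨⟨s, hs⟩, Finset.mem_attach _ _, Finset.mem_image.2 ⟨B, hB, rfl⟩⟩

variable (hq : ∀ s (hs : s ∈ S), q s hs ∈ NC (nxt n S s - (s+1)))
include hq

lemma up_block_sub {s : ℕ} {hs : s ∈ S} {B : Finset ℕ} (hB : B ∈ q s hs) :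
    up s B ⊆ gapI n S s :=
  up_subset_gapI (((mem_NC.1 (hq s hs)).1.1 B hB).2)

lemma up_block_nonempty {s : ℕ} {hs : s ∈ S} {B : Finset ℕ} (hB : B ∈ q s hs) :
    (up s B).Nonempty :=
  (((mem_NC.1 (hq s hs)).1.1 B hB).1).image _

lemma S_ne_up (h0 : 0 ∈ S) {s : ℕ} {hs : s ∈ S} {B : Finset ℕ} (hB : B ∈ q s hs) :
    S ≠ up s B := by
  intro h
  have : 0 ∈ up s B := h ▸ h0
  have := (mem_up.1 this).1
  omega

lemma Phi_mem_NC (h0 : 0 ∈ S) (hSr : S ⊆ Finset.range n) : Phi S q ∈ NC n := by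
  refine mem_NC.2 ⟨⟨?_, ?_, ?_⟩, ?_⟩
  · -- nonempty and in range
    intro B hB
    rcases mem_Phi.1 hB with rfl | ⟨s, hs, B', hB', rfl⟩
    · exact ⟨⟨0, h0⟩, hSr⟩
    · exact ⟨up_block_nonempty hq hB',
        (up_block_sub hq hB').trans (gapI_subset_range S)⟩
  · -- pairwise disjoint
    intro B₁ h₁ B₂ h₂ hne
    rcases mem_Phi.1 h₁ with rfl | ⟨s, hs, C, hC, rfl⟩ <;>
      rcases mem_Phi.1 h₂ with rfl | ⟨s', hs', C', hC', rfl⟩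
    · exact absurd rfl hne
    · exact Finset.disjoint_left.2 fun x hxS hxU =>
        not_mem_gapI_of_mem hxS (up_block_sub hq hC' hxU)
    · exact Finset.disjoint_right.2 fun x hxS hxU =>
        not_mem_gapI_of_mem hxS (up_block_sub hq hC hxU)
    · by_cases hss : s = s'
      · subst hss
        have hCC : C ≠ C' := fun h => hne (by rw [h])
        have hd := (mem_NC.1 (hq s hs)).1.2.1 C hC C' hC' hCC
        refine Finset.disjoint_left.2 fun x hx hx' => ?_
        obtain ⟨ha, hb⟩ := mem_up.1 hx
        obtain ⟨ha', hb'⟩ := mem_up.1 hx'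
        exact Finset.disjoint_left.1 hd hb hb'
      · exact Finset.disjoint_of_subset_left (up_block_sub hq hC)
          (Finset.disjoint_of_subset_right (up_block_sub hq hC')
            (gapI_disjoint hs hs' hss))
  · -- cover
    intro i hi
    rw [Finset.mem_range] at hi
    by_cases hiS : i ∈ S
    · exact ⟨S, mem_Phi.2 (Or.inl rfl), hiS⟩
    · obtain ⟨s, hs, hig⟩ := mem_gapI_exists h0 hi hiS
      obtain ⟨h1, h2⟩ := Finset.mem_Ico.1 hig
      obtain ⟨B, hB, hiB⟩ := (mem_NC.1 (hq s hs)).1.2.2 (i - (s+1))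
        (Finset.mem_range.2 (by omega))
      exact ⟨up s B, mem_Phi.2 (Or.inr ⟨s, hs, B, hB, rfl⟩), mem_up.2 ⟨h1, hiB⟩⟩
  · -- noncrossing
    intro B₁ h₁ B₂ h₂ hne p hp qq hqq r hr t ht
    rintro ⟨hpq, hqr, hrt⟩
    rcases mem_Phi.1 h₁ with rfl | ⟨s, hs, C, hC, rfl⟩ <;>
      rcases mem_Phi.1 h₂ with rfl | ⟨s', hs', C', hC', rfl⟩
    · exact absurd rfl hne
    · -- B₁ = S, B₂ in gap s'
      obtain ⟨hq1, hq2⟩ := Finset.mem_Ico.1 (up_block_sub hq hC' hqq)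
      obtain ⟨ht1, ht2⟩ := Finset.mem_Ico.1 (up_block_sub hq hC' ht)
      have h9 := nxt_le (n := n) hr (show s' < r by omega)
      omega
    · -- B₁ in gap s, B₂ = S
      obtain ⟨hp1, hp2⟩ := Finset.mem_Ico.1 (up_block_sub hq hC hp)
      obtain ⟨hr1, hr2⟩ := Finset.mem_Ico.1 (up_block_sub hq hC hr)
      have h9 := nxt_le (n := n) hqq (show s < qq by omega)
      omega
    · by_cases hss : s = s'
      · subst hss
        have hCC : C ≠ C' := fun h => hne (by rw [h])
        obtain ⟨hp1, hp2⟩ := mem_up.1 hp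
        obtain ⟨hq1, hq2⟩ := mem_up.1 hqq
        obtain ⟨hr1, hr2⟩ := mem_up.1 hr
        obtain ⟨ht1, ht2⟩ := mem_up.1 ht
        exact (mem_NC.1 (hq s hs)).2 C hC C' hC' hCC _ hp2 _ hq2 _ hr2 _ ht2
          ⟨by omega, by omega, by omega⟩
      · obtain ⟨hp1, hp2⟩ := Finset.mem_Ico.1 (up_block_sub hq hC hp)
        obtain ⟨hr1, hr2⟩ := Finset.mem_Ico.1 (up_block_sub hq hC hr)
        obtain ⟨hq1, hq2⟩ := Finset.mem_Ico.1 (up_block_sub hq hC' hqq)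
        obtain ⟨ht1, ht2⟩ := Finset.mem_Ico.1 (up_block_sub hq hC' ht)
        rcases lt_or_gt_of_ne hss with h | h
        · have : nxt n S s ≤ s' := nxt_le hs' h
          omega
        · have : nxt n S s' ≤ s := nxt_le hs h
          omega

lemma prod_Phi {A : Type*} [CommRing A] (h0 : 0 ∈ S) (f : Finset ℕ → A) :
    ∏ B ∈ Phi S q, f B = f S * ∏ s ∈ S.attach, ∏ B ∈ q s.1 s.2, f (up s.1 B) := by
  rw [Phi, Finset.prod_insert, Finset.prod_biUnion]
  · congr 1
    apply Finset.prod_congr rfl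
    intro s _
    rw [Finset.prod_image]
    intro B _ B' _ h
    exact up_inj s.1 h
  · -- pairwise disjoint families
    intro s hs s' hs' hss
    refine Finset.disjoint_left.2 fun C hC hC' => ?_
    obtain ⟨B, hB, rfl⟩ := Finset.mem_image.1 hC
    obtain ⟨B', hB', hBB⟩ := Finset.mem_image.1 hC'
    have hne : (up s.1 B).Nonempty := up_block_nonempty hq hB
    have h1 : up s.1 B ⊆ gapI n S s.1 := up_block_sub hq hB
    have h2 : up s.1 B ⊆ gapI n S s'.1 := hBB ▸ up_block_sub hq hB'
    have hss1 : s.1 ≠ s'.1 := fun h => hss (Subtype.ext h)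
    obtain ⟨x, hx⟩ := hne
    exact Finset.disjoint_left.1 (gapI_disjoint s.2 s'.2 hss1) (h1 hx) (h2 hx)
  · -- S not in the union
    intro hmem
    rw [Finset.mem_biUnion] at hmem
    obtain ⟨s, -, hC⟩ := hmem
    obtain ⟨B, hB, hBS⟩ := Finset.mem_image.1 hC
    exact S_ne_up hq h0 hB hBS.symm

end PhiLemmas

/-! ### The splitting map Psi -/

lemma block_subset_gap {n : ℕ} {P : Finset (Finset ℕ)} (hP : P ∈ NC n) {S : Finset ℕ}
    (hSP : S ∈ P) (h0 : 0 ∈ S) {s : ℕ} (hs : s ∈ S) {B : Finset ℕ} (hBP : B ∈ P)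
    (hBS : B ≠ S) {x : ℕ} (hx : x ∈ B) (hxg : x ∈ gapI n S s) : B ⊆ gapI n S s := by
  obtain ⟨⟨h1, h2, h3⟩, hnc⟩ := mem_NC.1 hP
  obtain ⟨hx1, hx2⟩ := Finset.mem_Ico.1 hxg
  intro y hy
  have hyS : y ∉ S := Finset.disjoint_left.1 (h2 B hBP S hSP hBS) hy
  rw [gapI, Finset.mem_Ico]
  by_contra hcon
  push_neg at hcon
  rcases Nat.lt_or_ge y (s+1) with hys | hyn
  · -- y ≤ s
    have hy0 : y ≠ 0 := fun h => hyS (h ▸ h0)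
    have hys' : y ≠ s := fun h => hyS (h ▸ hs)
    exact hnc S hSP B hBP (Ne.symm hBS) 0 h0 y hy s hs x hx
      ⟨by omega, by omega, by omega⟩
  · -- nxt ≤ y
    have hyx := hcon hyn
    have hyn' : y < n := Finset.mem_range.1 ((h1 B hBP).2 hy)
    have hnn : nxt n S s ≠ n := by omega
    have hnS : nxt n S s ∈ S := nxt_mem hnn
    have hyne : y ≠ nxt n S s := fun h => hyS (h ▸ hnS)
    exact hnc S hSP B hBP (Ne.symm hBS) s hs x hx (nxt n S s) hnS y hy
      ⟨by omega, by omega, by omega⟩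

open scoped Classical in
noncomputable def Psi (n : ℕ) (P : Finset (Finset ℕ)) :
    Σ S : Finset ℕ, ∀ s ∈ S, Finset (Finset ℕ) :=
  ⟨blk0 P, fun s _ => (P.filter fun B => B.Nonempty ∧ B ⊆ gapI n (blk0 P) s).image (down s)⟩

lemma gapRestrict_mem_NC {n : ℕ} {P : Finset (Finset ℕ)} (hP : P ∈ NC n) {S : Finset ℕ}
    (hSP : S ∈ P) (h0 : 0 ∈ S) {s : ℕ} (hs : s ∈ S) :
    ((P.filter fun B => B.Nonempty ∧ B ⊆ gapI n S s).image (down s))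
      ∈ NC (nxt n S s - (s+1)) := by
  classical
  obtain ⟨⟨h1, h2, h3⟩, hnc⟩ := mem_NC.1 hP
  have hmem : ∀ C, C ∈ (P.filter fun B => B.Nonempty ∧ B ⊆ gapI n S s).image (down s) ↔
      ∃ B, (B ∈ P ∧ B.Nonempty ∧ B ⊆ gapI n S s) ∧ C = down s B := by
    intro C
    simp only [Finset.mem_image, Finset.mem_filter]
    constructor
    · rintro ⟨B, ⟨hB1, hB2, hB3⟩, rfl⟩; exact ⟨B, ⟨hB1, hB2, hB3⟩, rfl⟩
    · rintro ⟨B, ⟨hB1, hB2, hB3⟩, rfl⟩; exact ⟨B, ⟨hB1, hB2, hB3⟩, rfl⟩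
  refine mem_NC.2 ⟨⟨?_, ?_, ?_⟩, ?_⟩
  · intro C hC
    obtain ⟨B, ⟨hB1, hB2, hB3⟩, rfl⟩ := (hmem C).1 hC
    exact ⟨hB2.image _, down_subset_range hB3⟩
  · intro C₁ hC₁ C₂ hC₂ hne
    obtain ⟨B₁, ⟨h11, h12, h13⟩, rfl⟩ := (hmem C₁).1 hC₁
    obtain ⟨B₂, ⟨h21, h22, h23⟩, rfl⟩ := (hmem C₂).1 hC₂
    have hBne : B₁ ≠ B₂ := by
      rintro rfl; exact hne rfl
    have hd := h2 B₁ h11 B₂ h21 hBne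
    refine Finset.disjoint_left.2 fun i hi hi' => ?_
    rw [mem_down h13] at hi
    rw [mem_down h23] at hi'
    exact Finset.disjoint_left.1 hd hi hi'
  · intro i hi
    rw [Finset.mem_range] at hi
    have hig : i + (s+1) ∈ gapI n S s := by rw [gapI, Finset.mem_Ico]; omega
    have hin : i + (s+1) < n := Finset.mem_range.1 (gapI_subset_range S hig)
    obtain ⟨B, hBP, hiB⟩ := h3 (i + (s+1)) (Finset.mem_range.2 hin)
    have hBS : B ≠ S := by
      rintro rfl
      exact not_mem_gapI_of_mem hiB hig
    have hBsub : B ⊆ gapI n S s := block_subset_gap hP hSP h0 hs hBP hBS hiB hig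
    refine ⟨down s B, (hmem _).2 ⟨B, ⟨hBP, ⟨_, hiB⟩, hBsub⟩, rfl⟩, ?_⟩
    rw [mem_down hBsub]
    exact hiB
  · intro C₁ hC₁ C₂ hC₂ hne p hp qq hqq r hr t ht
    rintro ⟨hpq, hqr, hrt⟩
    obtain ⟨B₁, ⟨h11, h12, h13⟩, rfl⟩ := (hmem C₁).1 hC₁
    obtain ⟨B₂, ⟨h21, h22, h23⟩, rfl⟩ := (hmem C₂).1 hC₂
    have hBne : B₁ ≠ B₂ := by rintro rfl; exact hne rfl
    rw [mem_down h13] at hp hr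
    rw [mem_down h23] at hqq ht
    exact hnc B₁ h11 B₂ h21 hBne _ hp _ hqq _ hr _ ht ⟨by omega, by omega, by omega⟩

lemma Psi_Phi {n : ℕ} {S : Finset ℕ} {q : ∀ s ∈ S, Finset (Finset ℕ)}
    (hq : ∀ s (hs : s ∈ S), q s hs ∈ NC (nxt n S s - (s+1)))
    (h0 : 0 ∈ S) (hSr : S ⊆ Finset.range n) : Psi n (Phi S q) = ⟨S, q⟩ := by
  classical
  have hmem : Phi S q ∈ NC n := Phi_mem_NC hq h0 hSr
  have hb : blk0 (Phi S q) = S := blk0_eq hmem (mem_Phi.2 (Or.inl rfl)) h0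
  rw [Psi]
  rw [show blk0 (Phi S q) = S from hb]
  apply congrArg (Sigma.mk S)
  funext s hs
  have key : (Phi S q).filter (fun B => B.Nonempty ∧ B ⊆ gapI n S s) =
      (q s hs).image (up s) := by
    ext C
    rw [Finset.mem_filter, Finset.mem_image]
    constructor
    · rintro ⟨hC, hCne, hCsub⟩
      rcases mem_Phi.1 hC with rfl | ⟨s', hs', B, hB, rfl⟩
      · exact absurd (hCsub h0) zero_not_mem_gapI
      · by_cases hss : s' = s
        · subst hss
          exact ⟨B, hB, rfl⟩
        · obtain ⟨x, hx⟩ := hCne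
          exact absurd (Finset.disjoint_left.1 (gapI_disjoint hs' hs hss)
            (up_block_sub hq hB hx) (hCsub hx)) (fun h => h)
    · rintro ⟨B, hB, rfl⟩
      exact ⟨mem_Phi.2 (Or.inr ⟨s, hs, B, hB, rfl⟩), up_block_nonempty hq hB,
        up_block_sub hq hB⟩
  rw [key, Finset.image_image]
  have : (down s ∘ up s) = id := by
    funext B
    exact down_up s B
  rw [this, Finset.image_id]

lemma Phi_Psi {n : ℕ} {P : Finset (Finset ℕ)} (hn : 0 < n) (hP : P ∈ NC n) :
    Phi (Psi n P).1 (Psi n P).2 = P := by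
  classical
  obtain ⟨⟨h1, h2, h3⟩, hnc⟩ := mem_NC.1 hP
  obtain ⟨B₀, hB₀, h0B⟩ := h3 0 (Finset.mem_range.2 hn)
  have hb : blk0 P = B₀ := blk0_eq hP hB₀ h0B
  ext C
  rw [mem_Phi]
  simp only [Psi, hb]
  constructor
  · rintro (rfl | ⟨s, hs, B, hB, rfl⟩)
    · exact hB₀
    · obtain ⟨B', hB', rfl⟩ := Finset.mem_image.1 hB
      obtain ⟨hB'P, hB'ne, hB'sub⟩ := Finset.mem_filter.1 hB'
      rwa [up_down hB'sub]
  · intro hC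
    by_cases h0C : 0 ∈ C
    · left
      rw [← blk0_eq hP hC h0C, hb]
    · right
      have hCB₀ : C ≠ B₀ := fun h => h0C (h ▸ h0B)
      obtain ⟨x, hx⟩ := (h1 C hC).1
      have hxB₀ : x ∉ B₀ := Finset.disjoint_left.1 (h2 C hC B₀ hB₀ hCB₀) hx
      have hxn : x < n := Finset.mem_range.1 ((h1 C hC).2 hx)
      obtain ⟨s, hs, hxg⟩ := mem_gapI_exists h0B hxn hxB₀
      have hCsub : C ⊆ gapI n B₀ s := block_subset_gap hP hB₀ h0B hs hC hCB₀ hx hxg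
      refine ⟨s, hs, down s C, Finset.mem_image.2 ⟨C, Finset.mem_filter.2
        ⟨hC, ⟨x, hx⟩, hCsub⟩, rfl⟩, (up_down hCsub).symm⟩

lemma Psi_mem {n : ℕ} {P : Finset (Finset ℕ)} (hn : 0 < n) (hP : P ∈ NC n) :
    Psi n P ∈ ((Finset.range n).powerset.filter (fun S => 0 ∈ S)).sigma
      (fun S => S.pi (fun s => NC (nxt n S s - (s+1)))) := by
  classical
  obtain ⟨⟨h1, h2, h3⟩, hnc⟩ := mem_NC.1 hP
  obtain ⟨B₀, hB₀, h0B⟩ := h3 0 (Finset.mem_range.2 hn)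
  have hb : blk0 P = B₀ := blk0_eq hP hB₀ h0B
  rw [Finset.mem_sigma]
  constructor
  · rw [Finset.mem_filter, Finset.mem_powerset]
    show blk0 P ⊆ Finset.range n ∧ 0 ∈ blk0 P
    rw [hb]
    exact ⟨(h1 B₀ hB₀).2, h0B⟩
  · rw [Finset.mem_pi]
    intro s hs
    have hs' : s ∈ B₀ := by
      have h' : s ∈ blk0 P := hs
      rwa [hb] at h'
    show ((P.filter fun B => B.Nonempty ∧ B ⊆ gapI n (blk0 P) s).image (down s))
      ∈ NC (nxt n (blk0 P) s - (s+1))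
    rw [hb]
    exact gapRestrict_mem_NC hP hB₀ h0B hs'

lemma key_lemma {A : Type*} [CommRing A] (κ : Word → A) (w : Word) (hw : w ≠ []) :
    (∑ S ∈ (Finset.range w.length).powerset.filter (fun S => 0 ∈ S),
      κ (subword w S) * ∏ s ∈ S, ∑ Q ∈ NC (gapAfter w S s).length,
        ∏ B ∈ Q, κ (subword (gapAfter w S s) B))
    = ∑ P ∈ NC w.length, ∏ B ∈ P, κ (subword w B) := by
  classical
  have hn : 0 < w.length := List.length_pos_iff.2 hw
  calc
    (∑ S ∈ (Finset.range w.length).powerset.filter (fun S => 0 ∈ S),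
      κ (subword w S) * ∏ s ∈ S, ∑ Q ∈ NC (gapAfter w S s).length,
        ∏ B ∈ Q, κ (subword (gapAfter w S s) B))
      = ∑ S ∈ (Finset.range w.length).powerset.filter (fun S => 0 ∈ S),
          ∑ p ∈ S.pi (fun s => NC (nxt w.length S s - (s+1))),
            κ (subword w S) * ∏ x ∈ S.attach,
              ∏ B ∈ p x.1 x.2, κ (subword (gapAfter w S x.1) B) := by
        apply Finset.sum_congr rfl
        intro S hS
        obtain ⟨hSr, h0⟩ := Finset.mem_filter.1 hS
        rw [Finset.mem_powerset] at hSr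
        have hgl : ∀ s ∈ S, (gapAfter w S s).length = nxt w.length S s - (s+1) :=
          fun s hs => gapAfter_length S (Finset.mem_range.1 (hSr hs))
        rw [show (∏ s ∈ S, ∑ Q ∈ NC (gapAfter w S s).length,
              ∏ B ∈ Q, κ (subword (gapAfter w S s) B))
            = ∏ s ∈ S, ∑ Q ∈ NC (nxt w.length S s - (s+1)),
              ∏ B ∈ Q, κ (subword (gapAfter w S s) B) from
          Finset.prod_congr rfl fun s hs => by rw [hgl s hs]]
        rw [Finset.prod_sum, Finset.mul_sum]
    _ = ∑ x ∈ ((Finset.range w.length).powerset.filter (fun S => 0 ∈ S)).sigma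
          (fun S => S.pi (fun s => NC (nxt w.length S s - (s+1)))),
            κ (subword w x.1) * ∏ s ∈ x.1.attach,
              ∏ B ∈ x.2 s.1 s.2, κ (subword (gapAfter w x.1 s.1) B) :=
        Finset.sum_sigma' _ _ _
    _ = ∑ P ∈ NC w.length, ∏ B ∈ P, κ (subword w B) := by
        apply Finset.sum_nbij' (i := fun x => Phi x.1 x.2) (j := Psi w.length)
        · -- maps into NC
          rintro ⟨S, q⟩ hx
          obtain ⟨hS, hq⟩ := Finset.mem_sigma.1 hx
          obtain ⟨hSr, h0⟩ := Finset.mem_filter.1 hS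
          rw [Finset.mem_powerset] at hSr
          exact Phi_mem_NC (Finset.mem_pi.1 hq) h0 hSr
        · -- maps into sigma
          intro P hP
          exact Psi_mem hn hP
        · -- left inverse
          rintro ⟨S, q⟩ hx
          obtain ⟨hS, hq⟩ := Finset.mem_sigma.1 hx
          obtain ⟨hSr, h0⟩ := Finset.mem_filter.1 hS
          rw [Finset.mem_powerset] at hSr
          exact Psi_Phi (Finset.mem_pi.1 hq) h0 hSr
        · -- right inverse
          intro P hP
          exact Phi_Psi hn hP
        · -- values agree
          rintro ⟨S, q⟩ hx
          obtain ⟨hS, hqpi⟩ := Finset.mem_sigma.1 hx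
          obtain ⟨hSr, h0⟩ := Finset.mem_filter.1 hS
          rw [Finset.mem_powerset] at hSr
          have hq := Finset.mem_pi.1 hqpi
          rw [prod_Phi hq h0 (fun B => κ (subword w B))]
          congr 1
          apply Finset.prod_congr rfl
          intro s _
          apply Finset.prod_congr rfl
          intro B hB
          congr 1
          rw [subword_gapAfter (Finset.mem_range.1 (hSr s.2))]
          · rfl
          · intro b hb
            rw [gapAfter_length S (Finset.mem_range.1 (hSr s.2))]
            exact Finset.mem_range.1 (((mem_NC.1 (hq s.1 s.2)).1.1 B hB).2 hb)


/-- free moment–cumulant relations via non-crossing partitions.  If `κ ∈ G^0`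
is the free cumulant series of `m ∈ G^1`, i.e., `m = 1 + κ(x m(x))`, then for every nonempty
word `w` one has `m(w) = Σ_{π ∈ NC(|w|)} ∏_{B ∈ π} κ(w_B)`, where `w_B` is the subword of
`w` at the positions of the block `B`. -/
theorem stmt14 [Field A] [CharZero A] (m κ : Word → A)
    (hm : m [] = 1) (hκ : κ [] = 0) (hmc : ∀ w, m w = one w + subst κ m w)
    (w : Word) (hw : w ≠ []) :
    m w = ∑ P ∈ NC w.length, ∏ B ∈ P, κ (subword w B) := by
  classical
  suffices H : ∀ N, ∀ w : Word, w.length ≤ N →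
      m w = ∑ P ∈ NC w.length, ∏ B ∈ P, κ (subword w B) from H w.length w le_rfl
  intro N
  induction N with
  | zero =>
    intro w hw0
    have : w = [] := List.length_eq_zero_iff.1 (Nat.le_zero.1 hw0)
    subst this
    rw [List.length_nil, NC_zero, Finset.sum_singleton, Finset.prod_empty]
    exact hm
  | succ N ih =>
    intro w hwN
    by_cases hwe : w = []
    · subst hwe
      rw [List.length_nil, NC_zero, Finset.sum_singleton, Finset.prod_empty]
      exact hm
    · rw [hmc w]
      simp only [one, subst, if_neg hwe, zero_add]
      rw [← key_lemma κ w hwe]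
      apply Finset.sum_congr rfl
      intro S hS
      obtain ⟨hSr, h0⟩ := Finset.mem_filter.1 hS
      rw [Finset.mem_powerset] at hSr
      congr 1
      apply Finset.prod_congr rfl
      intro s hs
      apply ih
      have hsn : s < w.length := Finset.mem_range.1 (hSr hs)
      rw [gapAfter_length S hsn]
      have := nxt_le_n w.length S s
      omega
end

section
/- Monotone flow equation: let A be a field of characteristic zero, let h ∈ G^0, and for t ∈ A define the series M_t := 1 + Σ_{n≥1} (t^n/n!)·R^{(n−1)}(h), where R^{(0)}(h) := h and R^{(n)}(h) := R^{(n−1)}(h) ◁ h (on each word w this sum is finite since R^{(n−1)}(h)(w) = 0 whenever n exceeds the length of w, so each coefficient M_t(w) is a polynomial function of t). Then M_0 = 1, M_t ∈ G^1, and the coefficient-wise t-derivative satisfies d/dt M_t = M_t · h(x M_t(x)) = h + (M_t − 1) ◁ h, where h(x M_t(x)) is the shifted substitution of M_t into h. -/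
variable {A : Type*}

/-- Iterated right pre-Lie powers: `R h 0 = h = R^{(0)}(h)` and
`R h n = R h (n-1) ◁ h = R^{(n)}(h)`. -/
def R [CommRing A] (h : Word → A) : ℕ → (Word → A)
  | 0 => h
  | n + 1 => tri (R h n) h

/-- The coefficient of `M_t := 1 + Σ_{n≥1} (t^n/n!)·R^{(n−1)}(h)` on a word `w`, as a
polynomial in the formal parameter `t`; the sum truncates at `n = |w|` since
`R^{(n−1)}(h)(w) = 0` for `n > |w|`. -/
noncomputable def Mpoly [Field A] (h : Word → A) (w : Word) : Polynomial A :=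
  Polynomial.C (one w) +
    ∑ n ∈ Finset.Icc 1 w.length,
      Polynomial.C (R h (n - 1) w / (n.factorial : A)) * Polynomial.X ^ n

namespace S15
open Finset List

/-! ### List-level lemmas about `subword` and `gapAfter` -/

lemma enumFrom_cons' {α} (a : α) (u : List α) (m : ℕ) :
    ((a :: u).zipIdx m).map Prod.swap = (m, a) :: (u.zipIdx (m + 1)).map Prod.swap := rfl

lemma enum_cons' {α} (a : α) (u : List α) :
    ((a :: u).zipIdx).map Prod.swap = (0, a) :: (u.zipIdx 1).map Prod.swap := rfl

lemma fst_lt_of_mem_enum {α} {l : List α} {p : ℕ × α} (hp : p ∈ l.zipIdx.map Prod.swap) : p.1 < l.length := by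
  rcases p with ⟨i, a⟩
  obtain ⟨⟨x, j⟩, hq, he⟩ := List.mem_map.mp hp
  simp only [Prod.swap, Prod.mk.injEq] at he
  obtain ⟨rfl, rfl⟩ := he
  have := List.mk_mem_zipIdx_iff_getElem?.mp hq
  exact (List.getElem?_eq_some_iff.mp this).1

lemma enumFrom_filter_snd {α} (u : List α) (m : ℕ) (q : ℕ → Bool) :
    (((u.zipIdx m).map Prod.swap).filter (fun p => q p.1)).map Prod.snd
      = ((u.zipIdx.map Prod.swap).filter (fun p => q (p.1 + m))).map Prod.snd := by
  induction u generalizing m q with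
  | nil => rfl
  | cons a u ih =>
    rw [enumFrom_cons', enum_cons']
    simp only [List.filter_cons]
    have h1 : (((u.zipIdx (m + 1)).map Prod.swap).filter (fun p => q p.1)).map Prod.snd
        = ((u.zipIdx.map Prod.swap).filter (fun p => q (p.1 + (m + 1)))).map Prod.snd := ih (m + 1) q
    have h2 : (((u.zipIdx 1).map Prod.swap).filter (fun p => q (p.1 + m))).map Prod.snd
        = ((u.zipIdx.map Prod.swap).filter (fun p => q (p.1 + 1 + m))).map Prod.snd := ih 1 (fun i => q (i + m))
    have h3 : ((u.zipIdx.map Prod.swap).filter (fun p => q (p.1 + (m + 1)))).map Prod.snd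
        = ((u.zipIdx.map Prod.swap).filter (fun p => q (p.1 + 1 + m))).map Prod.snd := by
      congr 1
      apply List.filter_congr
      intro p _
      congr 1
      omega
    by_cases hq : q m
    · simp only [hq, Nat.zero_add, if_pos]
      simp only [List.map_cons]
      rw [h1, h2, h3]
    · simp only [hq, Nat.zero_add]
      simp only [Bool.false_eq_true, if_neg, if_false]
      rw [h1, h2, h3]

lemma subword_nil (S : Finset ℕ) : subword [] S = [] := rfl

lemma subword_empty (w : Word) : subword w ∅ = [] := by
  unfold subword
  simp

lemma subword_congr (w : Word) (S T : Finset ℕ)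
    (h : ∀ i < w.length, (i ∈ S ↔ i ∈ T)) : subword w S = subword w T := by
  unfold subword
  congr 1
  apply List.filter_congr
  intro p hp
  exact decide_eq_decide.mpr (h p.1 (fst_lt_of_mem_enum hp))

lemma subword_cons (b : ℕ+) (u : Word) (S T : Finset ℕ)
    (hT : ∀ i, i ∈ T ↔ i + 1 ∈ S) :
    subword (b :: u) S = (if 0 ∈ S then [b] else []) ++ subword u T := by
  unfold subword
  rw [enum_cons']
  simp only [List.filter_cons]
  have h1 : (((u.zipIdx 1).map Prod.swap).filter (fun p => decide (p.1 ∈ S))).map Prod.snd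
      = ((u.zipIdx.map Prod.swap).filter (fun p => decide (p.1 + 1 ∈ S))).map Prod.snd :=
    enumFrom_filter_snd u 1 (fun i => decide (i ∈ S))
  have h2 : ((u.zipIdx.map Prod.swap).filter (fun p => decide (p.1 + 1 ∈ S))).map Prod.snd
      = ((u.zipIdx.map Prod.swap).filter (fun p => decide (p.1 ∈ T))).map Prod.snd := by
    congr 1
    apply List.filter_congr
    intro p _
    exact decide_eq_decide.mpr (hT p.1).symm
  by_cases h0 : 0 ∈ S
  · rw [if_pos (by simp [h0])]
    rw [List.map_cons, h1, h2, if_pos h0]; rfl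
  · rw [if_neg (by simp [h0])]
    rw [h1, h2, if_neg h0]; rfl

lemma subword_image_add (k : ℕ) (u : Word) (S : Finset ℕ) :
    subword u (S.image (· + k)) = subword (u.drop k) S := by
  induction k generalizing u with
  | zero =>
    simp only [Nat.add_zero, List.drop_zero]
    apply subword_congr
    intro i _
    simp
  | succ k ih =>
    cases u with
    | nil => rfl
    | cons b u =>
      rw [subword_cons b u (S.image (· + (k + 1))) (S.image (· + k))
        (by intro i; simp only [Finset.mem_image]; constructor
            · rintro ⟨j, hj, rfl⟩; exact ⟨j, hj, by omega⟩
            · rintro ⟨j, hj, hji⟩; exact ⟨j, hj, by omega⟩)]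
      have h0 : (0 : ℕ) ∉ S.image (· + (k + 1)) := by
        simp only [Finset.mem_image]
        rintro ⟨j, _, hj⟩; omega
      rw [if_neg h0, ih u, List.drop_succ_cons]
      rfl

lemma subword_range (u : Word) (k : ℕ) : subword u (Finset.range k) = u.take k := by
  induction u generalizing k with
  | nil => simp [subword_nil]
  | cons b u ih =>
    cases k with
    | zero =>
      rw [Finset.range_zero, subword_empty, List.take_zero]
    | succ k =>
      rw [subword_cons b u (Finset.range (k + 1)) (Finset.range k)
        (by intro i; simp only [Finset.mem_range]; omega)]
      rw [if_pos (by simp), ih k]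
      rfl

lemma gapAfter_nil (S : Finset ℕ) (s : ℕ) : gapAfter [] S s = [] := rfl

lemma gapAfter_cons_succ (b : ℕ+) (u : Word) (S T : Finset ℕ) (t : ℕ)
    (hT : ∀ i, i ∈ T ↔ i + 1 ∈ S) :
    gapAfter (b :: u) S (t + 1) = gapAfter u T t := by
  unfold gapAfter
  rw [enum_cons']
  simp only [List.filter_cons]
  have hhead : (decide (t + 1 < (0:ℕ) ∧ ∀ j ∈ S, j ≤ t + 1 ∨ (0:ℕ) < j)) = false := by
    simp
  rw [hhead]
  simp only [Bool.false_eq_true, if_false]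
  have h1 := enumFrom_filter_snd u 1
    (fun i => decide (t + 1 < i ∧ ∀ j ∈ S, j ≤ t + 1 ∨ i < j))
  rw [h1]
  congr 1
  apply List.filter_congr
  intro p _
  apply decide_eq_decide.mpr
  constructor
  · rintro ⟨hlt, hall⟩
    refine ⟨by omega, ?_⟩
    intro j hj
    have := hall (j + 1) ((hT j).mp hj)
    omega
  · rintro ⟨hlt, hall⟩
    refine ⟨by omega, ?_⟩
    intro j hj
    cases j with
    | zero => left; omega
    | succ j' =>
      have := hall j' ((hT j').mpr hj)
      omega

lemma gapAfter_image_add (k : ℕ) (u : Word) (S : Finset ℕ) (t : ℕ) :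
    gapAfter u (S.image (· + k)) (t + k) = gapAfter (u.drop k) S t := by
  induction k generalizing u with
  | zero =>
    simp only [Nat.add_zero, List.drop_zero]
    unfold gapAfter
    congr 1
    apply List.filter_congr
    intro p _
    apply decide_eq_decide.mpr
    constructor
    · rintro ⟨h1, h2⟩
      exact ⟨h1, fun j hj => h2 (j + 0) (Finset.mem_image.mpr ⟨j, hj, rfl⟩)⟩
    · rintro ⟨h1, h2⟩
      refine ⟨h1, ?_⟩
      intro j hj
      rcases Finset.mem_image.mp hj with ⟨j', hj', rfl⟩
      have := h2 j' hj'
      omega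
  | succ k ih =>
    cases u with
    | nil => simp [gapAfter_nil]
    | cons b u =>
      have : t + (k + 1) = (t + k) + 1 := by omega
      rw [this]
      rw [gapAfter_cons_succ b u (S.image (· + (k + 1))) (S.image (· + k)) (t + k)
        (by intro i; simp only [Finset.mem_image]; constructor
            · rintro ⟨j, hj, rfl⟩; exact ⟨j, hj, by omega⟩
            · rintro ⟨j, hj, hji⟩; exact ⟨j, hj, by omega⟩)]
      rw [ih u, List.drop_succ_cons]

lemma enum_filter_lt_take (u : Word) (k : ℕ) :
    ((u.zipIdx.map Prod.swap).filter (fun p => decide (p.1 < k))).map Prod.snd = u.take k := by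
  have : ∀ p : ℕ × ℕ+, (decide (p.1 < k)) = decide (p.1 ∈ Finset.range k) := by
    intro p; simp
  calc ((u.zipIdx.map Prod.swap).filter (fun p => decide (p.1 < k))).map Prod.snd
      = ((u.zipIdx.map Prod.swap).filter (fun p => decide (p.1 ∈ Finset.range k))).map Prod.snd := by
        congr 1; exact List.filter_congr (fun p _ => this p)
    _ = u.take k := subword_range u k

lemma gapAfter_cons_zero_take (b : ℕ+) (u : Word) (S : Finset ℕ) (k : ℕ)
    (hS : ∀ p < u.length, ((∀ j ∈ S, j ≤ 0 ∨ p + 1 < j) ↔ p < k)) :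
    gapAfter (b :: u) S 0 = u.take k := by
  unfold gapAfter
  rw [enum_cons']
  simp only [List.filter_cons]
  have hhead : (decide ((0:ℕ) < (0:ℕ) ∧ ∀ j ∈ S, j ≤ 0 ∨ (0:ℕ) < j)) = false := by
    simp
  rw [hhead]
  simp only [Bool.false_eq_true, if_false]
  rw [enumFrom_filter_snd u 1 (fun i => decide ((0:ℕ) < i ∧ ∀ j ∈ S, j ≤ 0 ∨ i < j))]
  rw [← enum_filter_lt_take u k]
  congr 1
  apply List.filter_congr
  intro p hp
  apply decide_eq_decide.mpr
  have hplt := fst_lt_of_mem_enum hp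
  constructor
  · rintro ⟨_, hall⟩
    exact (hS p.1 hplt).mp (by intro j hj; have := hall j hj; omega)
  · intro hpk
    refine ⟨by omega, ?_⟩
    intro j hj
    have := (hS p.1 hplt).mpr hpk j hj
    omega


open Finset List

/-! ### Per-term lemmas for the decomposition `S = insert 0 (S'.image (· + (k+1)))` -/

lemma hT_shift (k : ℕ) (S' : Finset ℕ) (i : ℕ) :
    i ∈ S'.image (· + k) ↔ i + 1 ∈ insert 0 (S'.image (· + (k + 1))) := by
  simp only [Finset.mem_image, Finset.mem_insert]
  constructor
  · rintro ⟨j, hj, rfl⟩; right; exact ⟨j, hj, by omega⟩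
  · rintro (h | ⟨j, hj, hji⟩)
    · omega
    · exact ⟨j, hj, by omega⟩

lemma subword_decomp (b : ℕ+) (u : Word) (k : ℕ) (S' : Finset ℕ) :
    subword (b :: u) (insert 0 (S'.image (· + (k + 1)))) = b :: subword (u.drop k) S' := by
  rw [subword_cons b u _ (S'.image (· + k)) (hT_shift k S')]
  rw [if_pos (Finset.mem_insert_self 0 _), subword_image_add]
  rfl

lemma gapAfter_decomp_zero (b : ℕ+) (u : Word) (k : ℕ) (S' : Finset ℕ) (h0 : 0 ∈ S') :
    gapAfter (b :: u) (insert 0 (S'.image (· + (k + 1)))) 0 = u.take k := by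
  apply gapAfter_cons_zero_take
  intro p _
  constructor
  · intro hall
    have := hall (0 + (k + 1)) (Finset.mem_insert_of_mem (Finset.mem_image_of_mem _ h0))
    omega
  · intro hpk j hj
    rcases Finset.mem_insert.mp hj with rfl | hj'
    · left; omega
    · rcases Finset.mem_image.mp hj' with ⟨s', _, rfl⟩
      right; omega

lemma gapAfter_decomp_elt (b : ℕ+) (u : Word) (k : ℕ) (S' : Finset ℕ) (s' : ℕ) :
    gapAfter (b :: u) (insert 0 (S'.image (· + (k + 1)))) (s' + (k + 1))
      = gapAfter (u.drop k) S' s' := by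
  have h1 : s' + (k + 1) = (s' + k) + 1 := by omega
  rw [h1, gapAfter_cons_succ b u _ (S'.image (· + k)) (s' + k) (hT_shift k S')]
  exact gapAfter_image_add k u S' s'

lemma prod_decomp [CommRing A] (g : Word → A) (b : ℕ+) (u : Word) (k : ℕ) (S' : Finset ℕ)
    (h0 : 0 ∈ S') :
    ∏ s ∈ insert 0 (S'.image (· + (k + 1))),
        g (gapAfter (b :: u) (insert 0 (S'.image (· + (k + 1)))) s)
      = g (u.take k) * ∏ s' ∈ S', g (gapAfter (u.drop k) S' s') := by
  have hnot : (0 : ℕ) ∉ S'.image (· + (k + 1)) := by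
    simp only [Finset.mem_image]; rintro ⟨j, _, hj⟩; omega
  rw [Finset.prod_insert hnot, gapAfter_decomp_zero b u k S' h0]
  congr 1
  rw [Finset.prod_image (by intro x _ y _ h; simp only at h; omega)]
  exact Finset.prod_congr rfl (fun s' _ => by rw [gapAfter_decomp_elt])

/-! ### The recursion for `subst` (L0) -/

lemma subst_cons [CommRing A] (f g : Word → A) (b : ℕ+) (u : Word) :
    subst f g (b :: u) = ∑ k ∈ Finset.range (u.length + 1),
      g (u.take k) * subst (fun v => f (b :: v)) g (u.drop k) := by
  rw [subst, if_neg (by simp)]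
  show ∑ S ∈ (Finset.range ((b :: u).length)).powerset.filter (fun S => 0 ∈ S),
      f (subword (b :: u) S) * ∏ s ∈ S, g (gapAfter (b :: u) S s) = _
  have hlen : (b :: u).length = u.length + 1 := rfl
  rw [hlen]
  set P := (Finset.range (u.length + 1)).powerset.filter (fun S => 0 ∈ S) with hP
  set term : Finset ℕ → A := fun S =>
    f (subword (b :: u) S) * ∏ s ∈ S, g (gapAfter (b :: u) S s) with hterm
  have h0P : ({0} : Finset ℕ) ∈ P := by
    rw [hP]
    simp only [Finset.mem_filter, Finset.mem_powerset]
    exact ⟨by intro x hx; simp at hx; simp [hx], Finset.mem_singleton_self 0⟩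
  have hsing : term {0} = f [b] * g u := by
    have h1 : subword (b :: u) {0} = [b] := by
      have hT : ∀ i : ℕ, i ∈ (∅ : Finset ℕ) ↔ i + 1 ∈ ({0} : Finset ℕ) := by
        intro i; simp
      rw [subword_cons b u {0} ∅ hT, if_pos (Finset.mem_singleton_self 0), subword_empty]
      simp
    have h2 : gapAfter (b :: u) {0} 0 = u := by
      have h3 := gapAfter_cons_zero_take b u {0} u.length
        (by intro p hp
            constructor
            · intro _; exact hp
            · intro _ j hj; simp only [Finset.mem_singleton] at hj; omega)
      rw [h3, List.take_length]
    simp only [hterm]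
    rw [h1, Finset.prod_singleton, h2]
  rw [← Finset.sum_erase_add P term h0P, hsing]
  rw [Finset.sum_range_succ]
  rw [List.drop_length, List.take_length]
  have hlast : subst (fun v => f (b :: v)) g [] = f [b] := by rw [subst, if_pos rfl]
  rw [hlast, mul_comm (g u) (f [b])]
  congr 1
  have hmain : ∀ k ∈ Finset.range u.length,
      g (u.take k) * subst (fun v => f (b :: v)) g (u.drop k)
      = ∑ S' ∈ (Finset.range (u.length - k)).powerset.filter (fun S => 0 ∈ S),
          g (u.take k) * (f (b :: subword (u.drop k) S')
            * ∏ s' ∈ S', g (gapAfter (u.drop k) S' s')) := by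
    intro k hk
    have hkn : k < u.length := Finset.mem_range.mp hk
    have hne : u.drop k ≠ [] := by
      intro h
      have h5 := List.length_drop (i := k) (l := u)
      rw [h] at h5
      simp only [List.length_nil] at h5
      omega
    rw [subst, if_neg hne, List.length_drop, Finset.mul_sum]
  rw [Finset.sum_congr rfl hmain]
  rw [Finset.sum_sigma' (Finset.range u.length)
    (fun k => (Finset.range (u.length - k)).powerset.filter (fun S => 0 ∈ S))
    (fun k S' => g (u.take k) * (f (b :: subword (u.drop k) S')
      * ∏ s' ∈ S', g (gapAfter (u.drop k) S' s')))]
  refine (Finset.sum_bij'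
    (i := fun (x : Σ _ : ℕ, Finset ℕ) _ => insert 0 (x.2.image (· + (x.1 + 1))))
    (j := fun (S : Finset ℕ) hS =>
      have hne : (S.erase 0).Nonempty := by
        apply Finset.nonempty_of_ne_empty
        intro h
        rcases (Finset.erase_eq_empty_iff S 0).mp h with h1 | h1
        · rw [hP] at hS
          simp only [Finset.mem_erase, Finset.mem_filter] at hS
          rw [h1] at hS
          exact absurd hS.2.2 (by simp)
        · rw [hP] at hS
          simp only [Finset.mem_erase] at hS
          exact hS.1 h1
      ⟨(S.erase 0).min' hne - 1, (S.erase 0).image (fun s => s - (S.erase 0).min' hne)⟩)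
    ?_ ?_ ?_ ?_ ?_).symm
  -- hi : sigma → subsets lands in target
  · rintro ⟨k, S'⟩ hx
    simp only [Finset.mem_sigma, Finset.mem_filter, Finset.mem_powerset, Finset.mem_range] at hx
    obtain ⟨hkn, hS'sub, h0S'⟩ := hx
    simp only [Finset.mem_erase, hP, Finset.mem_filter, Finset.mem_powerset]
    refine ⟨?_, ?_, Finset.mem_insert_self 0 _⟩
    · intro h
      have hmem : k + 1 ∈ insert 0 (S'.image (· + (k + 1))) :=
        Finset.mem_insert_of_mem (Finset.mem_image.mpr ⟨0, h0S', by omega⟩)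
      rw [h] at hmem
      simp at hmem
    · intro x hx
      rcases Finset.mem_insert.mp hx with rfl | hx'
      · simp
      · rcases Finset.mem_image.mp hx' with ⟨s', hs', rfl⟩
        have := Finset.mem_range.mp (hS'sub hs')
        simp only [Finset.mem_range]
        omega
  -- hj
  · intro S hS
    have hSne : S ≠ {0} := (Finset.mem_erase.mp hS).1
    have hSP : S ∈ P := (Finset.mem_erase.mp hS).2
    rw [hP] at hSP
    simp only [Finset.mem_filter, Finset.mem_powerset] at hSP
    obtain ⟨hSsub, h0S⟩ := hSP
    have hne0 : (S.erase 0).Nonempty := by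
      apply Finset.nonempty_of_ne_empty
      intro h
      rcases (Finset.erase_eq_empty_iff S 0).mp h with h1 | h1
      · rw [h1] at h0S; simp at h0S
      · exact hSne h1
    have key : (⟨(S.erase 0).min' hne0 - 1,
        (S.erase 0).image (fun s => s - (S.erase 0).min' hne0)⟩ : Σ _ : ℕ, Finset ℕ)
        ∈ (Finset.range u.length).sigma
          (fun k => (Finset.range (u.length - k)).powerset.filter (fun S => 0 ∈ S)) := by
      simp only [Finset.mem_sigma, Finset.mem_filter, Finset.mem_powerset, Finset.mem_range]
      have hmmem := Finset.min'_mem (S.erase 0) hne0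
      have hm0 : (S.erase 0).min' hne0 ≠ 0 := (Finset.mem_erase.mp hmmem).1
      have hmn : (S.erase 0).min' hne0 ≤ u.length := by
        have := Finset.mem_range.mp (hSsub (Finset.mem_erase.mp hmmem).2); omega
      refine ⟨by omega, ?_, ?_⟩
      · intro x hx
        rcases Finset.mem_image.mp hx with ⟨s, hs, rfl⟩
        have hsS : s ∈ S := (Finset.mem_erase.mp hs).2
        have hms : (S.erase 0).min' hne0 ≤ s := Finset.min'_le _ _ hs
        have := Finset.mem_range.mp (hSsub hsS)
        simp only [Finset.mem_range]
        omega
      · exact Finset.mem_image.mpr ⟨_, hmmem, by omega⟩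
    exact key
  -- left_inv : j (i x) = x
  · rintro ⟨k, S'⟩ hx
    simp only [Finset.mem_sigma, Finset.mem_filter, Finset.mem_powerset, Finset.mem_range] at hx
    obtain ⟨hkn, hS'sub, h0S'⟩ := hx
    have hnot : (0 : ℕ) ∉ S'.image (· + (k + 1)) := by
      simp only [Finset.mem_image]; rintro ⟨j, _, hj⟩; omega
    have herase : (insert 0 (S'.image (· + (k + 1)))).erase 0 = S'.image (· + (k + 1)) :=
      Finset.erase_insert hnot
    have hmin : ∀ (hne : ((insert 0 (S'.image (· + (k + 1)))).erase 0).Nonempty),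
        ((insert 0 (S'.image (· + (k + 1)))).erase 0).min' hne = k + 1 := by
      intro hne
      apply Nat.le_antisymm
      · apply Finset.min'_le
        rw [herase]
        exact Finset.mem_image.mpr ⟨0, h0S', by omega⟩
      · apply Finset.le_min'
        intro y hy
        rw [herase] at hy
        rcases Finset.mem_image.mp hy with ⟨s, _, rfl⟩
        omega
    simp only
    ext1
    · simp only
      rw [hmin]
      omega
    · simp only
      rw [hmin, herase, Finset.image_image, heq_iff_eq]
      ext x
      simp only [Finset.mem_image, Function.comp_apply]
      constructor
      · rintro ⟨s, hs, rfl⟩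
        have hss : s + (k + 1) - (k + 1) = s := by omega
        rw [hss]; exact hs
      · intro hx
        exact ⟨x, hx, by omega⟩
  -- right_inv : i (j S) = S
  · intro S hS
    have hSne : S ≠ {0} := (Finset.mem_erase.mp hS).1
    have hSP : S ∈ P := (Finset.mem_erase.mp hS).2
    rw [hP] at hSP
    simp only [Finset.mem_filter, Finset.mem_powerset] at hSP
    obtain ⟨hSsub, h0S⟩ := hSP
    have hne0 : (S.erase 0).Nonempty := by
      apply Finset.nonempty_of_ne_empty
      intro h
      rcases (Finset.erase_eq_empty_iff S 0).mp h with h1 | h1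
      · rw [h1] at h0S; simp at h0S
      · exact hSne h1
    have key : insert 0 (((S.erase 0).image (fun s => s - (S.erase 0).min' hne0)).image
        (· + ((S.erase 0).min' hne0 - 1 + 1))) = S := by
      have hmmem := Finset.min'_mem (S.erase 0) hne0
      have hm0 : (S.erase 0).min' hne0 ≠ 0 := (Finset.mem_erase.mp hmmem).1
      have h1 : (S.erase 0).min' hne0 - 1 + 1 = (S.erase 0).min' hne0 := by omega
      rw [h1, Finset.image_image]
      have h2 : (S.erase 0).image ((· + (S.erase 0).min' hne0) ∘ fun s => s - (S.erase 0).min' hne0)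
          = S.erase 0 := by
        ext x
        simp only [Finset.mem_image, Function.comp_apply]
        constructor
        · rintro ⟨s, hs, rfl⟩
          have hms : (S.erase 0).min' hne0 ≤ s := Finset.min'_le _ _ hs
          have hss : s - (S.erase 0).min' hne0 + (S.erase 0).min' hne0 = s := by omega
          rw [hss]; exact hs
        · intro hx
          have hmx : (S.erase 0).min' hne0 ≤ x := Finset.min'_le _ _ hx
          exact ⟨x, hx, by omega⟩
      rw [h2, Finset.insert_erase h0S]
    exact key
  -- term equality
  · rintro ⟨k, S'⟩ hx
    simp only [Finset.mem_sigma, Finset.mem_filter, Finset.mem_powerset, Finset.mem_range] at hx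
    obtain ⟨hkn, hS'sub, h0S'⟩ := hx
    simp only [hterm]
    rw [subword_decomp b u k S', prod_decomp g b u k S' h0S']
    ring


open Finset List

variable {A : Type*} [CommRing A]

lemma subst_nil (f g : Word → A) : subst f g [] = f [] := by rw [subst, if_pos rfl]

lemma subst_congr {f₁ f₂ : Word → A} (g : Word → A) (h : ∀ v, f₁ v = f₂ v) (w : Word) :
    subst f₁ g w = subst f₂ g w := by
  have : f₁ = f₂ := funext h
  rw [this]

lemma subst_add (f₁ f₂ g : Word → A) (w : Word) :
    subst (fun v => f₁ v + f₂ v) g w = subst f₁ g w + subst f₂ g w := by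
  rcases eq_or_ne w [] with rfl | hw
  · rw [subst_nil, subst_nil, subst_nil]
  · rw [subst, subst, subst, if_neg hw, if_neg hw, if_neg hw, ← Finset.sum_add_distrib]
    exact Finset.sum_congr rfl (fun S _ => by ring)

lemma subst_const_mul (c : A) (f g : Word → A) (w : Word) :
    subst (fun v => c * f v) g w = c * subst f g w := by
  rcases eq_or_ne w [] with rfl | hw
  · rw [subst_nil, subst_nil]
  · rw [subst, subst, if_neg hw, if_neg hw, Finset.mul_sum]
    exact Finset.sum_congr rfl (fun S _ => by ring)

lemma subst_one_aux (n : ℕ) : ∀ (f : Word → A) (w : Word), w.length ≤ n →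
    subst f one w = f w := by
  induction n with
  | zero =>
    intro f w hw
    have hwnil : w = [] := by
      cases w with
      | nil => rfl
      | cons b u => simp at hw
    rw [hwnil, subst_nil]
  | succ n ih =>
    intro f w hw
    cases w with
    | nil => rw [subst_nil]
    | cons b u =>
      rw [subst_cons]
      rw [Finset.sum_eq_single 0]
      · rw [List.take_zero, List.drop_zero]
        have hone : (one [] : A) = 1 := by rw [one, if_pos rfl]
        rw [hone, one_mul]
        exact ih (fun v => f (b :: v)) u (by simpa using hw)
      · intro k hk hk0
        have hkr := Finset.mem_range.mp hk
        have hne : u.take k ≠ [] := by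
          intro h
          have h1 : (u.take k).length = 0 := by rw [h]; rfl
          rw [List.length_take] at h1
          omega
        rw [one, if_neg hne, zero_mul]
      · intro h
        simp at h

lemma subst_one (f : Word → A) (w : Word) : subst f one w = f w :=
  subst_one_aux w.length f w le_rfl

lemma cauchy_one_left (f : Word → A) (w : Word) : cauchy one f w = f w := by
  rw [cauchy]
  rw [Finset.sum_eq_single 0]
  · rw [List.take_zero, List.drop_zero, one, if_pos rfl, one_mul]
  · intro k hk hk0
    have hkr := Finset.mem_range.mp hk
    have hne : w.take k ≠ [] := by
      intro h
      have h1 : (w.take k).length = 0 := by rw [h]; rfl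
      rw [List.length_take] at h1
      omega
    rw [one, if_neg hne, zero_mul]
  · intro h; simp at h

lemma cauchy_cons (p q : Word → A) (c : ℕ+) (v : Word) :
    cauchy p q (c :: v) = (∑ j ∈ Finset.range (v.length + 1),
      p (c :: v.take j) * q (v.drop j)) + p [] * q (c :: v) := by
  rw [cauchy]
  show ∑ j ∈ Finset.range (v.length + 1 + 1), p ((c :: v).take j) * q ((c :: v).drop j) = _
  rw [Finset.sum_range_succ']
  congr 1

lemma triangle_reindex {M : Type*} [AddCommMonoid M] (n : ℕ) (F : ℕ → ℕ → M) :
    ∑ k ∈ Finset.range (n + 1), ∑ r ∈ Finset.range (n - k + 1), F k (k + r)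
      = ∑ j ∈ Finset.range (n + 1), ∑ m ∈ Finset.range (j + 1), F m j := by
  rw [Finset.sum_sigma' (Finset.range (n + 1)) (fun k => Finset.range (n - k + 1))
    (fun k r => F k (k + r))]
  rw [Finset.sum_sigma' (Finset.range (n + 1)) (fun j => Finset.range (j + 1))
    (fun j m => F m j)]
  refine Finset.sum_bij' (i := fun (x : Σ _ : ℕ, ℕ) _ => (⟨x.1 + x.2, x.1⟩ : Σ _ : ℕ, ℕ))
    (j := fun (y : Σ _ : ℕ, ℕ) _ => (⟨y.2, y.1 - y.2⟩ : Σ _ : ℕ, ℕ)) ?_ ?_ ?_ ?_ ?_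
  · rintro ⟨k, r⟩ hx
    simp only [Finset.mem_sigma, Finset.mem_range] at hx ⊢
    omega
  · rintro ⟨j, m⟩ hy
    simp only [Finset.mem_sigma, Finset.mem_range] at hy ⊢
    omega
  · rintro ⟨k, r⟩ hx
    simp only [Finset.mem_sigma, Finset.mem_range] at hx
    have h2 : k + r - k = r := by omega
    simp only [h2]
  · rintro ⟨j, m⟩ hy
    simp only [Finset.mem_sigma, Finset.mem_range] at hy
    have h2 : m + (j - m) = j := by omega
    simp only [h2]
  · rintro ⟨k, r⟩ hx
    rfl

lemma subst_cauchy_aux (n : ℕ) : ∀ (p q g : Word → A) (w : Word), w.length ≤ n →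
    subst (cauchy p q) g w = cauchy (subst p g) (subst q g) w := by
  induction n with
  | zero =>
    intro p q g w hw
    have hwnil : w = [] := by
      cases w with
      | nil => rfl
      | cons b u => simp at hw
    subst hwnil
    rw [subst_nil, cauchy, cauchy]
    simp [subst_nil]
  | succ n ih =>
    intro p q g w hw
    cases w with
    | nil =>
      rw [subst_nil, cauchy, cauchy]
      simp [subst_nil]
    | cons b u =>
      have hu : u.length ≤ n := by simpa using hw
      set N := u.length with hN
      rw [subst_cons]
      -- rewrite each summand
      have hstep : ∀ k ∈ Finset.range (N + 1),
          g (u.take k) * subst (fun v => cauchy p q (b :: v)) g (u.drop k)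
          = p [] * (g (u.take k) * subst (fun v => q (b :: v)) g (u.drop k))
            + ∑ r ∈ Finset.range (N - k + 1),
                g (u.take k) * (subst (fun x => p (b :: x)) g ((u.drop k).take (k + r - k))
                  * subst q g (u.drop (k + r))) := by
        intro k hk
        have h1 : subst (fun v => cauchy p q (b :: v)) g (u.drop k)
            = subst (fun v => p [] * q (b :: v) + cauchy (fun x => p (b :: x)) q v) g
                (u.drop k) := by
          apply subst_congr
          intro v
          rw [cauchy_cons]
          rw [add_comm]
          congr 1
        rw [h1, subst_add, subst_const_mul]
        have h2 : subst (cauchy (fun x => p (b :: x)) q) g (u.drop k)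
            = cauchy (subst (fun x => p (b :: x)) g) (subst q g) (u.drop k) := by
          apply ih
          rw [List.length_drop]
          omega
        rw [h2, cauchy, List.length_drop, ← hN, mul_add, Finset.mul_sum]
        have h3 : ∀ r ∈ Finset.range (N - k + 1),
            g (u.take k) * (subst (fun x => p (b :: x)) g ((u.drop k).take r)
              * subst q g ((u.drop k).drop r))
            = g (u.take k) * (subst (fun x => p (b :: x)) g ((u.drop k).take (k + r - k))
              * subst q g (u.drop (k + r))) := by
          intro r hr
          have hr2 : k + r - k = r := by omega
          rw [hr2, List.drop_drop]
        rw [Finset.sum_congr rfl h3]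
        ring
      rw [Finset.sum_congr rfl hstep, Finset.sum_add_distrib]
      -- first piece sums to p [] * subst q g (b :: u)
      rw [← Finset.mul_sum, ← subst_cons q g b u]
      -- triangle reindex on the second piece
      rw [triangle_reindex N (fun m j => g (u.take m)
        * (subst (fun x => p (b :: x)) g ((u.drop m).take (j - m)) * subst q g (u.drop j)))]
      -- now expand the RHS
      rw [cauchy_cons, subst_nil]
      rw [add_comm (p [] * subst q g (b :: u))]
      congr 1
      apply Finset.sum_congr rfl
      intro j hj
      have hjN : j ≤ N := by have := Finset.mem_range.mp hj; omega
      rw [subst_cons p g b (u.take j), List.length_take, Nat.min_eq_left hjN]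
      rw [Finset.sum_mul]
      apply Finset.sum_congr rfl
      intro m hm
      have hmj : m ≤ j := by have := Finset.mem_range.mp hm; omega
      rw [List.take_take, Nat.min_eq_left hmj, List.drop_take]
      ring

lemma subst_cauchy (p q g : Word → A) (w : Word) :
    subst (cauchy p q) g w = cauchy (subst p g) (subst q g) w :=
  subst_cauchy_aux w.length p q g w le_rfl


open Finset List Polynomial

variable {A : Type*} [CommRing A]

/-- `TRI F H` is the part of the insertion product `tri` where the inserted factor
avoids the head letter. -/
def TRI (F H : Word → A) : Word → A
  | [] => 0
  | c :: v => ∑ i ∈ Finset.range (v.length + 1), ∑ j ∈ Finset.Icc i v.length,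
      F (c :: (v.take i ++ v.drop j)) * H ((v.drop i).take (j - i))

lemma TRI_nil (F H : Word → A) : TRI F H [] = 0 := rfl

lemma tri_nil (f h : Word → A) : tri f h [] = f [] * h [] := by
  rw [tri]
  simp

lemma Icc_zero_range (m : ℕ) : Finset.Icc 0 m = Finset.range (m + 1) := by
  ext x
  simp only [Finset.mem_Icc, Finset.mem_range]
  omega

lemma Icc_succ_map (a b : ℕ) :
    Finset.Icc (a + 1) (b + 1) = (Finset.Icc a b).image (· + 1) := by
  ext x
  simp only [Finset.mem_Icc, Finset.mem_image]
  constructor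
  · intro hx; exact ⟨x - 1, by omega, by omega⟩
  · rintro ⟨y, hy, rfl⟩; omega

/-- Scalar decomposition: `tri f h = cauchy h f + TRI f h` pointwise. -/
lemma tri_decomp (f h : Word → A) (x : Word) :
    tri f h x = cauchy h f x + TRI f h x := by
  cases x with
  | nil =>
    rw [tri_nil, TRI_nil, add_zero, cauchy]
    simp [mul_comm]
  | cons c v =>
    rw [tri]
    show ∑ i ∈ Finset.range (v.length + 1 + 1), ∑ j ∈ Finset.Icc i (v.length + 1),
        f ((c :: v).take i ++ (c :: v).drop j) * h (((c :: v).drop i).take (j - i)) = _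
    rw [Finset.sum_range_succ']
    have hzero : ∑ j ∈ Finset.Icc 0 (v.length + 1),
        f ((c :: v).take 0 ++ (c :: v).drop j) * h (((c :: v).drop 0).take (j - 0))
        = cauchy h f (c :: v) := by
      rw [Icc_zero_range, cauchy]
      show _ = ∑ k ∈ Finset.range (v.length + 1 + 1), h ((c :: v).take k) * f ((c :: v).drop k)
      apply Finset.sum_congr rfl
      intro j _
      simp only [List.take_zero, List.nil_append, List.drop_zero, Nat.sub_zero]
      ring
    rw [hzero, add_comm]
    congr 1
    cases v with
    | nil => simp [TRI]
    | cons d v' =>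
      rw [TRI]
      apply Finset.sum_congr rfl
      intro i hi
      rw [Icc_succ_map, Finset.sum_image (by intro x _ y _ hxy; simp only at hxy; omega)]
      apply Finset.sum_congr rfl
      intro j hj
      have h1 : (c :: d :: v').take (i + 1) = c :: (d :: v').take i := rfl
      have h2 : (c :: d :: v').drop (j + 1) = (d :: v').drop j := rfl
      have h3 : (c :: d :: v').drop (i + 1) = (d :: v').drop i := rfl
      have h4 : j + 1 - (i + 1) = j - i := by omega
      rw [h1, h2, h3, h4, List.cons_append]

/-- Head-shift decomposition of `TRI`. -/
lemma TRI_cons (F H : Word → A) (b : ℕ+) (v : Word) :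
    TRI F H (b :: v)
      = cauchy H (fun x => F (b :: x)) v + TRI (fun x => F (b :: x)) H v := by
  rw [TRI]
  show ∑ i ∈ Finset.range (v.length + 1), ∑ j ∈ Finset.Icc i v.length,
      F (b :: (v.take i ++ v.drop j)) * H ((v.drop i).take (j - i)) = _
  cases v with
  | nil =>
    simp [TRI, cauchy, mul_comm]
  | cons d v' =>
    rw [show (d :: v').length + 1 = v'.length + 1 + 1 from rfl, Finset.sum_range_succ']
    have hzero : ∑ j ∈ Finset.Icc 0 (d :: v').length,
        F (b :: ((d :: v').take 0 ++ (d :: v').drop j)) * H (((d :: v').drop 0).take (j - 0))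
        = cauchy H (fun x => F (b :: x)) (d :: v') := by
      rw [Icc_zero_range, cauchy]
      show _ = ∑ k ∈ Finset.range (v'.length + 1 + 1),
        H ((d :: v').take k) * F (b :: (d :: v').drop k)
      apply Finset.sum_congr rfl
      intro j _
      simp only [List.take_zero, List.nil_append, List.drop_zero, Nat.sub_zero]
      ring
    rw [hzero, add_comm]
    congr 1
    rw [TRI]
    apply Finset.sum_congr rfl
    intro i hi
    show ∑ j ∈ Finset.Icc (i + 1) (v'.length + 1), _ = _
    rw [Icc_succ_map, Finset.sum_image (by intro x _ y _ hxy; simp only at hxy; omega)]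
    apply Finset.sum_congr rfl
    intro j hj
    have h1 : (d :: v').take (i + 1) = d :: v'.take i := rfl
    have h2 : (d :: v').drop (j + 1) = v'.drop j := rfl
    have h3 : (d :: v').drop (i + 1) = v'.drop i := rfl
    have h4 : j + 1 - (i + 1) = j - i := by omega
    rw [h1, h2, h3, h4, List.cons_append]

/-- KEY derivative lemma for `subst`. -/
lemma key (n : ℕ) : ∀ (F H g : Word → Polynomial A),
    (∀ x, Polynomial.derivative (F x) = 0) →
    ∀ w : Word, w.length ≤ n →
    (∀ I : Word, I.length < w.length →
      Polynomial.derivative (g I) = cauchy g (subst H g) I) →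
    Polynomial.derivative (subst F g w) = subst (TRI F H) g w := by
  induction n with
  | zero =>
    intro F H g hF w hw hg
    have hwnil : w = [] := by
      cases w with
      | nil => rfl
      | cons b u => simp at hw
    subst hwnil
    rw [subst_nil, subst_nil, hF, TRI_nil]
  | succ n ih =>
    intro F H g hF w hw hg
    cases w with
    | nil => rw [subst_nil, subst_nil, hF, TRI_nil]
    | cons b u =>
      have hu : u.length ≤ n := by simpa using hw
      set N := u.length with hN
      rw [subst_cons F g b u, map_sum]
      have hstep : ∀ k ∈ Finset.range (N + 1),
          Polynomial.derivative (g (u.take k) * subst (fun v => F (b :: v)) g (u.drop k))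
          = (∑ m ∈ Finset.range (k + 1), g (u.take m)
                * (subst H g ((u.drop m).take (k - m))
                  * subst (fun v => F (b :: v)) g (u.drop k)))
            + g (u.take k) * subst (TRI (fun v => F (b :: v)) H) g (u.drop k) := by
        intro k hk
        have hkN : k ≤ N := by have := Finset.mem_range.mp hk; omega
        rw [Polynomial.derivative_mul]
        have h1 : Polynomial.derivative (g (u.take k)) = cauchy g (subst H g) (u.take k) := by
          apply hg
          rw [List.length_take]
          simp only [List.length_cons]
          omega
        have h2 : Polynomial.derivative (subst (fun v => F (b :: v)) g (u.drop k))
            = subst (TRI (fun v => F (b :: v)) H) g (u.drop k) := by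
          apply ih (fun v => F (b :: v)) H g (fun x => hF (b :: x))
          · rw [List.length_drop]; omega
          · intro I hI
            apply hg
            rw [List.length_drop] at hI
            simp only [List.length_cons]
            omega
        rw [h1, h2]
        congr 1
        rw [cauchy, List.length_take, Nat.min_eq_left hkN, Finset.sum_mul]
        apply Finset.sum_congr rfl
        intro m hm
        have hmk : m ≤ k := by have := Finset.mem_range.mp hm; omega
        rw [List.take_take, Nat.min_eq_left hmk, List.drop_take]
        ring
      rw [Finset.sum_congr rfl hstep, Finset.sum_add_distrib]
      -- RHS
      rw [subst_cons (TRI F H) g b u]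
      have hstep2 : ∀ k ∈ Finset.range (N + 1),
          g (u.take k) * subst (fun v => TRI F H (b :: v)) g (u.drop k)
          = (∑ r ∈ Finset.range (N - k + 1), g (u.take k)
              * (subst H g ((u.drop k).take (k + r - k))
                * subst (fun v => F (b :: v)) g (u.drop (k + r))))
            + g (u.take k) * subst (TRI (fun v => F (b :: v)) H) g (u.drop k) := by
        intro k hk
        have h3 : subst (fun v => TRI F H (b :: v)) g (u.drop k)
            = subst (fun v => cauchy H (fun x => F (b :: x)) v
                + TRI (fun x => F (b :: x)) H v) g (u.drop k) :=
          subst_congr g (fun v => TRI_cons F H b v) (u.drop k)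
        rw [h3, subst_add, subst_cauchy, mul_add]
        congr 1
        rw [cauchy, List.length_drop, ← hN, Finset.mul_sum]
        apply Finset.sum_congr rfl
        intro r hr
        have hr2 : k + r - k = r := by omega
        rw [hr2, List.drop_drop]
      rw [Finset.sum_congr rfl hstep2, Finset.sum_add_distrib]
      congr 1
      rw [triangle_reindex N (fun m j => g (u.take m)
        * (subst H g ((u.drop m).take (j - m)) * subst (fun v => F (b :: v)) g (u.drop j)))]


open Finset List Polynomial

variable {A : Type*} [CommRing A]

section Hom
variable {B : Type*} [CommRing B] (φ : A →+* B)

lemma hom_cauchy (f g : Word → A) (w : Word) :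
    φ (cauchy f g w) = cauchy (fun u => φ (f u)) (fun u => φ (g u)) w := by
  rw [cauchy, cauchy, map_sum]
  exact Finset.sum_congr rfl (fun k _ => map_mul φ _ _)

lemma hom_subst (f g : Word → A) (w : Word) :
    φ (subst f g w) = subst (fun u => φ (f u)) (fun u => φ (g u)) w := by
  rcases eq_or_ne w [] with rfl | hw
  · rw [subst_nil, subst_nil]
  · rw [subst, subst, if_neg hw, if_neg hw, map_sum]
    refine Finset.sum_congr rfl (fun S _ => ?_)
    rw [map_mul, map_prod]

lemma hom_tri (f g : Word → A) (w : Word) :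
    φ (tri f g w) = tri (fun u => φ (f u)) (fun u => φ (g u)) w := by
  rw [tri, tri, map_sum]
  refine Finset.sum_congr rfl (fun i _ => ?_)
  rw [map_sum]
  exact Finset.sum_congr rfl (fun j _ => map_mul φ _ _)

end Hom

lemma Rzero (h : Word → A) (hh : h [] = 0) :
    ∀ n (w : Word), w.length ≤ n → R h n w = 0 := by
  intro n
  induction n with
  | zero =>
    intro w hw
    have : w = [] := by cases w with
      | nil => rfl
      | cons b u => simp at hw
    subst this
    exact hh
  | succ n ih =>
    intro w hw
    show tri (R h n) h w = 0
    rw [tri]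
    apply Finset.sum_eq_zero
    intro i hi
    apply Finset.sum_eq_zero
    intro j hj
    have hi' : i < w.length + 1 := Finset.mem_range.mp hi
    have hj' : i ≤ j ∧ j ≤ w.length := Finset.mem_Icc.mp hj
    rcases eq_or_lt_of_le hj'.1 with heq | hij
    · rw [← heq]
      have h0 : i - i = 0 := by omega
      rw [h0, List.take_zero, hh, mul_zero]
    · have hlen : (w.take i ++ w.drop j).length ≤ n := by
        rw [List.length_append, List.length_take, List.length_drop]
        omega
      rw [ih _ hlen, zero_mul]

section FieldPart
variable {A : Type*} [Field A] [CharZero A] (h : Word → A)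

lemma Mpoly_nil : Mpoly h [] = Polynomial.C 1 := by
  rw [Mpoly]
  have : (List.nil : Word).length = 0 := rfl
  rw [this]
  have h2 : Finset.Icc 1 0 = (∅ : Finset ℕ) := by
    apply Finset.Icc_eq_empty
    omega
  rw [h2, Finset.sum_empty, add_zero]
  rfl

lemma Mpoly_eval_zero (w : Word) : (Mpoly h w).eval 0 = one w := by
  rw [Mpoly, eval_add, eval_C, eval_finset_sum]
  have : ∀ n ∈ Finset.Icc 1 w.length,
      eval 0 (Polynomial.C (R h (n - 1) w / (n.factorial : A)) * Polynomial.X ^ n) = 0 := by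
    intro n hn
    have hn1 : 1 ≤ n := (Finset.mem_Icc.mp hn).1
    rw [eval_mul, eval_pow, eval_X, eval_C, zero_pow (by omega), mul_zero]
  rw [Finset.sum_congr rfl this, Finset.sum_const_zero, add_zero]

lemma Mpoly_coeff_zero (w : Word) : (Mpoly h w).coeff 0 = one w := by
  rw [Mpoly, Polynomial.coeff_add, Polynomial.coeff_C, if_pos rfl, Polynomial.finset_sum_coeff]
  have : ∀ n ∈ Finset.Icc 1 w.length,
      (Polynomial.C (R h (n - 1) w / (n.factorial : A)) * Polynomial.X ^ n).coeff 0 = 0 := by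
    intro n hn
    have hn1 : 1 ≤ n := (Finset.mem_Icc.mp hn).1
    rw [Polynomial.coeff_C_mul, Polynomial.coeff_X_pow, if_neg (by omega), mul_zero]
  rw [Finset.sum_congr rfl this, Finset.sum_const_zero, add_zero]

lemma Mpoly_coeff_succ (hh : h [] = 0) (w : Word) (j : ℕ) :
    (Mpoly h w).coeff (j + 1) = R h j w / ((j + 1).factorial : A) := by
  rw [Mpoly, Polynomial.coeff_add, Polynomial.coeff_C, if_neg (by omega), zero_add,
    Polynomial.finset_sum_coeff]
  have hterm : ∀ n ∈ Finset.Icc 1 w.length,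
      (Polynomial.C (R h (n - 1) w / (n.factorial : A)) * Polynomial.X ^ n).coeff (j + 1)
      = if n = j + 1 then R h (n - 1) w / (n.factorial : A) else 0 := by
    intro n hn
    rw [Polynomial.coeff_C_mul, Polynomial.coeff_X_pow]
    by_cases hcase : j + 1 = n
    · rw [if_pos hcase, if_pos hcase.symm, mul_one]
    · rw [if_neg hcase, if_neg (fun hc => hcase hc.symm), mul_zero]
  rw [Finset.sum_congr rfl hterm, Finset.sum_ite_eq' (Finset.Icc 1 w.length) (j + 1)
    (fun n => R h (n - 1) w / (n.factorial : A))]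
  by_cases hmem : j + 1 ∈ Finset.Icc 1 w.length
  · rw [if_pos hmem]
    congr 1
  · rw [if_neg hmem]
    simp only [Finset.mem_Icc] at hmem
    have hlen : w.length ≤ j := by omega
    rw [Rzero h hh j w hlen, zero_div]

end FieldPart

/-- Iterated pre-Lie powers with a general seed. -/
def Rgen (h f : Word → A) : ℕ → (Word → A)
  | 0 => f
  | n + 1 => tri (Rgen h f n) h

lemma Rgen_shift (h f : Word → A) (n : ℕ) : Rgen h (tri f h) n = Rgen h f (n + 1) := by
  induction n with
  | zero => rfl
  | succ n ih => show tri (Rgen h (tri f h) n) h = _; rw [ih]; rfl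

lemma Rgen_eq_R (h : Word → A) (n : ℕ) : Rgen h h n = R h n := by
  induction n with
  | zero => rfl
  | succ n ih => show tri (Rgen h h n) h = _; rw [ih]; rfl


open Finset List Polynomial

variable {A : Type*} [Field A] [CharZero A]

lemma C_tri_decomp (h f : Word → A) (x : Word) :
    Polynomial.C (tri f h x)
      = cauchy (fun u => Polynomial.C (h u)) (fun u => Polynomial.C (f u)) x
        + TRI (fun u => Polynomial.C (f u)) (fun u => Polynomial.C (h u)) x := by
  rw [tri_decomp f h x, map_add]
  congr 1
  · exact hom_cauchy Polynomial.C h f x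
  · cases x with
    | nil => rw [TRI_nil, TRI_nil, map_zero]
    | cons c v =>
      rw [TRI, TRI, map_sum]
      refine Finset.sum_congr rfl (fun i _ => ?_)
      rw [map_sum]
      exact Finset.sum_congr rfl (fun j _ => map_mul Polynomial.C _ _)

lemma deriv_bullet (h : Word → A) (hh : h [] = 0) (w : Word)
    (hg : ∀ I : Word, I.length < w.length →
      Polynomial.derivative (Mpoly h I)
        = cauchy (Mpoly h) (subst (fun u => Polynomial.C (h u)) (Mpoly h)) I)
    (f : Word → A) (hf : f [] = 0) :
    Polynomial.derivative (cauchy (Mpoly h)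
        (subst (fun u => Polynomial.C (f u)) (Mpoly h)) w)
      = cauchy (Mpoly h) (subst (fun u => Polynomial.C (tri f h u)) (Mpoly h)) w := by
  set P : Word → Polynomial A := fun u => Mpoly h u with hP
  set Ch : Word → Polynomial A := fun u => Polynomial.C (h u) with hCh
  set Cf : Word → Polynomial A := fun u => Polynomial.C (f u) with hCf
  set N := w.length with hN
  have hCf0 : Cf [] = 0 := by rw [hCf]; simp only [hf, map_zero]
  have hCtri0 : (Polynomial.C (tri f h []) : Polynomial A) = 0 := by
    rw [tri_nil, hf, zero_mul, map_zero]
  rw [cauchy, cauchy, ← hN]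
  rw [Finset.sum_range_succ, Finset.sum_range_succ]
  rw [hN, List.drop_length, ← hN, subst_nil, subst_nil, hCf0, hCtri0, mul_zero,
    add_zero, add_zero]
  rw [derivative_sum]
  have hstep : ∀ k ∈ Finset.range N,
      Polynomial.derivative (P (w.take k) * subst Cf P (w.drop k))
      = (∑ m ∈ Finset.range (k + 1), P (w.take m)
            * (subst Ch P ((w.drop m).take (k - m)) * subst Cf P (w.drop k)))
        + P (w.take k) * subst (TRI Cf Ch) P (w.drop k) := by
    intro k hk
    have hkN : k < N := Finset.mem_range.mp hk
    rw [Polynomial.derivative_mul]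
    have h1 : Polynomial.derivative (P (w.take k)) = cauchy P (subst Ch P) (w.take k) := by
      apply hg
      rw [List.length_take]
      omega
    have h2 : Polynomial.derivative (subst Cf P (w.drop k))
        = subst (TRI Cf Ch) P (w.drop k) := by
      apply key (w.drop k).length Cf Ch P (fun x => by rw [hCf]; exact derivative_C)
        (w.drop k) le_rfl
      intro I hI
      apply hg
      rw [List.length_drop] at hI
      omega
    rw [h1, h2]
    congr 1
    rw [cauchy, List.length_take, ← hN, Nat.min_eq_left (by omega), Finset.sum_mul]
    refine Finset.sum_congr rfl (fun m hm => ?_)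
    have hmk : m ≤ k := by have := Finset.mem_range.mp hm; omega
    rw [List.take_take, Nat.min_eq_left hmk, List.drop_take]
    ring
  have hstep2 : ∀ k ∈ Finset.range N,
      P (w.take k) * subst (fun u => Polynomial.C (tri f h u)) P (w.drop k)
      = (∑ r ∈ Finset.range (N - k + 1), P (w.take k)
            * (subst Ch P ((w.drop k).take (k + r - k)) * subst Cf P (w.drop (k + r))))
        + P (w.take k) * subst (TRI Cf Ch) P (w.drop k) := by
    intro k hk
    have hkN : k < N := Finset.mem_range.mp hk
    have h3 : subst (fun u => Polynomial.C (tri f h u)) P (w.drop k)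
        = subst (fun u => cauchy Ch Cf u + TRI Cf Ch u) P (w.drop k) :=
      subst_congr P (fun u => C_tri_decomp h f u) (w.drop k)
    rw [h3, subst_add, subst_cauchy, mul_add]
    congr 1
    rw [cauchy, List.length_drop, ← hN, Finset.mul_sum]
    have hrange : N - k + 1 = N - k + 1 := rfl
    refine Finset.sum_congr rfl (fun r hr => ?_)
    have hr2 : k + r - k = r := by omega
    rw [hr2, List.drop_drop]
  rw [Finset.sum_congr rfl hstep, Finset.sum_congr rfl hstep2,
    Finset.sum_add_distrib, Finset.sum_add_distrib]
  congr 1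
  -- extend both triangular sums by a vanishing top row and reindex
  set Φ : ℕ → ℕ → Polynomial A := fun m j => P (w.take m)
    * (subst Ch P ((w.drop m).take (j - m)) * subst Cf P (w.drop j)) with hΦ
  have hΦtop : ∀ m, Φ m N = 0 := by
    intro m
    rw [hΦ]
    simp only
    rw [hN, List.drop_length, ← hN, subst_nil, hCf0, mul_zero, mul_zero]
  have hL : ∑ k ∈ Finset.range N, ∑ m ∈ Finset.range (k + 1), Φ m k
      = ∑ k ∈ Finset.range (N + 1), ∑ m ∈ Finset.range (k + 1), Φ m k := by
    rw [Finset.sum_range_succ]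
    have : ∑ m ∈ Finset.range (N + 1), Φ m N = 0 :=
      Finset.sum_eq_zero (fun m _ => hΦtop m)
    rw [this, add_zero]
  have hR : ∑ k ∈ Finset.range N, ∑ r ∈ Finset.range (N - k + 1), Φ k (k + r)
      = ∑ k ∈ Finset.range (N + 1), ∑ r ∈ Finset.range (N - k + 1), Φ k (k + r) := by
    rw [Finset.sum_range_succ]
    have hNN : N - N + 1 = 1 := by omega
    have : ∑ r ∈ Finset.range (N - N + 1), Φ N (N + r) = 0 := by
      rw [hNN, Finset.sum_range_one]
      have : N + 0 = N := by omega
      rw [this, hΦtop]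
    rw [this, add_zero]
  calc ∑ k ∈ Finset.range N, ∑ m ∈ Finset.range (k + 1), Φ m k
      = ∑ k ∈ Finset.range (N + 1), ∑ m ∈ Finset.range (k + 1), Φ m k := hL
    _ = ∑ k ∈ Finset.range (N + 1), ∑ r ∈ Finset.range (N - k + 1), Φ k (k + r) :=
        (triangle_reindex N Φ).symm
    _ = ∑ k ∈ Finset.range N, ∑ r ∈ Finset.range (N - k + 1), Φ k (k + r) := hR.symm


open Finset List Polynomial

variable {A : Type*} [Field A] [CharZero A]

lemma coeff_bullet (h : Word → A) (hh : h [] = 0) (w : Word)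
    (hg : ∀ I : Word, I.length < w.length →
      Polynomial.derivative (Mpoly h I)
        = cauchy (Mpoly h) (subst (fun u => Polynomial.C (h u)) (Mpoly h)) I) :
    ∀ (j : ℕ) (f : Word → A), f [] = 0 →
      (cauchy (Mpoly h) (subst (fun u => Polynomial.C (f u)) (Mpoly h)) w).coeff j
        = Rgen h f j w / (j.factorial : A) := by
  intro j
  induction j with
  | zero =>
    intro f hf
    rw [Polynomial.coeff_zero_eq_eval_zero]
    have h1 := hom_cauchy (Polynomial.evalRingHom 0) (Mpoly h)
      (subst (fun u => Polynomial.C (f u)) (Mpoly h)) w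
    simp only [Polynomial.coe_evalRingHom] at h1
    rw [h1]
    have h2 : (fun u => Polynomial.eval 0 (Mpoly h u)) = (one : Word → A) :=
      funext (fun u => Mpoly_eval_zero h u)
    have h3 : (fun u => Polynomial.eval 0 (subst (fun v => Polynomial.C (f v)) (Mpoly h) u))
        = (f : Word → A) := by
      funext u
      have h4 := hom_subst (Polynomial.evalRingHom 0) (fun v => Polynomial.C (f v)) (Mpoly h) u
      simp only [Polynomial.coe_evalRingHom] at h4
      rw [h4]
      have h5 : subst (fun v => Polynomial.eval 0 (Polynomial.C (f v)))
            (fun v => Polynomial.eval 0 (Mpoly h v)) u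
          = subst f one u := by
        have e1 : (fun v => Polynomial.eval 0 (Polynomial.C (f v))) = f :=
          funext (fun v => Polynomial.eval_C)
        rw [e1, h2]
      rw [h5, subst_one]
    rw [h2, h3, cauchy_one_left]
    show f w = Rgen h f 0 w / ((Nat.factorial 0 : ℕ) : A)
    rw [Nat.factorial_zero, Nat.cast_one, div_one]
    rfl
  | succ j ihj =>
    intro f hf
    have hd : Polynomial.derivative (cauchy (Mpoly h)
        (subst (fun u => Polynomial.C (f u)) (Mpoly h)) w)
        = cauchy (Mpoly h) (subst (fun u => Polynomial.C (tri f h u)) (Mpoly h)) w :=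
      deriv_bullet h hh w hg f hf
    have hc := Polynomial.coeff_derivative (cauchy (Mpoly h)
        (subst (fun u => Polynomial.C (f u)) (Mpoly h)) w) j
    rw [hd] at hc
    have htf0 : tri f h [] = 0 := by rw [tri_nil, hf, zero_mul]
    rw [ihj (tri f h) htf0, Rgen_shift] at hc
    have hj1 : ((j : A) + 1) ≠ 0 := Nat.cast_add_one_ne_zero j
    have hcoeff : (cauchy (Mpoly h) (subst (fun u => Polynomial.C (f u)) (Mpoly h)) w).coeff
        (j + 1) = (Rgen h f (j + 1) w / (j.factorial : A)) / ((j : A) + 1) := by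
      rw [eq_div_iff hj1]
      exact hc.symm
    rw [hcoeff, div_div]
    congr 1
    rw [Nat.factorial_succ]
    push_cast
    ring

lemma Dmain (h : Word → A) (hh : h [] = 0) :
    ∀ (n : ℕ) (w : Word), w.length ≤ n →
      Polynomial.derivative (Mpoly h w)
        = cauchy (Mpoly h) (subst (fun u => Polynomial.C (h u)) (Mpoly h)) w := by
  intro n
  induction n with
  | zero =>
    intro w hw
    have hwnil : w = [] := by
      cases w with
      | nil => rfl
      | cons b u => simp at hw
    subst hwnil
    rw [Mpoly_nil, derivative_C, cauchy]
    show (0 : Polynomial A) = ∑ k ∈ Finset.range 1, _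
    rw [Finset.sum_range_one, List.take_nil, List.drop_nil, subst_nil, Mpoly_nil]
    show (0 : Polynomial A) = Polynomial.C 1 * Polynomial.C (h [])
    rw [hh, map_zero, mul_zero]
  | succ n ih =>
    intro w hw
    have hg : ∀ I : Word, I.length < w.length →
        Polynomial.derivative (Mpoly h I)
          = cauchy (Mpoly h) (subst (fun u => Polynomial.C (h u)) (Mpoly h)) I := by
      intro I hI
      exact ih I (by omega)
    apply Polynomial.ext
    intro j
    rw [Polynomial.coeff_derivative, Mpoly_coeff_succ h hh w j,
      coeff_bullet h hh w hg j h hh, Rgen_eq_R]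
    rw [Nat.factorial_succ]
    have hfj : ((j.factorial : A)) ≠ 0 := by
      exact_mod_cast Nat.factorial_ne_zero j
    have hj1 : ((j : A) + 1) ≠ 0 := Nat.cast_add_one_ne_zero j
    push_cast
    field_simp

lemma Mpoly_deriv_tri (h : Word → A) (hh : h [] = 0) (w : Word) :
    Polynomial.derivative (Mpoly h w)
      = Polynomial.C (h w)
        + tri (fun u => Mpoly h u - Polynomial.C (one u)) (fun u => Polynomial.C (h u)) w := by
  apply Polynomial.ext
  intro j
  rw [Polynomial.coeff_derivative, Polynomial.coeff_add]
  have htri : ∀ i ∈ Finset.range (w.length + 1), ∀ l ∈ Finset.Icc i w.length,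
      ((fun u => Mpoly h u - Polynomial.C (one u)) (w.take i ++ w.drop l)
        * (fun u => Polynomial.C (h u)) ((w.drop i).take (l - i))).coeff j
      = ((Mpoly h (w.take i ++ w.drop l)).coeff j - one (w.take i ++ w.drop l) * if j = 0 then 1 else 0)
          * h ((w.drop i).take (l - i)) := by
    intro i _ l _
    simp only
    rw [Polynomial.coeff_mul_C, Polynomial.coeff_sub, Polynomial.coeff_C]
    by_cases hj : j = 0
    · rw [if_pos hj, if_pos hj, mul_one]
    · rw [if_neg hj, if_neg hj, mul_zero, sub_zero]
  have htricoeff : (tri (fun u => Mpoly h u - Polynomial.C (one u))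
      (fun u => Polynomial.C (h u)) w).coeff j
      = ∑ i ∈ Finset.range (w.length + 1), ∑ l ∈ Finset.Icc i w.length,
        ((Mpoly h (w.take i ++ w.drop l)).coeff j
          - one (w.take i ++ w.drop l) * if j = 0 then 1 else 0)
          * h ((w.drop i).take (l - i)) := by
    rw [tri, Polynomial.finset_sum_coeff]
    refine Finset.sum_congr rfl (fun i hi => ?_)
    rw [Polynomial.finset_sum_coeff]
    exact Finset.sum_congr rfl (fun l hl => htri i hi l hl)
  rw [htricoeff]
  cases j with
  | zero =>
    rw [Polynomial.coeff_C, if_pos rfl]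
    have hz : ∀ i ∈ Finset.range (w.length + 1), ∀ l ∈ Finset.Icc i w.length,
        ((Mpoly h (w.take i ++ w.drop l)).coeff 0
          - one (w.take i ++ w.drop l) * if (0:ℕ) = 0 then (1:A) else 0)
          * h ((w.drop i).take (l - i)) = 0 := by
      intro i _ l _
      rw [if_pos rfl, mul_one, Mpoly_coeff_zero, sub_self, zero_mul]
    have hsum : ∑ i ∈ Finset.range (w.length + 1), ∑ l ∈ Finset.Icc i w.length,
        ((Mpoly h (w.take i ++ w.drop l)).coeff 0
          - one (w.take i ++ w.drop l) * if (0:ℕ) = 0 then (1:A) else 0)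
          * h ((w.drop i).take (l - i)) = 0 :=
      Finset.sum_eq_zero (fun i hi => Finset.sum_eq_zero (fun l hl => hz i hi l hl))
    rw [hsum, add_zero, Mpoly_coeff_succ h hh w 0]
    show R h 0 w / ((Nat.factorial 1 : ℕ) : A) * ((0:ℕ) + 1 : A) = h w
    rw [Nat.factorial_one, Nat.cast_one, div_one]
    push_cast
    rw [zero_add, mul_one]
    rfl
  | succ j =>
    rw [Polynomial.coeff_C, if_neg (by omega), zero_add]
    have hterm : ∀ i ∈ Finset.range (w.length + 1), ∀ l ∈ Finset.Icc i w.length,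
        ((Mpoly h (w.take i ++ w.drop l)).coeff (j + 1)
          - one (w.take i ++ w.drop l) * if (j + 1 : ℕ) = 0 then (1:A) else 0)
          * h ((w.drop i).take (l - i))
        = (R h j (w.take i ++ w.drop l) * h ((w.drop i).take (l - i)))
            / (((j + 1).factorial : ℕ) : A) := by
      intro i _ l _
      rw [if_neg (by omega), mul_zero, sub_zero, Mpoly_coeff_succ h hh _ j]
      rw [div_mul_eq_mul_div]
    rw [Finset.sum_congr rfl (fun i hi => Finset.sum_congr rfl (fun l hl => hterm i hi l hl))]
    have hfold : ∑ i ∈ Finset.range (w.length + 1), ∑ l ∈ Finset.Icc i w.length,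
        (R h j (w.take i ++ w.drop l) * h ((w.drop i).take (l - i)))
          / (((j + 1).factorial : ℕ) : A)
        = (∑ i ∈ Finset.range (w.length + 1), ∑ l ∈ Finset.Icc i w.length,
            R h j (w.take i ++ w.drop l) * h ((w.drop i).take (l - i)))
          / (((j + 1).factorial : ℕ) : A) := by
      rw [Finset.sum_div]
      exact Finset.sum_congr rfl (fun i _ => by rw [Finset.sum_div])
    rw [hfold]
    have htriR : ∑ i ∈ Finset.range (w.length + 1), ∑ l ∈ Finset.Icc i w.length,
        R h j (w.take i ++ w.drop l) * h ((w.drop i).take (l - i)) = R h (j + 1) w := by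
      show _ = tri (R h j) h w
      rw [tri]
    rw [htriR, Mpoly_coeff_succ h hh w (j + 1)]
    have hfj : (((j + 1).factorial : ℕ) : A) ≠ 0 := by
      exact_mod_cast Nat.factorial_ne_zero (j + 1)
    have hj2 : ((j : A) + 1 + 1) ≠ 0 := by
      have h9 := Nat.cast_add_one_ne_zero (R := A) (j + 1)
      push_cast at h9
      exact h9
    rw [Nat.factorial_succ (j + 1)]
    push_cast
    field_simp


end S15

open S15 in
/-- monotone flow equation.  For `h ∈ G^0`, the series
`M_t = 1 + Σ_{n≥1} (t^n/n!)·R^{(n−1)}(h)` (each coefficient a polynomial in `t`, the sum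
on a word `w` being finite because `R^{(n−1)}(h)(w) = 0` once `n > |w|`) satisfies
`M_0 = 1`, `M_t ∈ G^1`, and the coefficient-wise `t`-derivative satisfies
`d/dt M_t = M_t · h(x M_t(x)) = h + (M_t − 1) ◁ h`. -/
theorem stmt15 [Field A] [CharZero A] (h : Word → A) (hh : h [] = 0) :
    (∀ n w, w.length ≤ n → R h n w = 0) ∧
    (∀ w : Word, (Mpoly h w).eval 0 = one w) ∧
    (∀ t : A, (Mpoly h []).eval t = 1) ∧
    (∀ t : A, ∀ w : Word,
      ((Mpoly h w).derivative.eval t =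
          cauchy (fun u => (Mpoly h u).eval t)
            (subst h (fun u => (Mpoly h u).eval t)) w) ∧
      ((Mpoly h w).derivative.eval t =
          h w + tri (fun u => (Mpoly h u).eval t - one u) h w)) := by
  refine ⟨Rzero h hh, Mpoly_eval_zero h, ?_, ?_⟩
  · intro t
    rw [Mpoly_nil h, Polynomial.eval_C]
  · intro t w
    constructor
    · have hD := Dmain h hh w.length w le_rfl
      show Polynomial.eval t (Polynomial.derivative (Mpoly h w)) = _
      rw [hD]
      have h1 := hom_cauchy (Polynomial.evalRingHom t) (Mpoly h)
        (subst (fun u => Polynomial.C (h u)) (Mpoly h)) w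
      simp only [Polynomial.coe_evalRingHom] at h1
      rw [h1]
      congr 1
      funext u
      have h4 := hom_subst (Polynomial.evalRingHom t) (fun v => Polynomial.C (h v)) (Mpoly h) u
      simp only [Polynomial.coe_evalRingHom] at h4
      rw [h4]
      have h5 : (fun v => Polynomial.eval t (Polynomial.C (h v))) = h :=
        funext (fun v => Polynomial.eval_C)
      rw [h5]
    · show Polynomial.eval t (Polynomial.derivative (Mpoly h w)) = _
      rw [Mpoly_deriv_tri h hh w, Polynomial.eval_add, Polynomial.eval_C]
      congr 1
      have h5 := hom_tri (Polynomial.evalRingHom t)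
        (fun u => Mpoly h u - Polynomial.C (one u)) (fun u => Polynomial.C (h u)) w
      simp only [Polynomial.coe_evalRingHom] at h5
      rw [h5]
      congr 1
      · funext u
        rw [Polynomial.eval_sub, Polynomial.eval_C]
      · funext u
        exact Polynomial.eval_C
end
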